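/- arXiv:1705.02280 — 9 statements merged into one kernel-verified Lean document; each statement's English description precedes it below -/
import Mathlib

section
/- Let p ∈ (0,1) and let B be a finite simple graph with maximum degree at most ⌊1/p⌋ and with |B| edges. Then the expected maximum matching size of a p-realization of B is at least (|B| / ⌊1/p⌋) · (1 − 3p)/3; in particular it is at least p·|B|·(1 − 3p)/3. -/
open scoped Classical symmDiff
open Real

noncomputable section

/-- `E` is the edge set of a simple graph: it contains no loops. -/
def EdgeSimple {V : Type*} (E : Finset (Sym2 V)) : Prop :=
  ∀ e ∈ E, ¬ e.IsDiag

/-- `M` is a matching: it has no loops and distinct edges share no vertex. -/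
def IsMatchingSet {V : Type*} (M : Finset (Sym2 V)) : Prop :=
  (∀ e ∈ M, ¬ e.IsDiag) ∧
    ∀ e ∈ M, ∀ f ∈ M, e ≠ f → ∀ v : V, v ∈ e → v ∉ f

/-- The maximum matching size of the graph with edge set `E`. -/
def matchNum {V : Type*} (E : Finset (Sym2 V)) : ℕ :=
  (E.powerset.filter fun M => IsMatchingSet M).sup Finset.card

/-- The degree of the vertex `v` in the edge set `E`. -/
def edeg {V : Type*} (E : Finset (Sym2 V)) (v : V) : ℕ :=
  (E.filter fun e => v ∈ e).card

/-- The expected maximum matching size of a `p`-realization of `E`, where each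
edge of `E` is kept independently with probability `p`. -/
def expMatch {V : Type*} (p : ℝ) (E : Finset (Sym2 V)) : ℝ :=
  ∑ S ∈ E.powerset, p ^ S.card * (1 - p) ^ (E.card - S.card) * (matchNum S : ℝ)

/-- The set of vertices covered by the edge set `M`. -/
def mVerts {V : Type*} [Fintype V] (M : Finset (Sym2 V)) : Finset V :=
  Finset.univ.filter fun v => ∃ e ∈ M, v ∈ e

lemma matchNum_mono {V : Type*} {S T : Finset (Sym2 V)} (h : S ⊆ T) :
    matchNum S ≤ matchNum T := by
  apply Finset.sup_le
  intro M hM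
  simp only [Finset.mem_filter, Finset.mem_powerset] at hM
  exact Finset.le_sup (f := Finset.card)
    (by simp only [Finset.mem_filter, Finset.mem_powerset]; exact ⟨hM.1.trans h, hM.2⟩)

lemma exists_matchNum {V : Type*} (S : Finset (Sym2 V)) :
    ∃ M ⊆ S, IsMatchingSet M ∧ M.card = matchNum S := by
  have hne : (S.powerset.filter fun M => IsMatchingSet M).Nonempty := by
    refine ⟨∅, ?_⟩
    simp only [Finset.mem_filter, Finset.mem_powerset]
    exact ⟨Finset.empty_subset _, by simp [IsMatchingSet]⟩
  obtain ⟨M, hM, hcard⟩ := Finset.exists_mem_eq_sup _ hne Finset.card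
  simp only [Finset.mem_filter, Finset.mem_powerset] at hM
  exact ⟨M, hM.1, hM.2, hcard.symm⟩

lemma matchNum_insert {V : Type*} (S : Finset (Sym2 V)) (e : Sym2 V)
    (he : ¬ e.IsDiag) (hnot : e ∉ S) (hdisj : ∀ f ∈ S, ∀ v ∈ e, v ∉ f) :
    matchNum S + 1 ≤ matchNum (insert e S) := by
  obtain ⟨M, hMS, hMm, hMc⟩ := exists_matchNum S
  have heM : e ∉ M := fun h => hnot (hMS h)
  have hmem : insert e M ∈ (insert e S).powerset.filter fun M => IsMatchingSet M := by
    simp only [Finset.mem_filter, Finset.mem_powerset]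
    constructor
    · exact Finset.insert_subset_insert _ hMS
    constructor
    · intro f hf
      rcases Finset.mem_insert.mp hf with rfl | hf
      · exact he
      · exact hMm.1 f hf
    · intro f hf g hg hfg v hvf
      rcases Finset.mem_insert.mp hf with rfl | hf2
      · rcases Finset.mem_insert.mp hg with rfl | hg2
        · exact absurd rfl hfg
        · exact hdisj g (hMS hg2) v hvf
      · rcases Finset.mem_insert.mp hg with rfl | hg2
        · intro hvg; exact hdisj f (hMS hf2) v hvg hvf
        · exact hMm.2 f hf2 g hg2 hfg v hvf
  have := Finset.le_sup (f := Finset.card) hmem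
  rwa [Finset.card_insert_of_notMem heM, hMc] at this

lemma marg {V : Type*} (p : ℝ) (f : Finset (Sym2 V) → ℝ) (B' : Finset (Sym2 V)) :
    ∀ C : Finset (Sym2 V), Disjoint B' C →
      ∑ S ∈ (B' ∪ C).powerset,
          p ^ S.card * (1 - p) ^ ((B' ∪ C).card - S.card) * f (S ∩ B')
        = ∑ T ∈ B'.powerset, p ^ T.card * (1 - p) ^ (B'.card - T.card) * f T := by
  intro C
  induction C using Finset.induction_on with
  | empty =>
    intro _
    rw [Finset.union_empty]
    apply Finset.sum_congr rfl
    intro S hS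
    rw [Finset.inter_eq_left.mpr (Finset.mem_powerset.mp hS)]
  | @insert c C₀ hc ih =>
    intro hdisj
    have hcB : c ∉ B' := fun h => (Finset.disjoint_left.mp hdisj h (Finset.mem_insert_self _ _))
    have hdisj0 : Disjoint B' C₀ :=
      hdisj.mono_right (Finset.subset_insert _ _)
    have hcD : c ∉ B' ∪ C₀ := by
      simp only [Finset.mem_union]; rintro (h | h)
      · exact hcB h
      · exact hc h
    have hU : B' ∪ insert c C₀ = insert c (B' ∪ C₀) := Finset.union_insert _ _ _
    rw [hU, Finset.sum_powerset_insert hcD]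
    have hcard : (insert c (B' ∪ C₀)).card = (B' ∪ C₀).card + 1 :=
      Finset.card_insert_of_notMem hcD
    have e1 : ∑ S ∈ (B' ∪ C₀).powerset,
        p ^ S.card * (1 - p) ^ ((insert c (B' ∪ C₀)).card - S.card) * f (S ∩ B')
        = (1 - p) * ∑ S ∈ (B' ∪ C₀).powerset,
            p ^ S.card * (1 - p) ^ ((B' ∪ C₀).card - S.card) * f (S ∩ B') := by
      rw [Finset.mul_sum]
      apply Finset.sum_congr rfl
      intro S hS
      have hle : S.card ≤ (B' ∪ C₀).card :=
        Finset.card_le_card (Finset.mem_powerset.mp hS)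
      rw [hcard, Nat.succ_sub hle, pow_succ]
      ring
    have e2 : ∑ S ∈ (B' ∪ C₀).powerset,
        p ^ (insert c S).card * (1 - p) ^ ((insert c (B' ∪ C₀)).card - (insert c S).card)
          * f ((insert c S) ∩ B')
        = p * ∑ S ∈ (B' ∪ C₀).powerset,
            p ^ S.card * (1 - p) ^ ((B' ∪ C₀).card - S.card) * f (S ∩ B') := by
      rw [Finset.mul_sum]
      apply Finset.sum_congr rfl
      intro S hS
      have hcS : c ∉ S := fun h => hcD (Finset.mem_powerset.mp hS h)
      have hle : S.card ≤ (B' ∪ C₀).card :=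
        Finset.card_le_card (Finset.mem_powerset.mp hS)
      rw [Finset.card_insert_of_notMem hcS, hcard,
        Finset.insert_inter_of_notMem hcB, Nat.succ_sub_succ, pow_succ]
      ring
    rw [e1, e2, ih hdisj0]
    ring

lemma expMatch_nonneg {V : Type*} (p : ℝ) (hp : 0 ≤ p) (hp1 : p ≤ 1)
    (E : Finset (Sym2 V)) : 0 ≤ expMatch p E := by
  apply Finset.sum_nonneg
  intro S _
  have h1 : (0:ℝ) ≤ p ^ S.card := pow_nonneg hp _
  have h2 : (0:ℝ) ≤ (1 - p) ^ (E.card - S.card) := pow_nonneg (by linarith) _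
  positivity

lemma key {V : Type*} (p : ℝ) (q : ℕ) (hp : 0 < p) (hp1 : p < 1)
    (hq1 : 1 ≤ (q : ℝ)) (hpq : p * q ≤ 1) (hpq2 : 1 - p ≤ p * q) :
    ∀ B : Finset (Sym2 V), EdgeSimple B → (∀ v, edeg B v ≤ q) →
      (B.card : ℝ) / q * ((1 - 3 * p) / 3) ≤ expMatch p B := by
  intro B
  induction B using Finset.strongInductionOn with
  | _ B IH =>
  intro hB hdeg
  have hQ0 : (0 : ℝ) < q := lt_of_lt_of_le one_pos hq1
  by_cases hp3 : 1 - 3 * p < 0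
  · have h1 : (B.card : ℝ) / q * ((1 - 3 * p) / 3) ≤ 0 :=
      mul_nonpos_of_nonneg_of_nonpos (by positivity) (by linarith)
    exact h1.trans (expMatch_nonneg p hp.le hp1.le B)
  push_neg at hp3
  rcases B.eq_empty_or_nonempty with rfl | ⟨e, he⟩
  · have h0 : (0:ℝ) ≤ expMatch p (∅ : Finset (Sym2 V)) :=
      expMatch_nonneg p hp.le hp1.le _
    simpa using h0
  obtain ⟨u, v, rfl⟩ : ∃ u v, e = s(u, v) := Sym2.exists.mp ⟨e, rfl⟩
  set A := B.erase s(u, v) with hAdef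
  have heA : s(u, v) ∉ A := Finset.notMem_erase _ _
  have hins : insert s(u, v) A = B := Finset.insert_erase he
  set B' := A.filter (fun f => ∀ w ∈ s(u, v), w ∉ f) with hB'def
  have hsubB' : B' ⊆ A := Finset.filter_subset _ _
  have hssA : A ⊂ B := Finset.erase_ssubset he
  have hssB' : B' ⊂ B := Finset.ssubset_of_subset_of_ssubset hsubB' hssA
  have hcardA : A.card + 1 = B.card := by
    rw [← hins, Finset.card_insert_of_notMem heA]
  -- decomposition
  have hcard : (insert s(u,v) A).card = A.card + 1 := Finset.card_insert_of_notMem heA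
  have hdec : expMatch p B = (1 - p) * expMatch p A
      + p * ∑ S ∈ A.powerset,
          p ^ S.card * (1 - p) ^ (A.card - S.card) * (matchNum (insert s(u,v) S) : ℝ) := by
    unfold expMatch
    conv_lhs => rw [← hins]
    rw [Finset.sum_powerset_insert heA, Finset.mul_sum, Finset.mul_sum]
    congr 1
    · apply Finset.sum_congr rfl
      intro S hS
      have hle : S.card ≤ A.card := Finset.card_le_card (Finset.mem_powerset.mp hS)
      rw [hcard, Nat.succ_sub hle, pow_succ]
      ring
    · apply Finset.sum_congr rfl
      intro S hS
      have hSe : s(u,v) ∉ S := fun h => heA (Finset.mem_powerset.mp hS h)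
      rw [hcard, Finset.card_insert_of_notMem hSe, Nat.succ_sub_succ, pow_succ]
      ring
  have hw1 : ∑ S ∈ A.powerset, p ^ S.card * (1 - p) ^ (A.card - S.card) = 1 := by
    have h := marg p (fun _ => (1:ℝ)) ∅ A (Finset.disjoint_left.mpr (by simp))
    simpa using h
  have hmarg : ∑ S ∈ A.powerset,
      p ^ S.card * (1 - p) ^ (A.card - S.card) * (matchNum (S ∩ B') : ℝ)
      = expMatch p B' := by
    have h := marg p (fun T => (matchNum T : ℝ)) B' (A \ B') Finset.disjoint_sdiff
    rw [Finset.union_sdiff_of_subset hsubB'] at h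
    exact h
  have hpoint : ∀ S ∈ A.powerset,
      (1 : ℝ) + (matchNum (S ∩ B') : ℝ) ≤ (matchNum (insert s(u,v) S) : ℝ) := by
    intro S hS
    have hSA : S ⊆ A := Finset.mem_powerset.mp hS
    have hnot : s(u,v) ∉ S ∩ B' := fun h => heA (hSA (Finset.mem_inter.mp h).1)
    have hd : ∀ f ∈ S ∩ B', ∀ w ∈ s(u,v), w ∉ f := by
      intro f hf
      exact (Finset.mem_filter.mp (Finset.mem_inter.mp hf).2).2
    have h1 := matchNum_insert (S ∩ B') s(u,v) (hB _ he) hnot hd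
    have h2 : matchNum (insert s(u,v) (S ∩ B')) ≤ matchNum (insert s(u,v) S) :=
      matchNum_mono (Finset.insert_subset_insert _ Finset.inter_subset_left)
    have h3 := h1.trans h2
    have h4 : ((matchNum (S ∩ B') + 1 : ℕ) : ℝ) ≤ ((matchNum (insert s(u,v) S) : ℕ) : ℝ) := by
      exact_mod_cast h3
    push_cast at h4
    linarith
  have h_exp : (1 - p) * expMatch p A + p * (1 + expMatch p B') ≤ expMatch p B := by
    rw [hdec]
    have hsum : (1 : ℝ) + expMatch p B' ≤ ∑ S ∈ A.powerset,
        p ^ S.card * (1 - p) ^ (A.card - S.card) * (matchNum (insert s(u,v) S) : ℝ) := by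
      have e3 : ∑ S ∈ A.powerset,
          p ^ S.card * (1 - p) ^ (A.card - S.card) * (1 + (matchNum (S ∩ B') : ℝ))
          = (1 : ℝ) + expMatch p B' := by
        calc ∑ S ∈ A.powerset,
            p ^ S.card * (1 - p) ^ (A.card - S.card) * (1 + (matchNum (S ∩ B') : ℝ))
            = ∑ S ∈ A.powerset, (p ^ S.card * (1 - p) ^ (A.card - S.card)
              + p ^ S.card * (1 - p) ^ (A.card - S.card) * (matchNum (S ∩ B') : ℝ)) := by
              apply Finset.sum_congr rfl; intro S _; ring
          _ = (∑ S ∈ A.powerset, p ^ S.card * (1 - p) ^ (A.card - S.card))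
              + ∑ S ∈ A.powerset,
                p ^ S.card * (1 - p) ^ (A.card - S.card) * (matchNum (S ∩ B') : ℝ) :=
              Finset.sum_add_distrib
          _ = (1 : ℝ) + expMatch p B' := by rw [hw1, hmarg]
      rw [← e3]
      apply Finset.sum_le_sum
      intro S hS
      have hw : (0:ℝ) ≤ p ^ S.card * (1 - p) ^ (A.card - S.card) :=
        mul_nonneg (pow_nonneg hp.le _) (pow_nonneg (by linarith) _)
      exact mul_le_mul_of_nonneg_left (hpoint S hS) hw
    have := mul_le_mul_of_nonneg_left hsum hp.le
    linarith
  -- cardinality bound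
  have hcount : B.card + 2 ≤ B'.card + 2 * q + 1 := by
    have hcover : A ⊆ B' ∪ A.filter (fun f => u ∈ f ∨ v ∈ f) := by
      intro f hf
      by_cases h : ∀ w ∈ s(u,v), w ∉ f
      · exact Finset.mem_union_left _ (Finset.mem_filter.mpr ⟨hf, h⟩)
      · push_neg at h
        obtain ⟨w, hw, hwf⟩ := h
        rcases Sym2.mem_iff.mp hw with rfl | rfl
        · exact Finset.mem_union_right _ (Finset.mem_filter.mpr ⟨hf, Or.inl hwf⟩)
        · exact Finset.mem_union_right _ (Finset.mem_filter.mpr ⟨hf, Or.inr hwf⟩)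
    have h1 : A.card ≤ B'.card + (A.filter (fun f => u ∈ f ∨ v ∈ f)).card :=
      le_trans (Finset.card_le_card hcover) (Finset.card_union_le _ _)
    have hsplit : A.filter (fun f => u ∈ f ∨ v ∈ f) ⊆
        A.filter (fun f => u ∈ f) ∪ A.filter (fun f => v ∈ f) := by
      intro f hf
      obtain ⟨hfA, h⟩ := Finset.mem_filter.mp hf
      rcases h with h | h
      · exact Finset.mem_union_left _ (Finset.mem_filter.mpr ⟨hfA, h⟩)
      · exact Finset.mem_union_right _ (Finset.mem_filter.mpr ⟨hfA, h⟩)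
    have h2 : (A.filter (fun f => u ∈ f ∨ v ∈ f)).card ≤
        (A.filter (fun f => u ∈ f)).card + (A.filter (fun f => v ∈ f)).card :=
      le_trans (Finset.card_le_card hsplit) (Finset.card_union_le _ _)
    have hu1 : A.filter (fun f => u ∈ f) ⊆ (B.filter (fun f => u ∈ f)).erase s(u,v) := by
      intro f hf
      obtain ⟨hfA, hmem⟩ := Finset.mem_filter.mp hf
      exact Finset.mem_erase.mpr ⟨Finset.ne_of_mem_erase hfA,
        Finset.mem_filter.mpr ⟨Finset.mem_of_mem_erase hfA, hmem⟩⟩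
    have hv1 : A.filter (fun f => v ∈ f) ⊆ (B.filter (fun f => v ∈ f)).erase s(u,v) := by
      intro f hf
      obtain ⟨hfA, hmem⟩ := Finset.mem_filter.mp hf
      exact Finset.mem_erase.mpr ⟨Finset.ne_of_mem_erase hfA,
        Finset.mem_filter.mpr ⟨Finset.mem_of_mem_erase hfA, hmem⟩⟩
    have hue : s(u,v) ∈ B.filter (fun f => u ∈ f) :=
      Finset.mem_filter.mpr ⟨he, Sym2.mem_mk_left u v⟩
    have hve : s(u,v) ∈ B.filter (fun f => v ∈ f) :=
      Finset.mem_filter.mpr ⟨he, Sym2.mem_mk_right u v⟩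
    have hu2 : (A.filter (fun f => u ∈ f)).card + 1 ≤ edeg B u := by
      have := Finset.card_le_card hu1
      rw [Finset.card_erase_of_mem hue] at this
      have hpos : 1 ≤ (B.filter (fun f => u ∈ f)).card := Finset.card_pos.mpr ⟨_, hue⟩
      unfold edeg
      omega
    have hv2 : (A.filter (fun f => v ∈ f)).card + 1 ≤ edeg B v := by
      have := Finset.card_le_card hv1
      rw [Finset.card_erase_of_mem hve] at this
      have hpos : 1 ≤ (B.filter (fun f => v ∈ f)).card := Finset.card_pos.mpr ⟨_, hve⟩
      unfold edeg
      omega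
    have hdu := hdeg u
    have hdv := hdeg v
    omega
  -- apply IH
  have hBpos : 1 ≤ B.card := Finset.card_pos.mpr ⟨_, he⟩
  have hIH_A : ((B.card : ℝ) - 1) / q * ((1 - 3 * p) / 3) ≤ expMatch p A := by
    have h := IH A hssA (fun f hf => hB f (Finset.mem_of_mem_erase hf))
      (fun w => le_trans (Finset.card_le_card
        (Finset.filter_subset_filter _ (Finset.erase_subset _ _))) (hdeg w))
    have hc : (A.card : ℝ) = (B.card : ℝ) - 1 := by
      have : (A.card : ℝ) + 1 = (B.card : ℝ) := by exact_mod_cast hcardA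
      linarith
    rwa [hc] at h
  have hIH_B' : ((B'.card : ℝ)) / q * ((1 - 3 * p) / 3) ≤ expMatch p B' := by
    exact IH B' hssB' (fun f hf => hB f (Finset.mem_of_mem_erase (hsubB' hf)))
      (fun w => le_trans (Finset.card_le_card
        (Finset.filter_subset_filter _ (fun f hf => Finset.mem_of_mem_erase (hsubB' hf)))) (hdeg w))
  -- final numeric step
  have hmb : (B.card : ℝ) ≤ (B'.card : ℝ) + 2 * q - 1 := by
    have : (B.card : ℝ) + 2 ≤ (B'.card : ℝ) + 2 * q + 1 := by exact_mod_cast hcount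
    linarith
  rw [div_mul_eq_mul_div, div_le_iff₀ hQ0]
  rw [div_mul_eq_mul_div, div_le_iff₀ hQ0] at hIH_A hIH_B'
  have t1 : (1 - p) * (((B.card : ℝ) - 1) * ((1 - 3 * p) / 3)) ≤ (1 - p) * (expMatch p A * q) :=
    mul_le_mul_of_nonneg_left hIH_A (by linarith)
  have t2 : p * ((B'.card : ℝ) * ((1 - 3 * p) / 3)) ≤ p * (expMatch p B' * q) :=
    mul_le_mul_of_nonneg_left hIH_B' hp.le
  have t3 : ((1 - p) * expMatch p A + p * (1 + expMatch p B')) * q ≤ expMatch p B * q :=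
    mul_le_mul_of_nonneg_right h_exp hQ0.le
  have hm'0 : (0:ℝ) ≤ (B'.card : ℝ) := Nat.cast_nonneg _
  nlinarith [mul_nonneg (mul_nonneg hp.le hp3) (by linarith : (0:ℝ) ≤ (B'.card:ℝ) - (B.card:ℝ) + 2 * q - 1),
    mul_nonneg hp3 (by linarith : (0:ℝ) ≤ 2 + 2 * p - 2 * (p * q)),
    t1, t2, t3]

theorem b_matching_realization {V : Type*} [Fintype V] [DecidableEq V]
    (p : ℝ) (hp : 0 < p) (hp1 : p < 1)
    (B : Finset (Sym2 V)) (hB : EdgeSimple B)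
    (hdeg : ∀ v : V, edeg B v ≤ ⌊1 / p⌋₊) :
    (B.card : ℝ) / (⌊1 / p⌋₊ : ℝ) * ((1 - 3 * p) / 3) ≤ expMatch p B ∧
    p * (B.card : ℝ) * ((1 - 3 * p) / 3) ≤ expMatch p B := by
  set q : ℕ := ⌊1 / p⌋₊ with hq
  have hq1 : 1 ≤ (q : ℝ) := by
    have h1 : (1 : ℝ) ≤ 1 / p := one_le_one_div hp hp1.le
    have : 1 ≤ q := Nat.le_floor (by exact_mod_cast h1)
    exact_mod_cast this
  have hfl : (q : ℝ) ≤ 1 / p := Nat.floor_le (by positivity)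
  have hpq : p * q ≤ 1 := by
    have := mul_le_mul_of_nonneg_left hfl hp.le
    rwa [mul_one_div, div_self hp.ne'] at this
  have hpq2 : 1 - p ≤ p * q := by
    have h2 : 1 / p < q + 1 := Nat.lt_floor_add_one _
    have := mul_lt_mul_of_pos_left h2 hp
    rw [mul_one_div, div_self hp.ne'] at this
    nlinarith
  have h1 := key p q hp hp1 hq1 hpq hpq2 B hB hdeg
  refine ⟨h1, ?_⟩
  by_cases hp3 : 1 - 3 * p < 0
  · have hle : p * (B.card : ℝ) * ((1 - 3 * p) / 3) ≤ 0 :=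
      mul_nonpos_of_nonneg_of_nonpos (by positivity) (by linarith)
    exact hle.trans (expMatch_nonneg p hp.le hp1.le B)
  · push_neg at hp3
    have hQ0 : (0 : ℝ) < q := lt_of_lt_of_le one_pos hq1
    have hmle : p * (B.card : ℝ) ≤ (B.card : ℝ) / q := by
      rw [le_div_iff₀ hQ0]
      have hm0 : (0:ℝ) ≤ (B.card : ℝ) := Nat.cast_nonneg _
      nlinarith
    calc p * (B.card : ℝ) * ((1 - 3 * p) / 3)
        ≤ (B.card : ℝ) / q * ((1 - 3 * p) / 3) :=
          mul_le_mul_of_nonneg_right hmle (by linarith)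
      _ ≤ expMatch p B := h1
end
end

section
/- Let p ∈ (0, 0.43], let M⁺ be a matching in a finite simple graph containing the edge (u,v), and let C be a set of edges, each having exactly one endpoint in V(M⁺) (the set of vertices covered by M⁺), forming a graph of maximum degree at most ⌊1/p⌋. Let d(u) and d(v) denote the number of edges of C incident on u and on v, respectively, and suppose each edge of C is realized independently with probability p. Define f(x) = (1 − e^{−x})/x. Then with probability at least (1 − p)² · f(1/e) · (p/e²) · (1 − e^{−p·d(v)}) · max{d(u) − 1, 0}, there exist distinct vertices a, b ∉ V(M⁺) such that the edges (a,u) and (v,b) are realized, the only realized edges of C incident on a are among {(a,u),(a,v)}, and the only realized edges of C incident on b are among {(b,u),(b,v)}. -/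
open scoped Classical symmDiff
open Real

noncomputable section

/-- The function `f(x) = (1 - e^{-x}) / x`. -/
def f (x : ℝ) : ℝ := (1 - Real.exp (-x)) / x


namespace AugProof

set_option linter.unusedSectionVars false

variable {V : Type*} [DecidableEq V]

def pr (p : ℝ) (E : Finset (Sym2 V)) (Q : Finset (Sym2 V) → Prop) : ℝ :=
  ∑ S ∈ E.powerset.filter Q, p ^ S.card * (1 - p) ^ (E.card - S.card)

lemma pr_true (p : ℝ) (E : Finset (Sym2 V)) : pr p E (fun _ => True) = 1 := by
  have h := Finset.prod_add (fun _ : Sym2 V => p) (fun _ : Sym2 V => 1 - p) E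
  simp only [add_sub_cancel, Finset.prod_const, one_pow] at h
  rw [pr]
  simp only [Finset.filter_true]
  calc ∑ S ∈ E.powerset, p ^ S.card * (1 - p) ^ (E.card - S.card)
      = ∑ S ∈ E.powerset, p ^ S.card * (1 - p) ^ (E \ S).card := by
        apply Finset.sum_congr rfl
        intro t ht
        rw [Finset.card_sdiff_of_subset (Finset.mem_powerset.mp ht)]
    _ = 1 := h.symm

lemma pr_nonneg {p : ℝ} (hp0 : 0 ≤ p) (hp1 : p ≤ 1) (E : Finset (Sym2 V))
    (Q : Finset (Sym2 V) → Prop) : 0 ≤ pr p E Q := by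
  apply Finset.sum_nonneg
  intro S _
  have : (0:ℝ) ≤ 1 - p := by linarith
  positivity

lemma pr_congr {p : ℝ} {E : Finset (Sym2 V)} {Q Q' : Finset (Sym2 V) → Prop}
    (h : ∀ S ∈ E.powerset, (Q S ↔ Q' S)) : pr p E Q = pr p E Q' := by
  unfold pr
  congr 1
  apply Finset.filter_congr
  simpa using h

lemma pr_mono {p : ℝ} (hp0 : 0 ≤ p) (hp1 : p ≤ 1) {E : Finset (Sym2 V)}
    {Q Q' : Finset (Sym2 V) → Prop} (h : ∀ S ∈ E.powerset, Q S → Q' S) :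
    pr p E Q ≤ pr p E Q' := by
  apply Finset.sum_le_sum_of_subset_of_nonneg
  · intro S hS
    simp only [Finset.mem_filter] at hS ⊢
    exact ⟨hS.1, h S hS.1 hS.2⟩
  · intro S _ _
    have : (0:ℝ) ≤ 1 - p := by linarith
    positivity

lemma pr_le_one {p : ℝ} (hp0 : 0 ≤ p) (hp1 : p ≤ 1) (E : Finset (Sym2 V))
    (Q : Finset (Sym2 V) → Prop) : pr p E Q ≤ 1 := by
  rw [← pr_true p E]
  exact pr_mono hp0 hp1 (fun S _ _ => trivial)

lemma pr_add_compl (p : ℝ) (E : Finset (Sym2 V)) (Q R : Finset (Sym2 V) → Prop) :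
    pr p E Q = pr p E (fun S => Q S ∧ R S) + pr p E (fun S => Q S ∧ ¬ R S) := by
  unfold pr
  rw [← Finset.sum_filter_add_sum_filter_not (E.powerset.filter Q) R]
  congr 1 <;>
  · rw [Finset.filter_filter]
    apply Finset.sum_congr _ (fun _ _ => rfl)
    congr 1

lemma pr_split {p : ℝ} {E B : Finset (Sym2 V)} (hB : B ⊆ E)
    (Q₁ Q₂ : Finset (Sym2 V) → Prop) :
    pr p E (fun S => Q₁ (S ∩ B) ∧ Q₂ (S \ B)) = pr p B Q₁ * pr p (E \ B) Q₂ := by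
  unfold pr
  rw [Finset.sum_mul_sum]
  rw [← Finset.sum_product']
  have key : ∀ P : Finset (Sym2 V) × Finset (Sym2 V), P.1 ⊆ B → P.2 ⊆ E \ B →
      (P.1 ∪ P.2) ∩ B = P.1 ∧ (P.1 ∪ P.2) \ B = P.2 := by
    intro P h1B h2E
    have h2B : ∀ x ∈ P.2, x ∉ B := fun x hx => (Finset.mem_sdiff.mp (h2E hx)).2
    constructor
    · ext x
      simp only [Finset.mem_inter, Finset.mem_union]
      constructor
      · rintro ⟨h | h, hB2⟩
        · exact h
        · exact absurd hB2 (h2B x h)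
      · intro h
        exact ⟨Or.inl h, h1B h⟩
    · ext x
      simp only [Finset.mem_sdiff, Finset.mem_union]
      constructor
      · rintro ⟨h | h, hB2⟩
        · exact absurd (h1B h) hB2
        · exact h
      · intro h
        exact ⟨Or.inr h, h2B x h⟩
  apply Finset.sum_nbij' (fun S => (S ∩ B, S \ B)) (fun P => P.1 ∪ P.2)
  case hi =>
    intro S hS
    simp only [Finset.mem_filter, Finset.mem_powerset] at hS
    simp only [Finset.mem_product, Finset.mem_filter, Finset.mem_powerset]
    refine ⟨⟨Finset.inter_subset_right, hS.2.1⟩, ⟨?_, hS.2.2⟩⟩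
    intro x hx
    simp only [Finset.mem_sdiff] at hx ⊢
    exact ⟨hS.1 hx.1, hx.2⟩
  case hj =>
    intro P hP
    simp only [Finset.mem_product, Finset.mem_filter, Finset.mem_powerset] at hP
    obtain ⟨⟨h1B, hQ1⟩, ⟨h2E, hQ2⟩⟩ := hP
    obtain ⟨k1, k2⟩ := key P h1B h2E
    simp only [Finset.mem_filter, Finset.mem_powerset]
    refine ⟨?_, ?_, ?_⟩
    · intro x hx
      rcases Finset.mem_union.mp hx with h | h
      · exact hB (h1B h)
      · exact (Finset.mem_sdiff.mp (h2E h)).1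
    · rw [k1]; exact hQ1
    · rw [k2]; exact hQ2
  case left_neg =>
    intro S hS
    rw [Finset.union_comm, Finset.sdiff_union_inter]
  case right_neg =>
    intro P hP
    simp only [Finset.mem_product, Finset.mem_filter, Finset.mem_powerset] at hP
    obtain ⟨⟨h1B, hQ1⟩, ⟨h2E, hQ2⟩⟩ := hP
    obtain ⟨k1, k2⟩ := key P h1B h2E
    exact Prod.ext k1 k2
  case h =>
    intro S hS
    simp only [Finset.mem_filter, Finset.mem_powerset] at hS
    have c1 := Finset.card_inter_add_card_sdiff S B
    have c2 : (S ∩ B).card ≤ B.card := Finset.card_le_card Finset.inter_subset_right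
    have c3 : (S \ B).card ≤ (E \ B).card := Finset.card_le_card (by
      intro x hx
      simp only [Finset.mem_sdiff] at hx ⊢
      exact ⟨hS.1 hx.1, hx.2⟩)
    have c4 : (E \ B).card + B.card = E.card := Finset.card_sdiff_add_card_eq_card hB
    have e1 : S.card = (S ∩ B).card + (S \ B).card := c1.symm
    have e2 : E.card - S.card = (B.card - (S ∩ B).card) + ((E \ B).card - (S \ B).card) := by
      omega
    rw [e2, e1, pow_add, pow_add]
    ring


lemma pr_two {p : ℝ} (hp0 : 0 ≤ p) (hp1 : p ≤ 1) {E : Finset (Sym2 V)}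
    {A B T : Finset (Sym2 V) → Prop}
    (hd : ∀ S, ¬ (A S ∧ B S))
    (hA : ∀ S ∈ E.powerset, A S → T S) (hB : ∀ S ∈ E.powerset, B S → T S) :
    pr p E A + pr p E B ≤ pr p E T := by
  have e0 := pr_add_compl p E T A
  have e1 : pr p E (fun S => T S ∧ A S) = pr p E A :=
    pr_congr (fun S hS => ⟨fun h => h.2, fun h => ⟨hA S hS h, h⟩⟩)
  have e2 : pr p E B ≤ pr p E (fun S => T S ∧ ¬ A S) :=
    pr_mono hp0 hp1 (fun S hS h => ⟨hB S hS h, fun hA' => hd S ⟨hA', h⟩⟩)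
  linarith

lemma pr_prod {p : ℝ} :
    ∀ (l : List (Finset (Sym2 V) × (Finset (Sym2 V) → Prop))) (E : Finset (Sym2 V)),
      (∀ x ∈ l, x.1 ⊆ E) → l.Pairwise (fun x y => Disjoint x.1 y.1) →
      pr p E (fun S => ∀ x ∈ l, x.2 (S ∩ x.1)) = (l.map fun x => pr p x.1 x.2).prod
  | [], E, _, _ => by
    rw [List.map_nil, List.prod_nil]
    rw [pr_congr (Q' := fun _ => True) (fun S _ => by simp)]
    exact pr_true p E
  | x :: t, E, hsub, hdisj => by
    have hxE : x.1 ⊆ E := hsub x List.mem_cons_self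
    obtain ⟨hd, hdt⟩ := List.pairwise_cons.mp hdisj
    have step : pr p E (fun S => ∀ z ∈ x :: t, z.2 (S ∩ z.1))
        = pr p E (fun S => x.2 (S ∩ x.1) ∧ (fun S' => ∀ z ∈ t, z.2 (S' ∩ z.1)) (S \ x.1)) := by
      apply pr_congr
      intro S hS
      have key : ∀ z ∈ t, (S \ x.1) ∩ z.1 = S ∩ z.1 := by
        intro z hz
        ext e
        simp only [Finset.mem_inter, Finset.mem_sdiff]
        constructor
        · rintro ⟨⟨he, _⟩, hz'⟩
          exact ⟨he, hz'⟩
        · rintro ⟨he, hz'⟩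
          exact ⟨⟨he, fun hx' => (Finset.disjoint_left.mp (hd z hz)) hx' hz'⟩, hz'⟩
      simp only [List.forall_mem_cons]
      constructor
      · rintro ⟨h1, h2⟩
        exact ⟨h1, fun z hz => by rw [key z hz]; exact h2 z hz⟩
      · rintro ⟨h1, h2⟩
        exact ⟨h1, fun z hz => by rw [← key z hz]; exact h2 z hz⟩
    rw [step, pr_split hxE x.2 (fun S' => ∀ z ∈ t, z.2 (S' ∩ z.1))]
    rw [List.map_cons, List.prod_cons]
    congr 1
    apply pr_prod t (E \ x.1)
    · intro y hy
      rw [Finset.subset_sdiff]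
      exact ⟨hsub y (List.mem_cons_of_mem _ hy), (hd y hy).symm⟩
    · exact hdt

lemma pr_eq_singleton {p : ℝ} {B : Finset (Sym2 V)} {e : Sym2 V} (he : e ∈ B) :
    pr p B (fun X => X = {e}) = p * (1 - p) ^ (B.card - 1) := by
  unfold pr
  refine Eq.trans (?_ : _ = ∑ S ∈ ({({e} : Finset (Sym2 V))} : Finset (Finset (Sym2 V))),
      p ^ S.card * (1 - p) ^ (B.card - S.card)) ?_
  · congr 1
    ext Y
    simp only [Finset.mem_filter, Finset.mem_powerset, Finset.mem_singleton]
    constructor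
    · exact fun h => h.2
    · rintro rfl
      exact ⟨Finset.singleton_subset_iff.mpr he, rfl⟩
  · rw [Finset.sum_singleton, Finset.card_singleton]
    ring

lemma pr_eq_empty {p : ℝ} (B : Finset (Sym2 V)) :
    pr p B (fun X => X = ∅) = (1 - p) ^ B.card := by
  unfold pr
  refine Eq.trans (?_ : _ = ∑ S ∈ ({(∅ : Finset (Sym2 V))} : Finset (Finset (Sym2 V))),
      p ^ S.card * (1 - p) ^ (B.card - S.card)) ?_
  · congr 1
    ext Y
    simp only [Finset.mem_filter, Finset.mem_powerset, Finset.mem_singleton]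
    constructor
    · exact fun h => h.2
    · rintro rfl
      exact ⟨Finset.empty_subset B, rfl⟩
  · rw [Finset.sum_singleton, Finset.card_empty]
    simp

lemma pr_ne_singleton {p : ℝ} {B : Finset (Sym2 V)} {e : Sym2 V} (he : e ∈ B) :
    pr p B (fun X => X ≠ {e}) = 1 - p * (1 - p) ^ (B.card - 1) := by
  have e0 := pr_add_compl p B (fun _ => True) (fun X => X = {e})
  rw [pr_true] at e0
  have e1 : pr p B (fun S => True ∧ S = {e}) = pr p B (fun X => X = {e}) :=
    pr_congr (fun S _ => by tauto)
  have e2 : pr p B (fun S => True ∧ ¬ S = {e}) = pr p B (fun X => X ≠ {e}) :=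
    pr_congr (fun S _ => by tauto)
  rw [e1, e2, pr_eq_singleton he] at e0
  linarith

lemma pr_mem_singleton (p : ℝ) (e : Sym2 V) : pr p {e} (fun X => e ∈ X) = p := by
  have e1 : pr p {e} (fun X => e ∈ X) = pr p {e} (fun X => X = {e}) := by
    apply pr_congr
    intro S hS
    rw [Finset.mem_powerset, Finset.subset_singleton_iff] at hS
    constructor
    · intro h
      rcases hS with rfl | rfl
      · simp at h
      · rfl
    · rintro rfl
      simp
  rw [e1, pr_eq_singleton (Finset.mem_singleton_self e)]
  simp

lemma pr_not_mem_singleton (p : ℝ) (e : Sym2 V) : pr p {e} (fun X => e ∉ X) = 1 - p := by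
  have e1 : pr p {e} (fun X => e ∉ X) = pr p {e} (fun X => X = ∅) := by
    apply pr_congr
    intro S hS
    rw [Finset.mem_powerset, Finset.subset_singleton_iff] at hS
    constructor
    · intro h
      rcases hS with rfl | rfl
      · rfl
      · simp at h
    · rintro rfl
      simp
  rw [e1, pr_eq_empty]
  simp

lemma list_prod_le_pow {c : ℝ} (hc : 0 ≤ c) :
    ∀ {l : List ℝ}, (∀ x ∈ l, 0 ≤ x ∧ x ≤ c) → l.prod ≤ c ^ l.length
  | [], _ => by simp
  | x :: t, h => by
    rw [List.prod_cons, List.length_cons, pow_succ]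
    have ht := list_prod_le_pow hc (fun y hy => h y (List.mem_cons_of_mem _ hy))
    have hx := h x List.mem_cons_self
    have htn : 0 ≤ t.prod := List.prod_nonneg (fun y hy => (h y (List.mem_cons_of_mem _ hy)).1)
    calc x * t.prod ≤ c * c ^ t.length := by
          apply mul_le_mul hx.2 ht htn hc
      _ = c ^ t.length * c := by ring

lemma list_prod_nonneg' {l : List ℝ} (h : ∀ x ∈ l, 0 ≤ x) : 0 ≤ l.prod :=
  List.prod_nonneg h


section Analytic

lemma exp_neg_one_le_pow {p : ℝ} {n : ℕ} (hp0 : 0 < p) (hp1 : p < 1)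
    (hn : (n : ℝ) * p ≤ 1 - p) : Real.exp (-1) ≤ (1 - p) ^ n := by
  have h1 : (0:ℝ) < 1 - p := by linarith
  have h2 : ((1:ℝ) - p) ^ n = Real.exp (n * Real.log (1 - p)) := by
    rw [← Real.log_pow, Real.exp_log (pow_pos h1 n)]
  rw [h2]
  apply Real.exp_le_exp.mpr
  have h3 : -Real.log (1 - p) ≤ p / (1 - p) := by
    have h4 := Real.log_le_sub_one_of_pos (x := (1 - p)⁻¹) (by positivity)
    rw [Real.log_inv] at h4
    have he : (1 - p)⁻¹ - 1 = p / (1 - p) := by field_simp; ring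
    linarith
  have h5 : (n : ℝ) * (p / (1 - p)) ≤ 1 := by
    rw [mul_div_assoc'] at *
    rw [div_le_one h1]
    exact hn
  have h6 : (n : ℝ) * (-Real.log (1 - p)) ≤ (n : ℝ) * (p / (1 - p)) :=
    mul_le_mul_of_nonneg_left h3 (Nat.cast_nonneg n)
  nlinarith

lemma chord {x : ℝ} (hx0 : 0 ≤ x) (hx1 : x ≤ (Real.exp 1)⁻¹) :
    x * f (1 / Real.exp 1) ≤ 1 - Real.exp (-x) := by
  have hc0 : (0:ℝ) < (Real.exp 1)⁻¹ := by positivity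
  set c : ℝ := (Real.exp 1)⁻¹ with hc
  have ht0 : 0 ≤ x / c := by positivity
  have ht1 : x / c ≤ 1 := (div_le_one hc0).mpr hx1
  have hb' : (0:ℝ) ≤ 1 - x / c := by linarith
  have hab' : x / c + (1 - x / c) = 1 := by ring
  have hconv := convexOn_exp.2 (Set.mem_univ (-c)) (Set.mem_univ 0) ht0 hb' hab' 
  simp only [smul_eq_mul, mul_zero, add_zero, Real.exp_zero, mul_one] at hconv
  have hxc : x / c * -c = -x := by field_simp
  rw [hxc] at hconv
  have hf : f (1 / Real.exp 1) = (1 - Real.exp (-c)) / c := by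
    rw [f, one_div, ← hc]
  have h2 : x * ((1 - Real.exp (-c)) / c) = x / c * (1 - Real.exp (-c)) := by
    field_simp
  rw [hf, h2]
  nlinarith

end Analytic

section Graph

variable {V : Type*} [Fintype V] [DecidableEq V]

def blk (C : Finset (Sym2 V)) (w : V) : Finset (Sym2 V) := C.filter (fun e => w ∈ e)

def blk' (C : Finset (Sym2 V)) (v w : V) : Finset (Sym2 V) := (blk C w).erase s(v, w)

lemma blk_subset (C : Finset (Sym2 V)) (w : V) : blk C w ⊆ C := Finset.filter_subset _ _

lemma blk'_subset (C : Finset (Sym2 V)) (v w : V) : blk' C v w ⊆ blk C w :=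
  Finset.erase_subset _ _

lemma blk_card (C : Finset (Sym2 V)) (w : V) : (blk C w).card = edeg C w := by
  unfold blk edeg
  congr 1
  ext e
  simp [Finset.mem_filter]

lemma out_of_adj {Mplus C : Finset (Sym2 V)} (hC : EdgeSimple C)
    (hone : ∀ e ∈ C, ((mVerts Mplus).filter fun w => w ∈ e).card = 1)
    {x w : V} (hx : x ∈ mVerts Mplus) (hxw : s(x, w) ∈ C) : w ∉ mVerts Mplus := by
  intro hw
  have hne : x ≠ w := by
    intro h
    exact hC _ hxw (by rw [h, Sym2.isDiag_iff_proj_eq])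
  have h2 : ({x, w} : Finset V) ⊆ (mVerts Mplus).filter (fun y => y ∈ s(x, w)) := by
    intro y hy
    rcases Finset.mem_insert.mp hy with rfl | hy
    · exact Finset.mem_filter.mpr ⟨hx, Sym2.mem_mk_left _ _⟩
    · rw [Finset.mem_singleton] at hy
      subst hy
      exact Finset.mem_filter.mpr ⟨hw, Sym2.mem_mk_right _ _⟩
  have hcc := Finset.card_le_card h2
  rw [hone _ hxw, Finset.card_insert_of_notMem (by simp [hne]), Finset.card_singleton] at hcc
  omega

lemma blk_disj {Mplus C : Finset (Sym2 V)}
    (hone : ∀ e ∈ C, ((mVerts Mplus).filter fun w => w ∈ e).card = 1)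
    {w₁ w₂ : V} (h1 : w₁ ∉ mVerts Mplus) (h2 : w₂ ∉ mVerts Mplus)
    (hne : w₁ ≠ w₂) : Disjoint (blk C w₁) (blk C w₂) := by
  rw [Finset.disjoint_left]
  intro e he1 he2
  rw [blk, Finset.mem_filter] at he1 he2
  obtain ⟨heC, hw1⟩ := he1
  obtain ⟨-, hw2⟩ := he2
  obtain ⟨y, hy⟩ := Finset.card_eq_one.mp (hone e heC)
  have hymem : y ∈ (mVerts Mplus).filter (fun z => z ∈ e) := by
    rw [hy]
    exact Finset.mem_singleton_self y
  rw [Finset.mem_filter] at hymem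
  obtain ⟨hyM, hye⟩ := hymem
  induction e using Sym2.ind with
  | _ a b =>
    rw [Sym2.mem_iff] at hw1 hw2 hye
    rcases hw1 with rfl | rfl <;> rcases hw2 with h | h <;> rcases hye with rfl | rfl <;>
      first
        | exact h1 hyM
        | exact h2 hyM
        | exact hne h.symm
        | (subst h; exact h1 hyM)
        | (subst h; exact h2 hyM)
        | exact hne rfl


variable {Mplus C : Finset (Sym2 V)} {u v : V} {p : ℝ}

def zA (p : ℝ) (C : Finset (Sym2 V)) (v w : V) : ℝ := p * (1 - p) ^ ((blk' C v w).card - 1)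

def cbv (p : ℝ) (C : Finset (Sym2 V)) (u v w : V) : ℝ :=
  pr p (blk' C v w) (fun X => X ⊆ {s(u, w)})

def slotBlock (C : Finset (Sym2 V)) (u v : V) :
    V × ℕ → Finset (Sym2 V) × (Finset (Sym2 V) → Prop)
  | (w, 0) => ({s(v, w)}, fun X => s(v, w) ∉ X)
  | (w, 1) => (blk' C v w, fun X => X ≠ {s(u, w)})
  | (w, 2) => (blk C w, fun X => s(v, w) ∈ X ∧ X.erase s(v, w) ⊆ {s(u, w)})
  | (w, 3) => (blk' C v w, fun X => X = {s(u, w)})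
  | (_, _+4) => (∅, fun _ => True)

def slotVal (p : ℝ) (C : Finset (Sym2 V)) (u v : V) : V × ℕ → ℝ
  | (_, 0) => 1 - p
  | (w, 1) => 1 - zA p C v w
  | (w, 2) => p * cbv p C u v w
  | (w, 3) => zA p C v w
  | (_, _+4) => 1

def slotEv (C : Finset (Sym2 V)) (u v : V) (ctx : List (V × ℕ)) (S : Finset (Sym2 V)) : Prop :=
  ∀ x ∈ ctx, (slotBlock C u v x).2 (S ∩ (slotBlock C u v x).1)

def Compat : V × ℕ → V × ℕ → Prop := fun x y =>
  x.1 ≠ y.1 ∨ (x.2 = 0 ∧ (y.2 = 1 ∨ y.2 = 3)) ∨ (y.2 = 0 ∧ (x.2 = 1 ∨ x.2 = 3))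

def SlotOK (Mplus C : Finset (Sym2 V)) (u v : V) (x : V × ℕ) : Prop :=
  x.1 ∉ mVerts Mplus ∧ (x.2 = 0 ∨ x.2 = 2 → s(v, x.1) ∈ C) ∧
    ((x.2 = 1 ∨ x.2 = 3) → s(u, x.1) ∈ C)

lemma mem_blk_vw {w : V} (h : s(v, w) ∈ C) : s(v, w) ∈ blk C w :=
  Finset.mem_filter.mpr ⟨h, Sym2.mem_mk_right v w⟩

lemma mem_blk' {w : V} (h : s(u, w) ∈ C) (hvu : u ≠ v) : s(u, w) ∈ blk' C v w := by
  refine Finset.mem_erase.mpr ⟨?_, Finset.mem_filter.mpr ⟨h, Sym2.mem_mk_right u w⟩⟩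
  rw [Ne, Sym2.congr_left]
  exact hvu

lemma slotBlock_sub {x : V × ℕ} (hok : SlotOK Mplus C u v x) :
    (slotBlock C u v x).1 ⊆ blk C x.1 := by
  obtain ⟨w, c⟩ := x
  match c with
  | 0 =>
    simp only [slotBlock]
    exact Finset.singleton_subset_iff.mpr (mem_blk_vw (hok.2.1 (Or.inl rfl)))
  | 1 => exact blk'_subset C v w
  | 3 => exact blk'_subset C v w
  | 2 => exact subset_rfl
  | (n+4) => exact Finset.empty_subset _
lemma slotBlock_sub_C {x : V × ℕ} (hok : SlotOK Mplus C u v x) :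
    (slotBlock C u v x).1 ⊆ C :=
  (slotBlock_sub hok).trans (blk_subset C x.1)

lemma slot_disj (hone : ∀ e ∈ C, ((mVerts Mplus).filter fun w => w ∈ e).card = 1)
    (hv : v ∈ mVerts Mplus) {x y : V × ℕ}
    (hok1 : SlotOK Mplus C u v x) (hok2 : SlotOK Mplus C u v y) (hcom : Compat x y) :
    Disjoint (slotBlock C u v x).1 (slotBlock C u v y).1 := by
  have main : ∀ (w1 w2 : V) (c2 : ℕ), w1 ∉ mVerts Mplus → w2 ∉ mVerts Mplus →
      (c2 = 1 ∨ c2 = 3) →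
      Disjoint (slotBlock C u v (w1, 0)).1 (slotBlock C u v (w2, c2)).1 := by
    intro w1 w2 c2 hw1 hw2 hc2
    have hblk : (slotBlock C u v (w2, c2)).1 = blk' C v w2 := by
      rcases hc2 with rfl | rfl <;> rfl
    rw [hblk]
    simp only [slotBlock]
    rw [Finset.disjoint_singleton_left]
    by_cases hww : w1 = w2
    · subst hww
      exact Finset.notMem_erase _ _
    · intro hmem
      have hmem2 : s(v, w1) ∈ blk C w2 := Finset.mem_of_mem_erase hmem
      have : w2 ∈ s(v, w1) := (Finset.mem_filter.mp hmem2).2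
      rw [Sym2.mem_iff] at this
      rcases this with rfl | rfl
      · exact hw2 hv
      · exact hww rfl
  rcases hcom with hne | ⟨hx0, hy13⟩ | ⟨hy0, hx13⟩
  · exact Finset.disjoint_of_subset_left (slotBlock_sub hok1)
      (Finset.disjoint_of_subset_right (slotBlock_sub hok2)
        (blk_disj hone hok1.1 hok2.1 hne))
  · obtain ⟨w1, c1⟩ := x
    obtain ⟨w2, c2⟩ := y
    simp only at hx0 hy13
    subst hx0
    exact main w1 w2 c2 hok1.1 hok2.1 hy13
  · obtain ⟨w1, c1⟩ := x
    obtain ⟨w2, c2⟩ := y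
    simp only at hy0 hx13
    subst hy0
    exact (main w2 w1 c1 hok2.1 hok1.1 hx13).symm

lemma slot_eval (hvu : u ≠ v) {x : V × ℕ} (hok : SlotOK Mplus C u v x) :
    pr p (slotBlock C u v x).1 (slotBlock C u v x).2 = slotVal p C u v x := by
  obtain ⟨w, c⟩ := x
  match c with
  | 0 => exact pr_not_mem_singleton p s(v, w)
  | 1 =>
    have hm : s(u, w) ∈ blk' C v w := mem_blk' (hok.2.2 (Or.inl rfl)) hvu
    simp only [slotBlock, slotVal]
    rw [pr_ne_singleton hm, zA]
  | 3 =>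
    have hm : s(u, w) ∈ blk' C v w := mem_blk' (hok.2.2 (Or.inr rfl)) hvu
    simp only [slotBlock, slotVal]
    rw [pr_eq_singleton hm, zA]
  | 2 =>
    simp only [slotBlock, slotVal]
    have hm : s(v, w) ∈ blk C w := mem_blk_vw (hok.2.1 (Or.inr rfl))
    have hsub : ({s(v, w)} : Finset (Sym2 V)) ⊆ blk C w := Finset.singleton_subset_iff.mpr hm
    have hcg : pr p (blk C w) (fun X => s(v, w) ∈ X ∧ X.erase s(v, w) ⊆ {s(u, w)})
        = pr p (blk C w) (fun X => (fun Y => s(v, w) ∈ Y) (X ∩ {s(v, w)}) ∧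
            (fun Y => Y ⊆ {s(u, w)}) (X \ {s(v, w)})) := by
      apply pr_congr
      intro S hS
      rw [Finset.erase_eq]
      simp [Finset.mem_inter]
    rw [hcg, pr_split hsub (fun Y => s(v, w) ∈ Y) (fun Y => Y ⊆ {s(u, w)}), pr_mem_singleton]
    congr 1
    rw [cbv, blk', Finset.erase_eq]
  | (n+4) =>
    simp only [slotBlock, slotVal]
    exact pr_true p ∅

lemma slotVal_nonneg (hp0 : 0 ≤ p) (hp1 : p ≤ 1) (x : V × ℕ) :
    0 ≤ slotVal p C u v x := by
  obtain ⟨w, c⟩ := x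
  match c with
  | 0 => simp only [slotVal]; linarith
  | 1 =>
    simp only [slotVal, zA]
    have h1 : (1 - p) ^ ((blk' C v w).card - 1) ≤ 1 :=
      pow_le_one₀ (by linarith) (by linarith)
    nlinarith
  | 2 =>
    simp only [slotVal]
    exact mul_nonneg hp0 (pr_nonneg hp0 hp1 _ _)
  | 3 =>
    simp only [slotVal, zA]
    have : (0:ℝ) ≤ 1 - p := by linarith
    positivity
  | (n+4) => simp [slotVal]


lemma slotEv_cons {x : V × ℕ} {ctx : List (V × ℕ)} {S : Finset (Sym2 V)} :
    slotEv C u v (x :: ctx) S ↔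
      ((slotBlock C u v x).2 (S ∩ (slotBlock C u v x).1) ∧ slotEv C u v ctx S) :=
  List.forall_mem_cons

lemma pr_slotEv (hp0 : 0 < p) (hp1 : p < 1) (hvu : u ≠ v)
    (hone : ∀ e ∈ C, ((mVerts Mplus).filter fun w => w ∈ e).card = 1)
    (hv : v ∈ mVerts Mplus) (ctx : List (V × ℕ))
    (hctx : ∀ x ∈ ctx, SlotOK Mplus C u v x) (hcp : ctx.Pairwise Compat) :
    pr p C (fun S => slotEv C u v ctx S) = (ctx.map (slotVal p C u v)).prod := by
  have h1 : pr p C (fun S => slotEv C u v ctx S)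
      = pr p C (fun S => ∀ y ∈ ctx.map (slotBlock C u v), y.2 (S ∩ y.1)) := by
    apply pr_congr
    intro S _
    rw [slotEv]
    constructor
    · intro h y hy
      obtain ⟨x, hx, rfl⟩ := List.mem_map.mp hy
      exact h x hx
    · intro h x hx
      exact h _ (List.mem_map_of_mem hx)
  rw [h1, pr_prod (ctx.map (slotBlock C u v)) C ?hsub ?hdisj]
  case hsub =>
    intro y hy
    obtain ⟨x, hx, rfl⟩ := List.mem_map.mp hy
    exact slotBlock_sub_C (hctx x hx)
  case hdisj =>
    rw [List.pairwise_map]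
    apply List.Pairwise.imp_of_mem (l := ctx) ?_ hcp
    intro x y hx hy hcom
    exact slot_disj hone hv (hctx x hx) (hctx y hy) hcom
  rw [List.map_map]
  congr 1
  apply List.map_congr_left
  intro x hx
  exact slot_eval hvu (hctx x hx)

lemma lemA (hp0 : 0 < p) (hp1 : p < 1) (hvu : u ≠ v)
    (hone : ∀ e ∈ C, ((mVerts Mplus).filter fun w => w ∈ e).card = 1)
    (hv : v ∈ mVerts Mplus) :
    ∀ (l : List V) (ctx : List (V × ℕ)),
      (∀ a ∈ l, a ∉ mVerts Mplus ∧ s(u, a) ∈ C) →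
      l.Nodup →
      (∀ x ∈ ctx, SlotOK Mplus C u v x) →
      ctx.Pairwise Compat →
      (∀ a ∈ l, ∀ x ∈ ctx, x.1 ≠ a ∨ x.2 = 0) →
      (ctx.map (slotVal p C u v)).prod *
          (1 - (l.map (fun a => 1 - zA p C v a)).prod)
        ≤ pr p C (fun S => slotEv C u v ctx S ∧ ∃ a ∈ l, S ∩ blk' C v a = {s(u, a)})
  | [], ctx, _, _, hctx, _, _ => by
    simp only [List.map_nil, List.prod_nil, sub_self, mul_zero]
    exact pr_nonneg hp0.le hp1.le _ _
  | a :: t, ctx, hl, hnd, hctx, hcp, hlc => by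
    have hae := hl a List.mem_cons_self
    have hokA3 : SlotOK Mplus C u v (a, 3) :=
      ⟨hae.1, by rintro (h | h) <;> simp at h, fun _ => hae.2⟩
    have hokA1 : SlotOK Mplus C u v (a, 1) :=
      ⟨hae.1, by rintro (h | h) <;> simp at h, fun _ => hae.2⟩
    have hcompat : ∀ (c : ℕ), (c = 1 ∨ c = 3) → ∀ x ∈ ctx, Compat (a, c) x := by
      intro c hc x hx
      rcases hlc a List.mem_cons_self x hx with h | h
      · exact Or.inl (Ne.symm h)
      · exact Or.inr (Or.inr ⟨h, hc⟩)
    set K := (ctx.map (slotVal p C u v)).prod with hKdef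
    have hK0 : 0 ≤ K := by
      apply List.prod_nonneg
      intro r hr
      obtain ⟨x, hx, rfl⟩ := List.mem_map.mp hr
      exact slotVal_nonneg hp0.le hp1.le x
    have hctx3 : ∀ x ∈ (a, 3) :: ctx, SlotOK Mplus C u v x := by
      intro x hx
      rcases List.mem_cons.mp hx with rfl | hx
      · exact hokA3
      · exact hctx x hx
    have hctx1 : ∀ x ∈ (a, 1) :: ctx, SlotOK Mplus C u v x := by
      intro x hx
      rcases List.mem_cons.mp hx with rfl | hx
      · exact hokA1
      · exact hctx x hx
    have hcp3 : ((a, 3) :: ctx).Pairwise Compat :=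
      List.pairwise_cons.mpr ⟨hcompat 3 (Or.inr rfl), hcp⟩
    have hcp1 : ((a, 1) :: ctx).Pairwise Compat :=
      List.pairwise_cons.mpr ⟨hcompat 1 (Or.inl rfl), hcp⟩
    -- value of the hit event
    have prA : pr p C (fun S => slotEv C u v ((a, 3) :: ctx) S) = zA p C v a * K := by
      rw [pr_slotEv hp0 hp1 hvu hone hv _ hctx3 hcp3, List.map_cons, List.prod_cons]
      rfl
    -- IH
    have prB := lemA hp0 hp1 hvu hone hv t ((a, 1) :: ctx)
      (fun a' ha' => hl a' (List.mem_cons_of_mem _ ha'))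
      (List.Nodup.of_cons hnd)
      hctx1 hcp1
      (by
        intro a' ha' x hx
        rcases List.mem_cons.mp hx with rfl | hx
        · exact Or.inl (by
            simp only [ne_eq]
            intro hh
            exact (List.nodup_cons.mp hnd).1 (hh ▸ ha'))
        · exact hlc a' (List.mem_cons_of_mem _ ha') x hx)
    rw [List.map_cons, List.prod_cons] at prB
    -- combine
    have htwo := pr_two (p := p) (E := C) hp0.le hp1.le
      (A := fun S => slotEv C u v ((a, 3) :: ctx) S)
      (B := fun S => slotEv C u v ((a, 1) :: ctx) S ∧ ∃ a' ∈ t, S ∩ blk' C v a' = {s(u, a')})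
      (T := fun S => slotEv C u v ctx S ∧ ∃ a' ∈ a :: t, S ∩ blk' C v a' = {s(u, a')})
      (by
        rintro S ⟨hA, hB⟩
        have h3 := (slotEv_cons.mp hA).1
        have h1 := (slotEv_cons.mp hB.1).1
        exact h1 h3)
      (by
        rintro S _ hA
        obtain ⟨h3, hrest⟩ := slotEv_cons.mp hA
        exact ⟨hrest, a, List.mem_cons_self, h3⟩)
      (by
        rintro S _ ⟨hB, a', ha', hhit⟩
        obtain ⟨h1, hrest⟩ := slotEv_cons.mp hB
        exact ⟨hrest, a', List.mem_cons_of_mem _ ha', hhit⟩)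
    set za := zA p C v a with hza
    set Pt := (t.map (fun a => 1 - zA p C v a)).prod with hPt
    rw [List.map_cons, List.prod_cons, ← hPt]
    have hring : K * (1 - (1 - za) * Pt)
        = za * K + (1 - za) * K * (1 - Pt) := by ring
    have hprB' : (1 - za) * K * (1 - Pt)
        ≤ pr p C (fun S => slotEv C u v ((a, 1) :: ctx) S ∧
            ∃ a' ∈ t, S ∩ blk' C v a' = {s(u, a')}) := by
      calc (1 - za) * K * (1 - Pt) = (1 - za) * K * (1 - Pt) := rfl
        _ ≤ _ := by
          have : ((1 - za) * K) * (1 - Pt) = (1 - za) * K * (1 - Pt) := by ring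
          exact le_of_le_of_eq (le_of_eq this.symm) rfl |>.trans prB
    linarith [hprB', htwo, prA.ge, prA.le]


lemma floor_mul_le (hp0 : 0 < p) {m : ℕ} (hm : m ≤ ⌊1/p⌋₊) : (m : ℝ) * p ≤ 1 := by
  have h1 : (m : ℝ) ≤ ⌊1/p⌋₊ := Nat.cast_le.mpr hm
  have h2 : (⌊1/p⌋₊ : ℝ) ≤ 1/p := Nat.floor_le (by positivity)
  have h3 : (m : ℝ) * p ≤ (1/p) * p := by
    apply mul_le_mul_of_nonneg_right (h1.trans h2) hp0.le
  rw [one_div, inv_mul_cancel₀ (ne_of_gt hp0)] at h3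
  exact h3

lemma sub_one_mul_le (hp0 : 0 < p) (hp1 : p < 1) {m : ℕ} (hm : m ≤ ⌊1/p⌋₊) :
    ((m - 1 : ℕ) : ℝ) * p ≤ 1 - p := by
  rcases Nat.eq_zero_or_pos m with rfl | hmp
  · simp
    linarith
  · have h1 : ((m - 1 : ℕ) : ℝ) = (m : ℝ) - 1 := by
      rw [Nat.cast_sub hmp]
      simp
    rw [h1]
    have := floor_mul_le hp0 hm
    nlinarith

lemma zA_ge (hp0 : 0 < p) (hp1 : p < 1) (hdeg : ∀ w : V, edeg C w ≤ ⌊1/p⌋₊) (w : V) :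
    p * Real.exp (-1) ≤ zA p C v w := by
  have hcard : (blk' C v w).card ≤ ⌊1/p⌋₊ :=
    le_trans (Finset.card_le_card (blk'_subset C v w)) (le_of_eq_of_le (blk_card C w) (hdeg w))
  have hnp := sub_one_mul_le hp0 hp1 hcard
  have hexp := exp_neg_one_le_pow hp0 hp1 hnp
  rw [zA]
  exact mul_le_mul_of_nonneg_left hexp hp0.le

lemma zA_le (hp0 : 0 < p) (hp1 : p < 1) (w : V) : zA p C v w ≤ p := by
  rw [zA]
  have h1 : (1 - p) ^ ((blk' C v w).card - 1) ≤ 1 :=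
    pow_le_one₀ (by linarith) (by linarith)
  nlinarith

lemma cbv_ge (hp0 : 0 < p) (hp1 : p < 1) (hdeg : ∀ w : V, edeg C w ≤ ⌊1/p⌋₊)
    {w : V} (hvw : s(v, w) ∈ C) : Real.exp (-1) ≤ cbv p C u v w := by
  have h1 : pr p (blk' C v w) (fun X => X = ∅) ≤ cbv p C u v w := by
    apply pr_mono hp0.le hp1.le
    intro S _ hS
    rw [hS]
    exact Finset.empty_subset _
  rw [pr_eq_empty] at h1
  refine le_trans ?_ h1
  have hcard : (blk' C v w).card = edeg C w - 1 := by
    rw [blk', Finset.card_erase_of_mem (mem_blk_vw hvw), blk_card]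
  apply exp_neg_one_le_pow hp0 hp1
  rw [hcard]
  exact sub_one_mul_le hp0 hp1 (hdeg w)

lemma lemB (hp0 : 0 < p) (hp1 : p < 1) (hvu : u ≠ v)
    (hone : ∀ e ∈ C, ((mVerts Mplus).filter fun w => w ∈ e).card = 1)
    (hv : v ∈ mVerts Mplus) (hdeg : ∀ w : V, edeg C w ≤ ⌊1/p⌋₊)
    (LA : List V) (hLA : ∀ a ∈ LA, a ∉ mVerts Mplus ∧ s(u, a) ∈ C) (hLAnd : LA.Nodup)
    (IB : ℝ) (hIB0 : 0 ≤ IB)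
    (hIB : ∀ b : V, IB ≤ 1 - ((LA.erase b).map (fun a => 1 - zA p C v a)).prod) :
    ∀ (lb : List V) (ctx : List (V × ℕ)),
      (∀ b ∈ lb, b ∉ mVerts Mplus ∧ s(v, b) ∈ C) →
      lb.Nodup →
      (∀ x ∈ ctx, SlotOK Mplus C u v x ∧ x.2 = 0) →
      ctx.Pairwise Compat →
      (∀ b ∈ lb, ∀ x ∈ ctx, x.1 ≠ b) →
      (ctx.map (slotVal p C u v)).prod *
          (Real.exp (-1) * IB * (1 - (1 - p) ^ lb.length))
        ≤ pr p C (fun S => slotEv C u v ctx S ∧ ∃ b ∈ lb,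
            (s(v, b) ∈ S ∩ blk C b ∧ (S ∩ blk C b).erase s(v, b) ⊆ {s(u, b)}) ∧
            ∃ a ∈ LA.erase b, S ∩ blk' C v a = {s(u, a)})
  | [], ctx, _, _, hctx, _, _ => by
    simp only [List.length_nil, pow_zero, sub_self, mul_zero]
    exact pr_nonneg hp0.le hp1.le _ _
  | b :: t, ctx, hlb, hnd, hctx, hcp, hlc => by
    have hbe := hlb b List.mem_cons_self
    have hokB2 : SlotOK Mplus C u v (b, 2) :=
      ⟨hbe.1, fun _ => hbe.2, by rintro (h | h) <;> simp at h⟩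
    have hokB0 : SlotOK Mplus C u v (b, 0) :=
      ⟨hbe.1, fun _ => hbe.2, by rintro (h | h) <;> simp at h⟩
    have hcompat : ∀ (c : ℕ), ∀ x ∈ ctx, Compat (b, c) x := by
      intro c x hx
      exact Or.inl (Ne.symm (hlc b List.mem_cons_self x hx))
    set K := (ctx.map (slotVal p C u v)).prod with hKdef
    have hK0 : 0 ≤ K := by
      apply List.prod_nonneg
      intro r hr
      obtain ⟨x, hx, rfl⟩ := List.mem_map.mp hr
      exact slotVal_nonneg hp0.le hp1.le x
    have hctx2 : ∀ x ∈ (b, 2) :: ctx, SlotOK Mplus C u v x := by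
      intro x hx
      rcases List.mem_cons.mp hx with rfl | hx
      · exact hokB2
      · exact (hctx x hx).1
    have hctx0 : ∀ x ∈ (b, 0) :: ctx, SlotOK Mplus C u v x ∧ x.2 = 0 := by
      intro x hx
      rcases List.mem_cons.mp hx with rfl | hx
      · exact ⟨hokB0, rfl⟩
      · exact hctx x hx
    have hcp2 : ((b, 2) :: ctx).Pairwise Compat :=
      List.pairwise_cons.mpr ⟨hcompat 2, hcp⟩
    have hcp0 : ((b, 0) :: ctx).Pairwise Compat :=
      List.pairwise_cons.mpr ⟨hcompat 0, hcp⟩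
    -- A-branch via lemA
    have prA := lemA hp0 hp1 hvu hone hv (LA.erase b) ((b, 2) :: ctx)
      (fun a' ha' => hLA a' (List.mem_of_mem_erase ha'))
      (hLAnd.erase b)
      hctx2 hcp2
      (by
        intro a' ha' x hx
        rcases List.mem_cons.mp hx with rfl | hx
        · exact Or.inl (Ne.symm ((List.Nodup.mem_erase_iff hLAnd).mp ha').1)
        · exact Or.inr ((hctx x hx).2))
    rw [List.map_cons, List.prod_cons] at prA
    -- A-branch lower bound
    have hcbv : Real.exp (-1) ≤ cbv p C u v b := cbv_ge hp0 hp1 hdeg hbe.2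
    have hcbv0 : (0:ℝ) ≤ cbv p C u v b := le_trans (Real.exp_pos _).le hcbv
    have hIBb := hIB b
    have hprod1 : 1 - ((LA.erase b).map (fun a => 1 - zA p C v a)).prod ≤ 1 := by
      have : 0 ≤ ((LA.erase b).map (fun a => 1 - zA p C v a)).prod := by
        apply List.prod_nonneg
        intro r hr
        obtain ⟨x, hx, rfl⟩ := List.mem_map.mp hr
        have := zA_le (C := C) (v := v) hp0 hp1 x
        linarith
      linarith
    have hA_lb : p * (Real.exp (-1) * IB) * K ≤
        pr p C (fun S => slotEv C u v ((b, 2) :: ctx) S ∧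
          ∃ a ∈ LA.erase b, S ∩ blk' C v a = {s(u, a)}) := by
      refine le_trans ?_ prA
      have h1 : Real.exp (-1) * IB ≤ cbv p C u v b *
          (1 - ((LA.erase b).map (fun a => 1 - zA p C v a)).prod) :=
        mul_le_mul hcbv hIBb hIB0 hcbv0
      have hform : slotVal p C u v (b, 2) = p * cbv p C u v b := rfl
      rw [hform]
      have h2 : p * (Real.exp (-1) * IB) * K ≤ p * (cbv p C u v b *
          (1 - ((LA.erase b).map (fun a => 1 - zA p C v a)).prod)) * K := by
        apply mul_le_mul_of_nonneg_right _ hK0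
        exact mul_le_mul_of_nonneg_left h1 hp0.le
      refine h2.trans (le_of_eq ?_)
      ring
    -- B-branch via IH
    have prB := lemB hp0 hp1 hvu hone hv hdeg LA hLA hLAnd IB hIB0 hIB t ((b, 0) :: ctx)
      (fun b' hb' => hlb b' (List.mem_cons_of_mem _ hb'))
      (List.Nodup.of_cons hnd)
      hctx0 hcp0
      (by
        intro b' hb' x hx
        rcases List.mem_cons.mp hx with rfl | hx
        · simp only [ne_eq]
          intro hh
          exact (List.nodup_cons.mp hnd).1 (hh ▸ hb')
        · exact hlc b' (List.mem_cons_of_mem _ hb') x hx)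
    rw [List.map_cons, List.prod_cons] at prB
    have hform0 : slotVal p C u v (b, 0) = 1 - p := rfl
    rw [hform0] at prB
    -- combine via pr_two
    have htwo := pr_two (p := p) (E := C) hp0.le hp1.le
      (A := fun S => slotEv C u v ((b, 2) :: ctx) S ∧
        ∃ a ∈ LA.erase b, S ∩ blk' C v a = {s(u, a)})
      (B := fun S => slotEv C u v ((b, 0) :: ctx) S ∧ ∃ b' ∈ t,
        (s(v, b') ∈ S ∩ blk C b' ∧ (S ∩ blk C b').erase s(v, b') ⊆ {s(u, b')}) ∧
        ∃ a ∈ LA.erase b', S ∩ blk' C v a = {s(u, a)})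
      (T := fun S => slotEv C u v ctx S ∧ ∃ b' ∈ b :: t,
        (s(v, b') ∈ S ∩ blk C b' ∧ (S ∩ blk C b').erase s(v, b') ⊆ {s(u, b')}) ∧
        ∃ a ∈ LA.erase b', S ∩ blk' C v a = {s(u, a)})
      (by
        rintro S ⟨⟨hA, _⟩, ⟨hB, _⟩⟩
        have h2 := (slotEv_cons.mp hA).1
        have h0 := (slotEv_cons.mp hB).1
        have hin : s(v, b) ∈ S := (Finset.mem_inter.mp h2.1).1
        exact h0 (Finset.mem_inter.mpr ⟨hin, Finset.mem_singleton_self _⟩))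
      (by
        rintro S _ ⟨hA, ha⟩
        obtain ⟨h2, hrest⟩ := slotEv_cons.mp hA
        exact ⟨hrest, b, List.mem_cons_self, h2, ha⟩)
      (by
        rintro S _ ⟨hB, b', hb', hrest2⟩
        obtain ⟨h0, hrest⟩ := slotEv_cons.mp hB
        exact ⟨hrest, b', List.mem_cons_of_mem _ hb', hrest2⟩)
    -- arithmetic
    have hlen : ((b :: t).length) = t.length + 1 := rfl
    rw [hlen]
    have hring : K * (Real.exp (-1) * IB * (1 - (1 - p) ^ (t.length + 1)))
        = p * (Real.exp (-1) * IB) * K +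
          (1 - p) * K * (Real.exp (-1) * IB * (1 - (1 - p) ^ t.length)) := by
      ring
    have hB_lb : (1 - p) * K * (Real.exp (-1) * IB * (1 - (1 - p) ^ t.length)) ≤
        pr p C (fun S => slotEv C u v ((b, 0) :: ctx) S ∧ ∃ b' ∈ t,
          (s(v, b') ∈ S ∩ blk C b' ∧ (S ∩ blk C b').erase s(v, b') ⊆ {s(u, b')}) ∧
          ∃ a ∈ LA.erase b', S ∩ blk' C v a = {s(u, a)}) := by
      refine le_trans (le_of_eq ?_) prB
      ring
    linarith [hA_lb, hB_lb, htwo, hring]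

lemma card_nbrs (C : Finset (Sym2 V)) (hC : EdgeSimple C) (x : V) :
    (Finset.univ.filter fun w => s(x, w) ∈ C).card = edeg C x := by
  rw [← blk_card]
  apply Finset.card_bij (fun w _ => s(x, w))
  · intro w hw
    rw [Finset.mem_filter] at hw
    exact Finset.mem_filter.mpr ⟨hw.2, Sym2.mem_mk_left x w⟩
  · intro w1 h1 w2 h2 heq
    rwa [Sym2.congr_right] at heq
  · intro e he
    rw [blk, Finset.mem_filter] at he
    obtain ⟨heC, hxe⟩ := he
    induction e using Sym2.ind with
    | _ y z =>
      rw [Sym2.mem_iff] at hxe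
      rcases hxe with rfl | rfl
      · exact ⟨z, Finset.mem_filter.mpr ⟨Finset.mem_univ z, heC⟩, rfl⟩
      · exact ⟨y, Finset.mem_filter.mpr ⟨Finset.mem_univ y, by rwa [Sym2.eq_swap]⟩,
          Sym2.eq_swap⟩

end Graph



end AugProof

set_option maxHeartbeats 1000000 in
open AugProof in
theorem length_three_augmenting_probability {V : Type*} [Fintype V] [DecidableEq V]
    (p : ℝ) (hp : 0 < p) (hp43 : p ≤ 0.43)
    (Mplus : Finset (Sym2 V)) (hMm : IsMatchingSet Mplus)
    (u v : V) (huv : s(u, v) ∈ Mplus)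
    (C : Finset (Sym2 V)) (hC : EdgeSimple C)
    (hone : ∀ e ∈ C, ((mVerts Mplus).filter fun w => w ∈ e).card = 1)
    (hdeg : ∀ w : V, edeg C w ≤ ⌊1 / p⌋₊) :
    (1 - p) ^ 2 * f (1 / Real.exp 1) * (p / Real.exp 1 ^ 2) *
        (1 - Real.exp (-p * (edeg C v : ℝ))) * max ((edeg C u : ℝ) - 1) 0 ≤
      ∑ S ∈ C.powerset.filter (fun S => ∃ a b : V,
            a ≠ b ∧ a ∉ mVerts Mplus ∧ b ∉ mVerts Mplus ∧
            s(a, u) ∈ S ∧ s(v, b) ∈ S ∧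
            (∀ e ∈ S, a ∈ e → e = s(a, u) ∨ e = s(a, v)) ∧
            (∀ e ∈ S, b ∈ e → e = s(b, u) ∨ e = s(b, v))),
        p ^ S.card * (1 - p) ^ (C.card - S.card) := by
  have hp1 : p < 1 := by linarith [hp43]
  have hq0 : (0:ℝ) ≤ 1 - p := by linarith
  have hu : u ∈ mVerts Mplus := by
    simp only [mVerts, Finset.mem_filter]
    exact ⟨Finset.mem_univ u, ⟨s(u, v), huv, Sym2.mem_mk_left u v⟩⟩
  have hv : v ∈ mVerts Mplus := by
    simp only [mVerts, Finset.mem_filter]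
    exact ⟨Finset.mem_univ v, ⟨s(u, v), huv, Sym2.mem_mk_right u v⟩⟩
  have hvu : u ≠ v := by
    intro h
    exact hMm.1 _ huv (by rw [h, Sym2.isDiag_iff_proj_eq])
  -- the target as a `pr`
  have hRHSeq : pr p C (fun S => ∃ a b : V,
      a ≠ b ∧ a ∉ mVerts Mplus ∧ b ∉ mVerts Mplus ∧
      s(a, u) ∈ S ∧ s(v, b) ∈ S ∧
      (∀ e ∈ S, a ∈ e → e = s(a, u) ∨ e = s(a, v)) ∧
      (∀ e ∈ S, b ∈ e → e = s(b, u) ∨ e = s(b, v)))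
      = ∑ S ∈ C.powerset.filter (fun S => ∃ a b : V,
            a ≠ b ∧ a ∉ mVerts Mplus ∧ b ∉ mVerts Mplus ∧
            s(a, u) ∈ S ∧ s(v, b) ∈ S ∧
            (∀ e ∈ S, a ∈ e → e = s(a, u) ∨ e = s(a, v)) ∧
            (∀ e ∈ S, b ∈ e → e = s(b, u) ∨ e = s(b, v))),
          p ^ S.card * (1 - p) ^ (C.card - S.card) := by
    unfold pr
    congr 1
    ext S
    simp only [Finset.mem_filter]
  rw [← hRHSeq]
  -- neighbour lists
  set LA : List V := (Finset.univ.filter fun w => s(u, w) ∈ C).toList with hLAdef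
  set LB : List V := (Finset.univ.filter fun w => s(v, w) ∈ C).toList with hLBdef
  have hLAmem : ∀ a, a ∈ LA ↔ s(u, a) ∈ C := by
    intro a
    rw [hLAdef, Finset.mem_toList, Finset.mem_filter]
    simp
  have hLBmem : ∀ b, b ∈ LB ↔ s(v, b) ∈ C := by
    intro b
    rw [hLBdef, Finset.mem_toList, Finset.mem_filter]
    simp
  have hLAlen : LA.length = edeg C u := by
    rw [hLAdef, Finset.length_toList]
    exact card_nbrs C hC u
  have hLBlen : LB.length = edeg C v := by
    rw [hLBdef, Finset.length_toList]
    exact card_nbrs C hC v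
  have hLA : ∀ a ∈ LA, a ∉ mVerts Mplus ∧ s(u, a) ∈ C := by
    intro a ha
    have h := (hLAmem a).mp ha
    exact ⟨out_of_adj hC hone hu h, h⟩
  have hLB : ∀ b ∈ LB, b ∉ mVerts Mplus ∧ s(v, b) ∈ C := by
    intro b hb
    have h := (hLBmem b).mp hb
    exact ⟨out_of_adj hC hone hv h, h⟩
  have hLAnd : LA.Nodup := Finset.nodup_toList _
  have hLBnd : LB.Nodup := Finset.nodup_toList _
  -- IB
  set q : ℝ := p * Real.exp (-1) with hqdef
  have hq1 : q ≤ p := by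
    have : Real.exp (-1) ≤ 1 := by
      rw [← Real.exp_zero]
      exact Real.exp_le_exp.mpr (by norm_num)
    nlinarith [hp.le]
  have hqpos : 0 < q := mul_pos hp (Real.exp_pos _)
  set IB : ℝ := 1 - (1 - q) ^ (edeg C u - 1) with hIBdef
  have hIB0 : 0 ≤ IB := by
    rw [hIBdef]
    have : (1 - q) ^ (edeg C u - 1) ≤ 1 := pow_le_one₀ (by linarith) (by linarith)
    linarith
  have hIB : ∀ b : V, IB ≤ 1 - ((LA.erase b).map (fun a => 1 - zA p C v a)).prod := by
    intro b
    have h1 : ((LA.erase b).map (fun a => 1 - zA p C v a)).prod ≤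
        (1 - q) ^ (LA.erase b).length := by
      rw [← List.length_map (as := LA.erase b) (fun a => 1 - zA p C v a)]
      apply list_prod_le_pow (by linarith)
      intro x hx
      obtain ⟨a, _, rfl⟩ := List.mem_map.mp hx
      have hge := zA_ge (C := C) (v := v) hp hp1 hdeg a
      have hle := zA_le (C := C) (v := v) hp hp1 a
      constructor <;> [linarith; linarith]
    have h2 : (1 - q) ^ (LA.erase b).length ≤ (1 - q) ^ (edeg C u - 1) := by
      apply pow_le_pow_of_le_one (by linarith) (by linarith)
      rw [List.length_erase]
      by_cases hb : b ∈ LA <;> simp [hb, hLAlen] <;> omega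
    rw [hIBdef]
    linarith
  -- main probabilistic bound
  have main := lemB hp hp1 hvu hone hv hdeg LA hLA hLAnd IB hIB0 hIB LB []
    hLB hLBnd (by intro x hx; simp at hx) List.Pairwise.nil
    (by intro b hb x hx; simp at hx)
  simp only [List.map_nil, List.prod_nil, one_mul] at main
  -- event implication
  have himp : pr p C (fun S => slotEv C u v [] S ∧ ∃ b ∈ LB,
      (s(v, b) ∈ S ∩ blk C b ∧ (S ∩ blk C b).erase s(v, b) ⊆ {s(u, b)}) ∧
      ∃ a ∈ LA.erase b, S ∩ blk' C v a = {s(u, a)}) ≤ pr p C (fun S => ∃ a b : V,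
      a ≠ b ∧ a ∉ mVerts Mplus ∧ b ∉ mVerts Mplus ∧
      s(a, u) ∈ S ∧ s(v, b) ∈ S ∧
      (∀ e ∈ S, a ∈ e → e = s(a, u) ∨ e = s(a, v)) ∧
      (∀ e ∈ S, b ∈ e → e = s(b, u) ∨ e = s(b, v))) := by
    apply pr_mono hp.le hp1.le
    rintro S hS ⟨-, b, hb, ⟨hbin, hbsub⟩, a, ha, hahit⟩
    rw [Finset.mem_powerset] at hS
    have haLA : a ∈ LA := List.mem_of_mem_erase ha
    have hab : a ≠ b := ((List.Nodup.mem_erase_iff hLAnd).mp ha).1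
    have hbout := (hLB b hb).1
    have haout := (hLA a haLA).1
    have hauS : s(u, a) ∈ S := by
      have : s(u, a) ∈ S ∩ blk' C v a := by
        rw [hahit]
        exact Finset.mem_singleton_self _
      exact (Finset.mem_inter.mp this).1
    refine ⟨a, b, hab, haout, hbout, by rwa [Sym2.eq_swap], (Finset.mem_inter.mp hbin).1,
      ?_, ?_⟩
    · intro e heS hae
      by_cases hev : e = s(v, a)
      · right
        rw [hev, Sym2.eq_swap]
      · left
        have : e ∈ S ∩ blk' C v a := by
          refine Finset.mem_inter.mpr ⟨heS, Finset.mem_erase.mpr ⟨hev, ?_⟩⟩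
          exact Finset.mem_filter.mpr ⟨hS heS, hae⟩
        rw [hahit, Finset.mem_singleton] at this
        rw [this, Sym2.eq_swap]
    · intro e heS hbe
      by_cases hev : e = s(v, b)
      · right
        rw [hev, Sym2.eq_swap]
      · left
        have : e ∈ (S ∩ blk C b).erase s(v, b) := by
          refine Finset.mem_erase.mpr ⟨hev, Finset.mem_inter.mpr ⟨heS, ?_⟩⟩
          exact Finset.mem_filter.mpr ⟨hS heS, hbe⟩
        have := hbsub this
        rw [Finset.mem_singleton] at this
        rw [this, Sym2.eq_swap]
  -- final analytic chain
  rcases Nat.eq_zero_or_pos (edeg C u) with hdu | hdu1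
  · rw [hdu]
    norm_num
    exact pr_nonneg hp.le hp1.le _ _
  · rw [hLBlen] at main
    have hcast1 : (1:ℝ) ≤ (edeg C u : ℝ) := by exact_mod_cast hdu1
    have hmax : max ((edeg C u : ℝ) - 1) 0 = (edeg C u : ℝ) - 1 :=
      max_eq_left (by linarith)
    rw [hmax]
    set m : ℝ := (edeg C u : ℝ) - 1 with hmdef
    have hm0 : 0 ≤ m := by rw [hmdef]; linarith
    have hcast : ((edeg C u - 1 : ℕ) : ℝ) = m := by
      rw [Nat.cast_sub hdu1, hmdef, Nat.cast_one]
    have hpm : p * m ≤ 1 := by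
      have h1 : (edeg C u : ℝ) * p ≤ 1 := floor_mul_le hp (hdeg u)
      rw [hmdef]
      nlinarith
    -- IB lower bound via chord
    have hq2 : 0 ≤ 1 - q := by linarith
    have hIBlb : q * m * f (1 / Real.exp 1) ≤ IB := by
      have h2 : (1 - q) ≤ Real.exp (-q) := by linarith [Real.add_one_le_exp (-q)]
      have h1 : (1 - q) ^ (edeg C u - 1) ≤ Real.exp (-(q * m)) := by
        calc (1 - q) ^ (edeg C u - 1) ≤ (Real.exp (-q)) ^ (edeg C u - 1) :=
              pow_le_pow_left₀ hq2 h2 _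
          _ = Real.exp (-(q * m)) := by
              rw [← Real.exp_nat_mul, hcast]
              ring_nf
      have hqm0 : 0 ≤ q * m := mul_nonneg hqpos.le hm0
      have hqmle : q * m ≤ (Real.exp 1)⁻¹ := by
        have he1 : Real.exp (-1) = (Real.exp 1)⁻¹ := Real.exp_neg 1
        have heq : q * m = p * m * Real.exp (-1) := by rw [hqdef]; ring
        rw [heq, he1]
        have hpos : (0:ℝ) < (Real.exp 1)⁻¹ := by positivity
        have h9 := mul_le_mul_of_nonneg_right hpm hpos.le
        linarith
      have h3 := chord hqm0 hqmle
      rw [hIBdef]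
      linarith
    -- dv comparison
    have h2p : (1 - p) ≤ Real.exp (-p) := by linarith [Real.add_one_le_exp (-p)]
    have hdv : 1 - Real.exp (-p * (edeg C v : ℝ)) ≤ 1 - (1 - p) ^ (edeg C v) := by
      have h5 : (1 - p) ^ (edeg C v) ≤ (Real.exp (-p)) ^ (edeg C v) :=
        pow_le_pow_left₀ hq0 h2p _
      have he : (Real.exp (-p)) ^ (edeg C v) = Real.exp (-p * (edeg C v : ℝ)) := by
        rw [← Real.exp_nat_mul]
        ring_nf
      rw [he] at h5
      linarith
    have hA0 : 0 ≤ 1 - Real.exp (-p * (edeg C v : ℝ)) := by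
      have h6 : Real.exp (-p * (edeg C v : ℝ)) ≤ 1 := by
        rw [← Real.exp_zero]
        apply Real.exp_le_exp.mpr
        have : (0:ℝ) ≤ (edeg C v : ℝ) := Nat.cast_nonneg _
        nlinarith
      linarith
    have hf0 : 0 ≤ f (1 / Real.exp 1) := by
      rw [f]
      apply div_nonneg
      · have h8 : -(1 / Real.exp 1) ≤ 0 := by
          have h9 : (0:ℝ) < 1 / Real.exp 1 := by positivity
          linarith
        have h7 : Real.exp (-(1 / Real.exp 1)) ≤ 1 :=
          le_of_le_of_eq (Real.exp_le_exp.mpr h8) Real.exp_zero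
        linarith
      · positivity
    -- chain
    have heq1 : f (1 / Real.exp 1) * (p / Real.exp 1 ^ 2) *
        (1 - Real.exp (-p * (edeg C v : ℝ))) * m
        = Real.exp (-1) * (q * m * f (1 / Real.exp 1)) *
          (1 - Real.exp (-p * (edeg C v : ℝ))) := by
      have he1 : Real.exp (-1) = (Real.exp 1)⁻¹ := Real.exp_neg 1
      rw [hqdef, he1]
      have he2 : p / Real.exp 1 ^ 2 = p * ((Real.exp 1)⁻¹ * (Real.exp 1)⁻¹) := by
        rw [div_eq_mul_inv, sq, mul_inv]
      rw [he2]
      ring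
    have hstep1 : (1 - p) ^ 2 * f (1 / Real.exp 1) * (p / Real.exp 1 ^ 2) *
        (1 - Real.exp (-p * (edeg C v : ℝ))) * m
        ≤ f (1 / Real.exp 1) * (p / Real.exp 1 ^ 2) *
          (1 - Real.exp (-p * (edeg C v : ℝ))) * m := by
      have hsq : (1 - p) ^ 2 ≤ 1 := by nlinarith
      have hX0 : 0 ≤ f (1 / Real.exp 1) * (p / Real.exp 1 ^ 2) *
          (1 - Real.exp (-p * (edeg C v : ℝ))) * m := by
        apply mul_nonneg
        apply mul_nonneg
        apply mul_nonneg hf0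
        · positivity
        · exact hA0
        · exact hm0
      nlinarith
    have hstep2 : Real.exp (-1) * (q * m * f (1 / Real.exp 1)) *
        (1 - Real.exp (-p * (edeg C v : ℝ)))
        ≤ Real.exp (-1) * IB * (1 - (1 - p) ^ (edeg C v)) := by
      have h8 : (q * m * f (1 / Real.exp 1)) * (1 - Real.exp (-p * (edeg C v : ℝ)))
          ≤ IB * (1 - (1 - p) ^ (edeg C v)) :=
        mul_le_mul hIBlb hdv hA0 hIB0
      have h9 : (0:ℝ) ≤ Real.exp (-1) := (Real.exp_pos _).le
      calc Real.exp (-1) * (q * m * f (1 / Real.exp 1)) *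
          (1 - Real.exp (-p * (edeg C v : ℝ)))
          = Real.exp (-1) * ((q * m * f (1 / Real.exp 1)) *
            (1 - Real.exp (-p * (edeg C v : ℝ)))) := by ring
        _ ≤ Real.exp (-1) * (IB * (1 - (1 - p) ^ (edeg C v))) :=
            mul_le_mul_of_nonneg_left h8 h9
        _ = Real.exp (-1) * IB * (1 - (1 - p) ^ (edeg C v)) := by ring
    calc (1 - p) ^ 2 * f (1 / Real.exp 1) * (p / Real.exp 1 ^ 2) *
        (1 - Real.exp (-p * (edeg C v : ℝ))) * m
        ≤ f (1 / Real.exp 1) * (p / Real.exp 1 ^ 2) *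
          (1 - Real.exp (-p * (edeg C v : ℝ))) * m := hstep1
      _ = Real.exp (-1) * (q * m * f (1 / Real.exp 1)) *
          (1 - Real.exp (-p * (edeg C v : ℝ))) := heq1
      _ ≤ Real.exp (-1) * IB * (1 - (1 - p) ^ (edeg C v)) := hstep2
      _ ≤ _ := le_trans main himp
end
end

section
/- Define f(x) = (1 − e^{−x})/x and η = f(1/e)·(1 − e^{−1})/e². There exist absolute constants C > 0 and p0 ∈ (0,1) such that for every p with 0 < p ≤ p0, every positive integer m, and all vectors d_u, d_v ∈ {0, 1, …, ⌊1/p⌋}^m with Σ_{i=1}^m (d_u(i) + d_v(i)) = s, it holds that f(1/e) · (p/e²) · Σ_{i=1}^m (1 − e^{−p·d_v(i)}) · max{d_u(i) − 1, 0} ≥ η·(p·s − m) − C·(1 + p·(m + p·s)). -/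
open scoped Classical symmDiff
open Real

noncomputable section

/-- The constant `η = f(1/e) * (1 - e⁻¹) / e²`. -/
def η : ℝ := f (1 / Real.exp 1) * (1 - Real.exp (-1)) / Real.exp 1 ^ 2

lemma chord (x : ℝ) (h0 : 0 ≤ x) (h1 : x ≤ 1) :
    (1 - Real.exp (-1)) * x ≤ 1 - Real.exp (-x) := by
  have hc := convexOn_exp.2 (Set.mem_univ (0:ℝ)) (Set.mem_univ (-1:ℝ))
    (by linarith : (0:ℝ) ≤ 1 - x) h0 (by ring)
  simp only [smul_eq_mul, Real.exp_zero] at hc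
  have he : (1 - x) * 0 + x * (-1) = -x := by ring
  rw [he] at hc
  nlinarith

lemma f_nonneg : 0 ≤ f (1 / Real.exp 1) := by
  have h1 : Real.exp (-(1 / Real.exp 1)) ≤ 1 := by
    apply Real.exp_le_one_iff.mpr
    have : (0:ℝ) < 1 / Real.exp 1 := by positivity
    linarith
  unfold f
  apply div_nonneg (by linarith) (by positivity)

lemma exp_neg_one_le : Real.exp (-1) ≤ 1 := Real.exp_le_one_iff.mpr (by norm_num)

lemma eta_nonneg : 0 ≤ η := by
  unfold η
  exact div_nonneg (mul_nonneg f_nonneg (by linarith [exp_neg_one_le])) (by positivity)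

theorem mp_lower_bound :
    ∃ C : ℝ, 0 < C ∧ ∃ p0 : ℝ, 0 < p0 ∧ p0 < 1 ∧
      ∀ p : ℝ, 0 < p → p ≤ p0 →
      ∀ m : ℕ, 0 < m →
      ∀ d_u d_v : Fin m → ℕ,
        (∀ i, d_u i ≤ ⌊1 / p⌋₊) → (∀ i, d_v i ≤ ⌊1 / p⌋₊) →
        ∀ s : ℕ, (∑ i, (d_u i + d_v i)) = s →
          η * (p * (s : ℝ) - (m : ℝ)) - C * (1 + p * ((m : ℝ) + p * (s : ℝ))) ≤
            f (1 / Real.exp 1) * (p / Real.exp 1 ^ 2) *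
              ∑ i, (1 - Real.exp (-p * (d_v i : ℝ))) * max ((d_u i : ℝ) - 1) 0 := by
  refine ⟨η + 1, by linarith [eta_nonneg], 1/2, by norm_num, by norm_num, ?_⟩
  intro p hp hp0 m hm d_u d_v hdu hdv s hs
  have hη := eta_nonneg
  -- basic bounds
  have hfloor : (⌊1/p⌋₊ : ℝ) ≤ 1/p := Nat.floor_le (by positivity)
  have hu1 : ∀ i, p * (d_u i : ℝ) ≤ 1 := by
    intro i
    have h1 : (d_u i : ℝ) ≤ ⌊1/p⌋₊ := Nat.cast_le.mpr (hdu i)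
    calc p * (d_u i : ℝ) ≤ p * (1/p) := by
          apply mul_le_mul_of_nonneg_left (le_trans h1 hfloor) hp.le
      _ = 1 := by field_simp
  have hv1 : ∀ i, p * (d_v i : ℝ) ≤ 1 := by
    intro i
    have h1 : (d_v i : ℝ) ≤ ⌊1/p⌋₊ := Nat.cast_le.mpr (hdv i)
    calc p * (d_v i : ℝ) ≤ p * (1/p) := by
          apply mul_le_mul_of_nonneg_left (le_trans h1 hfloor) hp.le
      _ = 1 := by field_simp
  have hsum : (∑ i, ((d_u i : ℝ) + (d_v i : ℝ))) = (s : ℝ) := by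
    push_cast [← hs]; ring_nf
  -- Step A+B: η*(p*s - m) ≤ η*p^2*S + (η+1)*p*m
  set S : ℝ := ∑ i, (d_v i : ℝ) * max ((d_u i : ℝ) - 1) 0 with hS
  have stepA : ∀ i : Fin m, η * (p * ((d_u i : ℝ) + (d_v i : ℝ)) - 1) ≤
      η * p^2 * ((d_v i : ℝ) * max ((d_u i : ℝ) - 1) 0) + (η + 1) * p := by
    intro i
    have ha0 : (0:ℝ) ≤ p * (d_u i : ℝ) := by positivity
    have hb0 : (0:ℝ) ≤ p * (d_v i : ℝ) := by positivity
    have ha1 := hu1 i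
    have hb1 := hv1 i
    have hM0 : 0 ≤ max ((d_u i : ℝ) - 1) 0 := le_max_right _ _
    have hM1 : (d_u i : ℝ) - 1 ≤ max ((d_u i : ℝ) - 1) 0 := le_max_left _ _
    have e2 : p * (d_u i : ℝ) - p ≤ p * max ((d_u i : ℝ) - 1) 0 := by
      nlinarith [mul_le_mul_of_nonneg_left hM1 hp.le]
    have e1 : η * (p * ((d_u i : ℝ) + (d_v i : ℝ)) - 1) ≤
        η * ((p * (d_u i : ℝ)) * (p * (d_v i : ℝ))) := by
      nlinarith [mul_nonneg hη (mul_nonneg (sub_nonneg.mpr ha1) (sub_nonneg.mpr hb1))]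
    have e3 : η * ((p * (d_u i : ℝ)) * (p * (d_v i : ℝ))) ≤
        η * (p * (d_v i : ℝ)) * (p * max ((d_u i : ℝ) - 1) 0) + η * p := by
      nlinarith [mul_nonneg (mul_nonneg hη hb0) (sub_nonneg.mpr e2),
        mul_nonneg hη (mul_nonneg hp.le (sub_nonneg.mpr hb1))]
    nlinarith [e1, e3, hp.le, hη]
  have stepB : η * (p * (s : ℝ) - (m : ℝ)) ≤ η * p^2 * S + (η + 1) * p * m := by
    have hsum2 := Finset.sum_le_sum (s := Finset.univ) (fun i _ => stepA i)
    have lhs_eq : ∑ i : Fin m, (η * (p * ((d_u i : ℝ) + (d_v i : ℝ)) - 1)) =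
        η * (p * (s : ℝ) - (m : ℝ)) := by
      rw [← hsum]
      simp only [mul_sub, mul_one, Finset.sum_sub_distrib, Finset.sum_const,
        Finset.card_univ, Fintype.card_fin, nsmul_eq_mul, Finset.mul_sum, mul_left_comm]
      ring_nf
    have rhs_eq : ∑ i : Fin m, (η * p^2 * ((d_v i : ℝ) * max ((d_u i : ℝ) - 1) 0) + (η + 1) * p) =
        η * p^2 * S + (η + 1) * p * m := by
      rw [Finset.sum_add_distrib, ← Finset.mul_sum, Finset.sum_const, Finset.card_univ,
        Fintype.card_fin, nsmul_eq_mul]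
      ring
    rw [lhs_eq, rhs_eq] at hsum2
    exact hsum2
  -- Step C: η*p^2*S ≤ RHS
  have stepC : η * p^2 * S ≤ f (1 / Real.exp 1) * (p / Real.exp 1 ^ 2) *
      ∑ i, (1 - Real.exp (-p * (d_v i : ℝ))) * max ((d_u i : ℝ) - 1) 0 := by
    have hterm : ∀ i : Fin m, (1 - Real.exp (-1)) * p * ((d_v i : ℝ) * max ((d_u i : ℝ) - 1) 0) ≤
        (1 - Real.exp (-p * (d_v i : ℝ))) * max ((d_u i : ℝ) - 1) 0 := by
      intro i
      have hM0 : 0 ≤ max ((d_u i : ℝ) - 1) 0 := le_max_right _ _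
      have hch := chord (p * (d_v i : ℝ)) (by positivity) (hv1 i)
      have : -p * (d_v i : ℝ) = -(p * (d_v i : ℝ)) := by ring
      rw [this]
      calc (1 - Real.exp (-1)) * p * ((d_v i : ℝ) * max ((d_u i : ℝ) - 1) 0)
          = ((1 - Real.exp (-1)) * (p * (d_v i : ℝ))) * max ((d_u i : ℝ) - 1) 0 := by ring
        _ ≤ (1 - Real.exp (-(p * (d_v i : ℝ)))) * max ((d_u i : ℝ) - 1) 0 :=
            mul_le_mul_of_nonneg_right hch hM0
    have hsum3 := Finset.sum_le_sum (s := Finset.univ) (fun i _ => hterm i)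
    have hc0 : 0 ≤ f (1 / Real.exp 1) * (p / Real.exp 1 ^ 2) := by
      have := Real.exp_pos 1
      exact mul_nonneg f_nonneg (by positivity)
    have := mul_le_mul_of_nonneg_left hsum3 hc0
    calc η * p^2 * S
        = f (1 / Real.exp 1) * (p / Real.exp 1 ^ 2) *
            ∑ i, ((1 - Real.exp (-1)) * p * ((d_v i : ℝ) * max ((d_u i : ℝ) - 1) 0)) := by
          rw [hS, Finset.mul_sum, Finset.mul_sum]
          refine Finset.sum_congr rfl fun i _ => ?_
          unfold η
          ring
      _ ≤ _ := this
  -- combine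
  have hps : 0 ≤ p * (s : ℝ) := by positivity
  have hpm : 0 ≤ p * (m : ℝ) := by positivity
  nlinarith [stepB, stepC, mul_nonneg (mul_nonneg hp.le hp.le) (Nat.cast_nonneg s : (0:ℝ) ≤ s)]
end
end

section
/- Let p ∈ (0,1), let b = ⌊1/p⌋ with b ≥ 2, let m be a positive integer, and let D_U, D_V be nonnegative integers with m ≤ D_U ≤ b·m, D_V ≤ b·m, D_U − m divisible by b − 1, and D_V divisible by b. Consider minimizing G(d_u, d_v) = Σ_{i=1}^m (1 − e^{−p·d_v(i)}) · max{d_u(i) − 1, 0} over all pairs of vectors d_u, d_v ∈ {0, 1, …, b}^m with Σ_i d_u(i) = D_U and Σ_i d_v(i) = D_V. Then there exists a minimizer (d_u*, d_v*) such that every entry of d_u* is either 1 or b and every entry of d_v* is either 0 or b. -/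
open scoped Classical symmDiff
open Real

noncomputable section

lemma chord_ineq (p B x : ℝ) (hB : 0 < B) (hx0 : 0 ≤ x) (hxB : x ≤ B) :
    x * (1 - Real.exp (-p * B)) ≤ B * (1 - Real.exp (-p * x)) := by
  have h1 : (0:ℝ) ≤ 1 - x / B := by
    rw [sub_nonneg]; exact div_le_one_of_le₀ hxB hB.le
  have h2 : (0:ℝ) ≤ x / B := by positivity
  have h3 : (1 - x / B) + x / B = 1 := by ring
  have h : Real.exp ((1 - x/B) * 0 + (x/B) * (-p*B)) ≤
      (1 - x/B) * Real.exp 0 + (x/B) * Real.exp (-p*B) :=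
    convexOn_exp.2 (Set.mem_univ _) (Set.mem_univ _) h1 h2 h3
  simp only [mul_zero, zero_add, Real.exp_zero, mul_one] at h
  have e1 : x / B * (-p * B) = -p * x := by field_simp
  rw [e1] at h
  have hx : B * (x / B) = x := by field_simp
  have h4 := mul_le_mul_of_nonneg_left h hB.le
  rw [mul_add, mul_sub, hx, ← mul_assoc, hx] at h4
  nlinarith


theorem minimizer_two_values (p : ℝ) (hp : 0 < p) (hp1 : p < 1)
    (b : ℕ) (hb : b = ⌊1 / p⌋₊) (hb2 : 2 ≤ b)
    (m : ℕ) (hm : 0 < m)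
    (DU DV : ℕ) (hDUl : m ≤ DU) (hDUu : DU ≤ b * m) (hDVu : DV ≤ b * m)
    (hdvd1 : (b - 1) ∣ (DU - m)) (hdvd2 : b ∣ DV) :
    ∃ du dv : Fin m → ℕ,
      (∀ i, du i ≤ b) ∧ (∀ i, dv i ≤ b) ∧
      (∑ i, du i) = DU ∧ (∑ i, dv i) = DV ∧
      (∀ du' dv' : Fin m → ℕ,
        (∀ i, du' i ≤ b) → (∀ i, dv' i ≤ b) →
        (∑ i, du' i) = DU → (∑ i, dv' i) = DV →
        (∑ i, (1 - Real.exp (-p * (dv i : ℝ))) * max ((du i : ℝ) - 1) 0) ≤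
          ∑ i, (1 - Real.exp (-p * (dv' i : ℝ))) * max ((du' i : ℝ) - 1) 0) ∧
      (∀ i, du i = 1 ∨ du i = b) ∧ (∀ i, dv i = 0 ∨ dv i = b) := by
  obtain ⟨k, hk⟩ := hdvd1
  obtain ⟨l, hl⟩ := hdvd2
  have hDU : DU = m + (b-1)*k := by rw [← hk, Nat.add_sub_cancel' hDUl]
  have hkm : k ≤ m := by
    have h' : (b-1)*k ≤ (b-1)*m := by
      rw [← hk, Nat.sub_one_mul]; omega
    exact Nat.le_of_mul_le_mul_left h' (by omega)
  have hlm : l ≤ m := by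
    have h' : b*l ≤ b*m := by omega
    exact Nat.le_of_mul_le_mul_left h' (by omega)
  have hbR : (0:ℝ) < b := by positivity
  have hbR2 : (2:ℝ) ≤ b := by exact_mod_cast hb2
  set q : ℝ := 1 - Real.exp (-p * b) with hq
  have hq0 : 0 ≤ q := by
    have : Real.exp (-p * b) ≤ 1 := by
      rw [Real.exp_le_one_iff]; nlinarith
    linarith
  set t := k - (m - l) with ht
  refine ⟨fun i => if (i:ℕ) < k then b else 1, fun i => if (i:ℕ) < m - l then 0 else b,
    fun i => ?_, fun i => ?_, ?_, ?_, ?_, fun i => ?_, fun i => ?_⟩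
  · by_cases h : (i:ℕ) < k <;> simp [h] <;> omega
  · by_cases h : (i:ℕ) < m - l <;> simp [h] <;> omega
  · -- sum du = DU
    rw [Fin.sum_univ_eq_sum_range (fun i => if i < k then b else 1) m, Finset.sum_ite,
      Finset.sum_const, Finset.sum_const]
    have hf1 : (Finset.range m).filter (fun i => i < k) = Finset.range k := by
      ext x; simp only [Finset.mem_filter, Finset.mem_range]; omega
    have hf2 : ((Finset.range m).filter (fun i => ¬ i < k)).card = m - k := by
      have := Finset.card_filter_add_card_filter_not (s := Finset.range m)
        (p := fun i => i < k)
      rw [hf1] at this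
      simp only [Finset.card_range] at this ⊢
      omega
    rw [hf1, hf2, Finset.card_range, smul_eq_mul, smul_eq_mul, hDU]
    zify [hkm, (by omega : 1 ≤ b)]
    ring
  · -- sum dv = DV
    rw [Fin.sum_univ_eq_sum_range (fun i => if i < m - l then 0 else b) m, Finset.sum_ite,
      Finset.sum_const, Finset.sum_const]
    have hf1 : (Finset.range m).filter (fun i => i < m - l) = Finset.range (m - l) := by
      ext x; simp only [Finset.mem_filter, Finset.mem_range]; omega
    have hf2 : ((Finset.range m).filter (fun i => ¬ i < m - l)).card = l := by
      have := Finset.card_filter_add_card_filter_not (s := Finset.range m)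
        (p := fun i => i < m - l)
      rw [hf1] at this
      simp only [Finset.card_range] at this ⊢
      omega
    rw [hf1, hf2, Finset.card_range, smul_eq_mul, smul_eq_mul, hl]
    ring
  · -- minimality
    intro du' dv' hu'b hv'b hu's hv's
    -- value of the constructed point
    have hval : (∑ i : Fin m, (1 - Real.exp (-p * ((if (i:ℕ) < m - l then 0 else b : ℕ) : ℝ))) *
        max (((if (i:ℕ) < k then b else 1 : ℕ) : ℝ) - 1) 0) = (t:ℝ) * (q * ((b:ℝ) - 1)) := by
      have hterm : ∀ i ∈ (Finset.univ : Finset (Fin m)),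
          (1 - Real.exp (-p * ((if (i:ℕ) < m - l then 0 else b : ℕ) : ℝ))) *
            max (((if (i:ℕ) < k then b else 1 : ℕ) : ℝ) - 1) 0 =
          if (m - l ≤ (i:ℕ) ∧ (i:ℕ) < k) then q * ((b:ℝ) - 1) else 0 := by
        intro i _
        by_cases h1 : (i:ℕ) < m - l
        · have hnc : ¬ (m - l ≤ (i:ℕ) ∧ (i:ℕ) < k) := by omega
          rw [if_pos h1, if_neg hnc]
          simp
        · by_cases h2 : (i:ℕ) < k
          · have hc : m - l ≤ (i:ℕ) ∧ (i:ℕ) < k := ⟨by omega, h2⟩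
            simp only [if_neg h1, if_pos h2, if_pos hc]
            rw [max_eq_left (by linarith : (0:ℝ) ≤ (b:ℝ) - 1)]
          · have hnc : ¬ (m - l ≤ (i:ℕ) ∧ (i:ℕ) < k) := by omega
            simp [h1, h2, hnc]
      rw [Finset.sum_congr rfl hterm,
        Fin.sum_univ_eq_sum_range (fun i => if (m - l ≤ i ∧ i < k) then q * ((b:ℝ) - 1) else 0) m,
        Finset.sum_ite, Finset.sum_const, Finset.sum_const_zero, add_zero]
      have hfI : (Finset.range m).filter (fun i => m - l ≤ i ∧ i < k) = Finset.Ico (m - l) k := by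
        ext x; simp only [Finset.mem_filter, Finset.mem_range, Finset.mem_Ico]; omega
      rw [hfI, Nat.card_Ico, nsmul_eq_mul, ht]
    rw [hval]
    -- lower bound for arbitrary feasible point
    set S := ∑ i : Fin m, (1 - Real.exp (-p * (dv' i : ℝ))) * max ((du' i : ℝ) - 1) 0 with hS
    have hw : ∀ i : Fin m, 0 ≤ 1 - Real.exp (-p * (dv' i : ℝ)) := by
      intro i
      have : Real.exp (-p * (dv' i : ℝ)) ≤ 1 := by
        rw [Real.exp_le_one_iff]
        have : (0:ℝ) ≤ (dv' i : ℝ) := Nat.cast_nonneg _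
        nlinarith
      linarith
    have hS0 : 0 ≤ S := by
      apply Finset.sum_nonneg
      intro i _
      exact mul_nonneg (hw i) (le_max_right _ _)
    have per : ∀ i ∈ (Finset.univ : Finset (Fin m)),
        q * ((b:ℝ) * max ((du' i : ℝ) - 1) 0 + ((b:ℝ) - 1) * (dv' i : ℝ) - (b:ℝ)*((b:ℝ)-1)) ≤
        (b:ℝ) * ((1 - Real.exp (-p * (dv' i : ℝ))) * max ((du' i : ℝ) - 1) 0) := by
      intro i _
      set c := max ((du' i : ℝ) - 1) 0 with hcdef
      have hc0 : 0 ≤ c := le_max_right _ _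
      have hcb : c ≤ (b:ℝ) - 1 := by
        apply max_le
        · have : (du' i : ℝ) ≤ b := Nat.cast_le.mpr (hu'b i)
          linarith
        · linarith
      have hx0 : (0:ℝ) ≤ (dv' i : ℝ) := Nat.cast_nonneg _
      have hxb : (dv' i : ℝ) ≤ b := Nat.cast_le.mpr (hv'b i)
      have hch := chord_ineq p b (dv' i) hbR hx0 hxb
      have h5 := mul_le_mul_of_nonneg_right hch hc0
      have h6 : (b:ℝ)*c + ((b:ℝ)-1)*(dv' i : ℝ) - (b:ℝ)*((b:ℝ)-1) ≤ (dv' i : ℝ) * c := by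
        nlinarith [mul_nonneg (sub_nonneg.mpr hxb) (sub_nonneg.mpr hcb)]
      have h7 := mul_le_mul_of_nonneg_left h6 hq0
      calc q * ((b:ℝ)*c + ((b:ℝ)-1)*(dv' i : ℝ) - (b:ℝ)*((b:ℝ)-1))
          ≤ q * ((dv' i : ℝ) * c) := h7
        _ = ((dv' i : ℝ) * q) * c := by ring
        _ ≤ ((b:ℝ) * (1 - Real.exp (-p * (dv' i : ℝ)))) * c := h5
        _ = (b:ℝ) * ((1 - Real.exp (-p * (dv' i : ℝ))) * c) := by ring
    have hSsum := Finset.sum_le_sum per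
    have hdvsum : ∑ i : Fin m, (dv' i : ℝ) = (DV:ℝ) := by
      rw [← Nat.cast_sum, hv's]
    have hsum_eq : ∑ i : Fin m,
        q * ((b:ℝ) * max ((du' i : ℝ) - 1) 0 + ((b:ℝ) - 1) * (dv' i : ℝ) - (b:ℝ)*((b:ℝ)-1)) =
        q * ((b:ℝ) * (∑ i : Fin m, max ((du' i : ℝ) - 1) 0) + ((b:ℝ) - 1) * (DV:ℝ)
          - (m:ℝ) * ((b:ℝ)*((b:ℝ)-1))) := by
      rw [← Finset.mul_sum]
      congr 1
      rw [Finset.sum_sub_distrib, Finset.sum_add_distrib, ← Finset.mul_sum, ← Finset.mul_sum,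
        Finset.sum_const, Finset.card_univ, Fintype.card_fin, hdvsum, nsmul_eq_mul]
    have hR : (∑ i : Fin m, (b:ℝ) * ((1 - Real.exp (-p * (dv' i : ℝ))) * max ((du' i : ℝ) - 1) 0))
        = (b:ℝ) * S := by rw [Finset.mul_sum]
    rw [hsum_eq, hR] at hSsum
    have hC : (DU:ℝ) - (m:ℝ) ≤ ∑ i : Fin m, max ((du' i : ℝ) - 1) 0 := by
      have h1 : ∑ i : Fin m, ((du' i : ℝ) - 1) ≤ ∑ i : Fin m, max ((du' i : ℝ) - 1) 0 :=
        Finset.sum_le_sum fun i _ => le_max_left _ _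
      have h2 : ∑ i : Fin m, ((du' i : ℝ) - 1) = (DU:ℝ) - (m:ℝ) := by
        rw [Finset.sum_sub_distrib, ← Nat.cast_sum, hu's, Finset.sum_const, Finset.card_univ,
          Fintype.card_fin, nsmul_eq_mul, mul_one]
      linarith
    have hchain : q * ((b:ℝ) * ((DU:ℝ) - (m:ℝ)) + ((b:ℝ) - 1) * (DV:ℝ)
        - (m:ℝ) * ((b:ℝ)*((b:ℝ)-1))) ≤ (b:ℝ) * S := by
      have hmono : q * ((b:ℝ) * ((DU:ℝ) - (m:ℝ)) + ((b:ℝ) - 1) * (DV:ℝ)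
          - (m:ℝ) * ((b:ℝ)*((b:ℝ)-1))) ≤
          q * ((b:ℝ) * (∑ i : Fin m, max ((du' i : ℝ) - 1) 0) + ((b:ℝ) - 1) * (DV:ℝ)
          - (m:ℝ) * ((b:ℝ)*((b:ℝ)-1))) := by
        nlinarith [mul_nonneg (mul_nonneg hq0 hbR.le)
          (sub_nonneg.mpr hC)]
      linarith
    by_cases hcase : k ≤ m - l
    · have ht0 : t = 0 := by omega
      rw [ht0]
      simpa using hS0
    · have htR : (t:ℝ) = (k:ℝ) + (l:ℝ) - (m:ℝ) := by
        have : t = k + l - m := by omega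
        rw [this]
        have : m ≤ k + l := by omega
        push_cast [Nat.cast_sub this]
        ring
      have hDUr : (DU:ℝ) = (m:ℝ) + ((b:ℝ)-1)*(k:ℝ) := by
        rw [hDU]
        push_cast [Nat.cast_sub (by omega : 1 ≤ b)]
        ring
      have hDVr : (DV:ℝ) = (b:ℝ)*(l:ℝ) := by exact_mod_cast hl
      have h9 : (b:ℝ) * ((t:ℝ) * (q * ((b:ℝ) - 1))) ≤ (b:ℝ) * S := by
        calc (b:ℝ) * ((t:ℝ) * (q * ((b:ℝ) - 1)))
            = q * ((b:ℝ) * ((DU:ℝ) - (m:ℝ)) + ((b:ℝ) - 1) * (DV:ℝ)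
              - (m:ℝ) * ((b:ℝ)*((b:ℝ)-1))) := by
              rw [htR, hDUr, hDVr]; ring
          _ ≤ (b:ℝ) * S := hchain
      exact le_of_mul_le_mul_left h9 hbR
  · by_cases h : (i:ℕ) < k <;> simp [h]
  · by_cases h : (i:ℕ) < m - l <;> simp [h]
end
end

section
/- Let m ≥ 1 and b ≥ 1 be integers, let q ∈ ℝ^m have nonnegative entries, let D be a nonnegative integer, and let d* ∈ {0, 1, …, b}^m minimize Σ_{i=1}^m q_i · max{d_i − 1, 0} over all d ∈ {0, 1, …, b}^m with Σ_i d_i = D. Then for every pair of indices i1 ≠ i2 with q_{i1} > q_{i2}, either d*_{i2} = b or d*_{i1} ≤ 1. -/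
open scoped Classical symmDiff
open Real

noncomputable section

theorem minimizer_shift_u (m b : ℕ) (hm : 1 ≤ m) (hb : 1 ≤ b)
    (q : Fin m → ℝ) (hq : ∀ i, 0 ≤ q i) (D : ℕ)
    (dstar : Fin m → ℕ) (hle : ∀ i, dstar i ≤ b) (hsum : (∑ i, dstar i) = D)
    (hmin : ∀ d : Fin m → ℕ, (∀ i, d i ≤ b) → (∑ i, d i) = D →
      (∑ i, q i * max ((dstar i : ℝ) - 1) 0) ≤ ∑ i, q i * max ((d i : ℝ) - 1) 0) :
    ∀ i1 i2 : Fin m, i1 ≠ i2 → q i2 < q i1 → dstar i2 = b ∨ dstar i1 ≤ 1 := by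
  intro i1 i2 hne hq12
  by_contra hcon
  push_neg at hcon
  obtain ⟨h2b, h1ge⟩ := hcon
  have ha : 2 ≤ dstar i1 := by omega
  have hc : dstar i2 < b := lt_of_le_of_ne (hle i2) h2b
  set d : Fin m → ℕ := fun i => if i = i1 then dstar i1 - 1 else if i = i2 then dstar i2 + 1 else dstar i with hd
  have hdle : ∀ i, d i ≤ b := by
    intro i
    simp only [hd]
    split_ifs with h h
    · have := hle i1; omega
    · omega
    · exact hle i
  have hsplit : ∀ f : Fin m → ℕ, ∑ i, f i = f i1 + (f i2 + ∑ i ∈ (Finset.univ.erase i1).erase i2, f i) := by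
    intro f
    rw [Finset.add_sum_erase _ f (by simp [hne.symm]), Finset.add_sum_erase _ f (by simp)]
  have hsplitR : ∀ f : Fin m → ℝ, ∑ i, f i = f i1 + (f i2 + ∑ i ∈ (Finset.univ.erase i1).erase i2, f i) := by
    intro f
    rw [Finset.add_sum_erase _ f (by simp [hne.symm]), Finset.add_sum_erase _ f (by simp)]
  have hagree : ∀ i ∈ (Finset.univ.erase i1).erase i2, d i = dstar i := by
    intro i hi
    simp only [Finset.mem_erase] at hi
    simp [hd, hi.1, hi.2.1]
  have hd1 : d i1 = dstar i1 - 1 := by simp [hd]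
  have hd2 : d i2 = dstar i2 + 1 := by simp [hd, hne.symm]
  have hdsum : ∑ i, d i = D := by
    rw [hsplit d, Finset.sum_congr rfl hagree, hd1, hd2]
    rw [hsplit dstar] at hsum
    have hsum' : dstar i1 + (dstar i2 + ((Finset.univ.erase i1).erase i2).sum dstar) = D := hsum
    omega
  have hlt : (∑ i, q i * max ((d i : ℝ) - 1) 0) < ∑ i, q i * max ((dstar i : ℝ) - 1) 0 := by
    rw [hsplitR (fun i => q i * max ((d i : ℝ) - 1) 0),
        hsplitR (fun i => q i * max ((dstar i : ℝ) - 1) 0)]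
    have heq : ∑ i ∈ (Finset.univ.erase i1).erase i2, q i * max ((d i : ℝ) - 1) 0
        = ∑ i ∈ (Finset.univ.erase i1).erase i2, q i * max ((dstar i : ℝ) - 1) 0 := by
      refine Finset.sum_congr rfl fun i hi => ?_
      rw [hagree i hi]
    rw [heq]
    simp only [hd1, hd2]
    have e1 : max ((↑(dstar i1 - 1) : ℝ) - 1) 0 = (dstar i1 : ℝ) - 2 := by
      rw [max_eq_left]
      · push_cast [Nat.cast_sub (by omega : 1 ≤ dstar i1)]; ring
      · push_cast [Nat.cast_sub (by omega : 1 ≤ dstar i1)]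
        have : (2:ℝ) ≤ (dstar i1 : ℝ) := by exact_mod_cast ha
        linarith
    have e2 : max ((↑(dstar i2 + 1) : ℝ) - 1) 0 = (dstar i2 : ℝ) := by
      rw [max_eq_left] <;> push_cast
      · ring
      · linarith [Nat.cast_nonneg (α := ℝ) (dstar i2)]
    have e3 : max ((dstar i1 : ℝ) - 1) 0 = (dstar i1 : ℝ) - 1 := by
      rw [max_eq_left]
      have : (2:ℝ) ≤ (dstar i1 : ℝ) := by exact_mod_cast ha
      linarith
    rw [e1, e2, e3]
    have hM1 : (dstar i2 : ℝ) - 1 ≤ max ((dstar i2 : ℝ) - 1) 0 := le_max_left _ _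
    have hM0 : (0:ℝ) ≤ max ((dstar i2 : ℝ) - 1) 0 := le_max_right _ _
    nlinarith [hq i2, mul_le_mul_of_nonneg_left hM1 (hq i2)]
  exact absurd (hmin d hdle hdsum) (not_le.mpr hlt)
end
end

section
/- Let p > 0, let m ≥ 1 and b ≥ 1 be integers, let D be a nonnegative integer, and let d* ∈ {0, 1, …, b}^m minimize Σ_{i=1}^m (1 − e^{−p·d_i}) over all d ∈ {0, 1, …, b}^m with Σ_i d_i = D. Then for every pair of indices i1, i2, either min{d*_{i1}, d*_{i2}} = 0 or max{d*_{i1}, d*_{i2}} = b. -/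
open scoped Classical symmDiff
open Real

noncomputable section

lemma sum_split' {M : Type*} [AddCommMonoid M] {m : ℕ} (i1 i2 : Fin m) (hne : i1 ≠ i2)
    (g : Fin m → M) :
    ∑ i, g i = g i1 + g i2 + ∑ i ∈ (Finset.univ.erase i1).erase i2, g i := by
  rw [← Finset.add_sum_erase _ g (Finset.mem_univ i1),
    ← Finset.add_sum_erase _ g (Finset.mem_erase.2 ⟨hne.symm, Finset.mem_univ i2⟩), add_assoc]

lemma key_aux (p : ℝ) (hp : 0 < p) (m b : ℕ) (D : ℕ) (dstar : Fin m → ℕ)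
    (hle : ∀ i, dstar i ≤ b) (hsum : (∑ i, dstar i) = D)
    (hmin : ∀ d : Fin m → ℕ, (∀ i, d i ≤ b) → (∑ i, d i) = D →
      (∑ i, (1 - Real.exp (-p * (dstar i : ℝ)))) ≤ ∑ i, (1 - Real.exp (-p * (d i : ℝ))))
    (i1 i2 : Fin m) (hne : i1 ≠ i2) (hord : dstar i1 ≤ dstar i2) :
    dstar i1 = 0 ∨ dstar i2 = b := by
  by_contra h
  push_neg at h
  obtain ⟨h1, h2⟩ := h
  have ha : 1 ≤ dstar i1 := Nat.one_le_iff_ne_zero.2 h1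
  have hc : dstar i2 + 1 ≤ b := lt_of_le_of_ne (hle i2) h2
  set d : Fin m → ℕ :=
    Function.update (Function.update dstar i1 (dstar i1 - 1)) i2 (dstar i2 + 1) with hd
  have hd2 : d i2 = dstar i2 + 1 := Function.update_self _ _ _
  have hd1 : d i1 = dstar i1 - 1 := by
    rw [hd, Function.update_of_ne hne, Function.update_self]
  have hdo : ∀ i, i ≠ i1 → i ≠ i2 → d i = dstar i := by
    intro i hi1 hi2
    rw [hd, Function.update_of_ne hi2, Function.update_of_ne hi1]
  have hdle : ∀ i, d i ≤ b := by
    intro i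
    by_cases e2 : i = i2
    · rw [e2, hd2]; exact hc
    by_cases e1 : i = i1
    · rw [e1, hd1]; exact le_trans (Nat.sub_le _ _) (hle i1)
    · rw [hdo i e1 e2]; exact hle i
  have hdsum : (∑ i, d i) = D := by
    have e : ∑ i ∈ (Finset.univ.erase i1).erase i2, d i
        = ∑ i ∈ (Finset.univ.erase i1).erase i2, dstar i :=
      Finset.sum_congr rfl (fun i hi => hdo i
        (Finset.ne_of_mem_erase (Finset.mem_of_mem_erase hi))
        (Finset.ne_of_mem_erase hi))
    rw [sum_split' i1 i2 hne d, e, hd1, hd2, ← hsum, sum_split' i1 i2 hne dstar]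
    omega
  have hlt : (∑ i, (1 - Real.exp (-p * (d i : ℝ)))) <
      ∑ i, (1 - Real.exp (-p * (dstar i : ℝ))) := by
    rw [sum_split' i1 i2 hne, sum_split' i1 i2 hne (fun i => (1 - Real.exp (-p * (dstar i : ℝ))))]
    have heq : ∀ i ∈ (Finset.univ.erase i1).erase i2,
        (1 - Real.exp (-p * (d i : ℝ))) = (1 - Real.exp (-p * (dstar i : ℝ))) := by
      intro i hi
      rw [hdo i (Finset.ne_of_mem_erase (Finset.mem_of_mem_erase hi)) (Finset.ne_of_mem_erase hi)]
    rw [Finset.sum_congr rfl heq]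
    have hcast1 : ((d i1 : ℕ) : ℝ) = (dstar i1 : ℝ) - 1 := by
      rw [hd1]; push_cast [Nat.cast_sub ha]; ring
    have hcast2 : ((d i2 : ℕ) : ℝ) = (dstar i2 : ℝ) + 1 := by
      rw [hd2]; push_cast; ring
    rw [hcast1, hcast2]
    set a : ℝ := (dstar i1 : ℝ)
    set c : ℝ := (dstar i2 : ℝ)
    have hac : a ≤ c := by unfold a c; exact_mod_cast hord
    have e1 : Real.exp (-p * (a - 1)) = Real.exp (-p * a) * Real.exp p := by
      rw [← Real.exp_add]; ring_nf
    have e2 : Real.exp (-p * (c + 1)) = Real.exp (-p * c) * Real.exp (-p) := by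
      rw [← Real.exp_add]; ring_nf
    have hE : 1 < Real.exp p := by simpa using Real.exp_lt_exp.2 hp
    have hEe : Real.exp p * Real.exp (-p) = 1 := by
      rw [← Real.exp_add]; simp
    have hgt : Real.exp (-p * c) * Real.exp (-p) < Real.exp (-p * a) := by
      rw [← Real.exp_add, Real.exp_lt_exp]
      nlinarith
    nlinarith [mul_pos (sub_pos.2 hE) (sub_pos.2 hgt), Real.exp_pos (-p * c),
      Real.exp_pos (-p * a), Real.exp_pos (-p)]
  exact absurd (hmin d hdle hdsum) (not_le.2 hlt)

theorem minimizer_shift_v (p : ℝ) (hp : 0 < p) (m b : ℕ) (hm : 1 ≤ m) (hb : 1 ≤ b)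
    (D : ℕ)
    (dstar : Fin m → ℕ) (hle : ∀ i, dstar i ≤ b) (hsum : (∑ i, dstar i) = D)
    (hmin : ∀ d : Fin m → ℕ, (∀ i, d i ≤ b) → (∑ i, d i) = D →
      (∑ i, (1 - Real.exp (-p * (dstar i : ℝ)))) ≤ ∑ i, (1 - Real.exp (-p * (d i : ℝ)))) :
    ∀ i1 i2 : Fin m, i1 ≠ i2 →
      min (dstar i1) (dstar i2) = 0 ∨ max (dstar i1) (dstar i2) = b := by
  intro i1 i2 hne
  rcases le_total (dstar i1) (dstar i2) with hord | hord
  · rcases key_aux p hp m b D dstar hle hsum hmin i1 i2 hne hord with h | h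
    · left; omega
    · right; omega
  · rcases key_aux p hp m b D dstar hle hsum hmin i2 i1 hne.symm hord with h | h
    · left; omega
    · right; omega
end
end

section
/- Let p ∈ (0,1), ε ≥ 0, and let t > 0 be a real number. Let G be a finite simple graph, let M be a maximum matching of G with |M| ≥ t, and let M' be a matching in G, edge-disjoint from M, whose size equals (1/2 − p²/4 − ε)·t (assumed to be a nonnegative integer). If each edge of M is realized independently with probability p, then the expected maximum matching size of the graph consisting of M' together with the realized edges of M is at least (1/2 + p²/4 − ε)·t. -/
open scoped Classical symmDiff
open Real

noncomputable section

/-- Binomial normalization: the weights of a `p`-realization sum to `1`. -/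
lemma binom_sum {X : Type*} [DecidableEq X] (p : ℝ) (A : Finset X) :
    ∑ S ∈ A.powerset, p ^ S.card * (1 - p) ^ (A.card - S.card) = 1 := by
  calc ∑ S ∈ A.powerset, p ^ S.card * (1 - p) ^ (A.card - S.card)
      = ∑ S ∈ A.powerset, (∏ _i ∈ S, p) * ∏ _i ∈ A \ S, (1 - p) := by
        apply Finset.sum_congr rfl
        intro S hS
        rw [Finset.mem_powerset] at hS
        rw [Finset.prod_const, Finset.prod_const, Finset.card_sdiff_of_subset hS]
    _ = ∏ _i ∈ A, (p + (1 - p)) := (Finset.prod_add _ _ _).symm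
    _ = 1 := by simp

/-- The probability that a `p`-realization avoids a fixed set `T` of edges. -/
lemma sum_avoid {X : Type*} [DecidableEq X] (p : ℝ) (A T : Finset X) (hT : T ⊆ A) :
    ∑ S ∈ A.powerset, (if Disjoint S T then p ^ S.card * (1 - p) ^ (A.card - S.card) else 0)
      = (1 - p) ^ T.card := by
  rw [← Finset.sum_filter]
  have hset : A.powerset.filter (fun S => Disjoint S T) = (A \ T).powerset := by
    ext S
    simp only [Finset.mem_filter, Finset.mem_powerset, Finset.subset_sdiff]
  rw [hset]
  have key2 : ∀ S ∈ (A \ T).powerset, p ^ S.card * (1 - p) ^ (A.card - S.card)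
      = (1 - p) ^ T.card * (p ^ S.card * (1 - p) ^ ((A \ T).card - S.card)) := by
    intro S hS
    rw [Finset.mem_powerset] at hS
    have h1 : S.card ≤ (A \ T).card := Finset.card_le_card hS
    have h2 : (A \ T).card = A.card - T.card := Finset.card_sdiff_of_subset hT
    have h3 : T.card ≤ A.card := Finset.card_le_card hT
    have h4 : A.card - S.card = T.card + ((A \ T).card - S.card) := by omega
    rw [h4, pow_add]; ring
  rw [Finset.sum_congr rfl key2, ← Finset.mul_sum, binom_sum, mul_one]

theorem augment_maximum_matching {V : Type*} [Fintype V] [DecidableEq V]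
    (p : ℝ) (hp : 0 < p) (hp1 : p < 1) (ε : ℝ) (hε : 0 ≤ ε)
    (t : ℝ) (ht : 0 < t)
    (E M M' : Finset (Sym2 V)) (hE : EdgeSimple E)
    (hME : M ⊆ E) (hMm : IsMatchingSet M)
    (hmax : ∀ N : Finset (Sym2 V), N ⊆ E → IsMatchingSet N → N.card ≤ M.card)
    (hMt : t ≤ (M.card : ℝ))
    (hM'E : M' ⊆ E) (hM'm : IsMatchingSet M') (hdisj : Disjoint M M')
    (hM'card : (M'.card : ℝ) = (1 / 2 - p ^ 2 / 4 - ε) * t) :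
    (1 / 2 + p ^ 2 / 4 - ε) * t ≤
      ∑ S ∈ M.powerset,
        p ^ S.card * (1 - p) ^ (M.card - S.card) * (matchNum (M' ∪ S) : ℝ) := by
  have hp0 : (0:ℝ) ≤ p := hp.le
  have hq0 : (0:ℝ) ≤ 1 - p := by linarith
  -- the set of edges of `M` touching a given edge `g`
  set T : Sym2 V → Finset (Sym2 V) := fun g => M.filter (fun e => ∃ v ∈ g, v ∈ e) with hTdef
  have hTsub : ∀ g, T g ⊆ M := fun g => Finset.filter_subset _ _
  -- each edge touches at most two edges of the matching `M`
  have hTcard : ∀ g, (T g).card ≤ 2 := by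
    intro g
    induction g using Sym2.inductionOn with
    | hf x y =>
      have hsub : T s(x, y) ⊆ (M.filter fun e => x ∈ e) ∪ (M.filter fun e => y ∈ e) := by
        intro e he
        simp only [hTdef, Finset.mem_filter, Sym2.mem_iff] at he
        obtain ⟨heM, v, hv, hve⟩ := he
        rcases hv with rfl | rfl
        · exact Finset.mem_union_left _ (Finset.mem_filter.2 ⟨heM, hve⟩)
        · exact Finset.mem_union_right _ (Finset.mem_filter.2 ⟨heM, hve⟩)
      have h1 : ∀ z : V, (M.filter fun e => z ∈ e).card ≤ 1 := by
        intro z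
        apply Finset.card_le_one.2
        intro a ha b hb
        rw [Finset.mem_filter] at ha hb
        by_contra hab
        exact hMm.2 a ha.1 b hb.1 hab z ha.2 hb.2
      calc (T s(x, y)).card ≤ ((M.filter fun e => x ∈ e) ∪ (M.filter fun e => y ∈ e)).card :=
            Finset.card_le_card hsub
        _ ≤ (M.filter fun e => x ∈ e).card + (M.filter fun e => y ∈ e).card :=
            Finset.card_union_le _ _
        _ ≤ 2 := by have := h1 x; have := h1 y; omega
  -- pointwise bound: realized edges plus untouched M'-edges form a matching
  have key : ∀ S ∈ M.powerset,
      S.card + (M'.filter fun g => ∀ e ∈ S, ∀ v ∈ g, v ∉ e).card ≤ matchNum (M' ∪ S) := by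
    intro S hS
    rw [Finset.mem_powerset] at hS
    set F := M'.filter (fun g => ∀ e ∈ S, ∀ v ∈ g, v ∉ e) with hFdef
    have hFM' : F ⊆ M' := Finset.filter_subset _ _
    have hdSF : Disjoint S F := hdisj.mono hS hFM'
    have hN : IsMatchingSet (S ∪ F) := by
      constructor
      · intro e he
        rcases Finset.mem_union.1 he with h | h
        · exact hMm.1 e (hS h)
        · exact hM'm.1 e (hFM' h)
      · intro e he f hf hef v hv
        rcases Finset.mem_union.1 he with he' | he' <;>
          rcases Finset.mem_union.1 hf with hf' | hf'
        · exact hMm.2 e (hS he') f (hS hf') hef v hv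
        · intro hvf
          exact (Finset.mem_filter.1 hf').2 e he' v hvf hv
        · exact (Finset.mem_filter.1 he').2 f hf' v hv
        · exact hM'm.2 e (hFM' he') f (hFM' hf') hef v hv
    have hsub : S ∪ F ⊆ M' ∪ S := by
      intro x hx
      rcases Finset.mem_union.1 hx with h | h
      · exact Finset.mem_union_right _ h
      · exact Finset.mem_union_left _ (hFM' h)
    have hmem : (S ∪ F) ∈ ((M' ∪ S).powerset.filter fun N => IsMatchingSet N) :=
      Finset.mem_filter.2 ⟨Finset.mem_powerset.2 hsub, hN⟩
    have hle := Finset.le_sup (f := Finset.card) hmem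
    rwa [Finset.card_union_of_disjoint hdSF] at hle
  -- expected value computation
  have step1 : ∑ S ∈ M.powerset, p ^ S.card * (1 - p) ^ (M.card - S.card) *
        ((S.card : ℝ) + ((M'.filter fun g => ∀ e ∈ S, ∀ v ∈ g, v ∉ e).card : ℝ))
      ≤ ∑ S ∈ M.powerset,
        p ^ S.card * (1 - p) ^ (M.card - S.card) * (matchNum (M' ∪ S) : ℝ) := by
    apply Finset.sum_le_sum
    intro S hS
    have hw : (0:ℝ) ≤ p ^ S.card * (1 - p) ^ (M.card - S.card) :=
      mul_nonneg (pow_nonneg hp0 _) (pow_nonneg hq0 _)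
    apply mul_le_mul_of_nonneg_left _ hw
    exact_mod_cast key S hS
  -- split the left sum
  have split : ∑ S ∈ M.powerset, p ^ S.card * (1 - p) ^ (M.card - S.card) *
        ((S.card : ℝ) + ((M'.filter fun g => ∀ e ∈ S, ∀ v ∈ g, v ∉ e).card : ℝ))
      = (∑ S ∈ M.powerset, p ^ S.card * (1 - p) ^ (M.card - S.card) * (S.card : ℝ))
        + ∑ S ∈ M.powerset, p ^ S.card * (1 - p) ^ (M.card - S.card) *
            ((M'.filter fun g => ∀ e ∈ S, ∀ v ∈ g, v ∉ e).card : ℝ) := by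
    rw [← Finset.sum_add_distrib]
    exact Finset.sum_congr rfl fun S _ => by ring
  -- first sum equals p * |M|
  have sumA : ∑ S ∈ M.powerset, p ^ S.card * (1 - p) ^ (M.card - S.card) * (S.card : ℝ)
      = p * M.card := by
    have hcard : ∀ S ∈ M.powerset,
        p ^ S.card * (1 - p) ^ (M.card - S.card) * (S.card : ℝ)
        = ∑ e ∈ M, (if e ∈ S then p ^ S.card * (1 - p) ^ (M.card - S.card) else 0) := by
      intro S hS
      rw [Finset.mem_powerset] at hS
      rw [Finset.sum_ite_mem, Finset.inter_eq_right.2 hS, Finset.sum_const, nsmul_eq_mul]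
      ring
    rw [Finset.sum_congr rfl hcard, Finset.sum_comm]
    have inner : ∀ e ∈ M,
        ∑ S ∈ M.powerset, (if e ∈ S then p ^ S.card * (1 - p) ^ (M.card - S.card) else 0)
        = p := by
      intro e he
      have h1 : ∀ S ∈ M.powerset,
          (if e ∈ S then p ^ S.card * (1 - p) ^ (M.card - S.card) else 0)
          = p ^ S.card * (1 - p) ^ (M.card - S.card)
            - (if Disjoint S {e} then p ^ S.card * (1 - p) ^ (M.card - S.card) else 0) := by
        intro S hS
        by_cases hc : e ∈ S
        · rw [if_pos hc, if_neg, sub_zero]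
          rw [Finset.disjoint_singleton_right]
          exact fun h => h hc
        · rw [if_neg hc, if_pos (Finset.disjoint_singleton_right.2 hc), sub_self]
      rw [Finset.sum_congr rfl h1, Finset.sum_sub_distrib, binom_sum,
        sum_avoid p M {e} (Finset.singleton_subset_iff.2 he), Finset.card_singleton, pow_one]
      ring
    rw [Finset.sum_congr rfl inner, Finset.sum_const, nsmul_eq_mul]
    ring
  -- second sum is at least |M'| * (1-p)^2
  have sumB : (M'.card : ℝ) * (1 - p) ^ 2
      ≤ ∑ S ∈ M.powerset, p ^ S.card * (1 - p) ^ (M.card - S.card) *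
          ((M'.filter fun g => ∀ e ∈ S, ∀ v ∈ g, v ∉ e).card : ℝ) := by
    have hrw : ∀ S ∈ M.powerset,
        p ^ S.card * (1 - p) ^ (M.card - S.card) *
          ((M'.filter fun g => ∀ e ∈ S, ∀ v ∈ g, v ∉ e).card : ℝ)
        = ∑ g ∈ M',
            (if Disjoint S (T g) then p ^ S.card * (1 - p) ^ (M.card - S.card) else 0) := by
      intro S hS
      rw [Finset.mem_powerset] at hS
      have hiff : ∀ g, ((∀ e ∈ S, ∀ v ∈ g, v ∉ e) ↔ Disjoint S (T g)) := by
        intro g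
        constructor
        · intro h
          rw [Finset.disjoint_left]
          intro e heS heT
          simp only [hTdef, Finset.mem_filter] at heT
          obtain ⟨-, v, hvg, hve⟩ := heT
          exact h e heS v hvg hve
        · intro h e heS v hvg hve
          have heT : e ∈ T g := by
            simp only [hTdef, Finset.mem_filter]
            exact ⟨hS heS, v, hvg, hve⟩
          exact (Finset.disjoint_left.1 h) heS heT
      rw [Finset.card_filter]
      push_cast
      rw [Finset.mul_sum]
      apply Finset.sum_congr rfl
      intro g _
      by_cases hc : ∀ e ∈ S, ∀ v ∈ g, v ∉ e
      · rw [if_pos hc, if_pos ((hiff g).1 hc), mul_one]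
      · rw [if_neg hc, if_neg (fun h => hc ((hiff g).2 h)), mul_zero]
    rw [Finset.sum_congr rfl hrw, Finset.sum_comm]
    have hg : ∀ g ∈ M',
        (1 - p) ^ 2 ≤ ∑ S ∈ M.powerset,
          (if Disjoint S (T g) then p ^ S.card * (1 - p) ^ (M.card - S.card) else 0) := by
      intro g _
      rw [sum_avoid p M (T g) (hTsub g)]
      exact pow_le_pow_of_le_one hq0 (by linarith) (hTcard g)
    calc (M'.card : ℝ) * (1 - p) ^ 2 = ∑ _g ∈ M', (1 - p) ^ 2 := by
          rw [Finset.sum_const, nsmul_eq_mul]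
      _ ≤ _ := Finset.sum_le_sum hg
  -- final arithmetic
  have hMle : p * t ≤ p * (M.card : ℝ) := by
    exact mul_le_mul_of_nonneg_left hMt hp0
  have hinner : (0:ℝ) ≤ p ^ 2 / 2 - p ^ 3 / 4 + ε * (2 - p) := by
    nlinarith [mul_nonneg hε (by linarith : (0:ℝ) ≤ 2 - p),
      mul_nonneg (mul_nonneg hp0 hp0) (by linarith : (0:ℝ) ≤ 2 - p)]
  have hfinal : (1 / 2 + p ^ 2 / 4 - ε) * t
      ≤ p * t + ((1 / 2 - p ^ 2 / 4 - ε) * t) * (1 - p) ^ 2 := by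
    nlinarith [mul_nonneg (mul_nonneg ht.le hp0) hinner]
  calc (1 / 2 + p ^ 2 / 4 - ε) * t
      ≤ p * t + ((1 / 2 - p ^ 2 / 4 - ε) * t) * (1 - p) ^ 2 := hfinal
    _ ≤ p * (M.card : ℝ) + (M'.card : ℝ) * (1 - p) ^ 2 := by
        rw [hM'card]; linarith
    _ ≤ (∑ S ∈ M.powerset, p ^ S.card * (1 - p) ^ (M.card - S.card) * (S.card : ℝ))
        + ∑ S ∈ M.powerset, p ^ S.card * (1 - p) ^ (M.card - S.card) *
            ((M'.filter fun g => ∀ e ∈ S, ∀ v ∈ g, v ∉ e).card : ℝ) := by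
        rw [sumA]; linarith [sumB]
    _ = _ := split.symm
    _ ≤ _ := step1
end
end

section
/- Let M be a maximum matching and M' any matching in a finite simple graph G. In the symmetric difference M △ M', let α1, α3, and α_{≥5} denote the numbers of connected components that are augmenting paths for M' of length 1, of length 3, and of length at least 5, respectively. Then α3 + 2·α_{≥5} ≤ |M'| and α1 + α3 + α_{≥5} = |M| − |M'|. -/
open scoped Classical symmDiff
open Real

noncomputable section

/-- `P` is a connected component of the symmetric difference `M ∆ M'` that is an
augmenting path of length `k` for `M'`: its edges form a (simple) path on `k + 1`
distinct vertices, edges at even positions belong to `M` and edges at odd positions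
belong to `M'`, and its two endpoint vertices are not covered by `M'`. -/
def IsAugPathComp {V : Type*} [DecidableEq V] (M M' P : Finset (Sym2 V)) (k : ℕ) : Prop :=
  P ⊆ M ∆ M' ∧
  (∀ e ∈ M ∆ M', e ∉ P → ∀ w : V, w ∈ e → ∀ g ∈ P, w ∉ g) ∧
  ∃ w : Fin (k + 1) → V, Function.Injective w ∧
    P = Finset.image (fun i : Fin k => s(w i.castSucc, w i.succ)) Finset.univ ∧
    (∀ i : Fin k, (i : ℕ) % 2 = 0 → s(w i.castSucc, w i.succ) ∈ M) ∧
    (∀ i : Fin k, (i : ℕ) % 2 = 1 → s(w i.castSucc, w i.succ) ∈ M') ∧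
    (∀ e ∈ M', w 0 ∉ e) ∧ (∀ e ∈ M', w (Fin.last k) ∉ e)

set_option linter.unusedSectionVars false
set_option linter.unusedVariables false
section aux
section helpers
variable {V : Type*} [DecidableEq V]

lemma match_unique {M : Finset (Sym2 V)} (hM : IsMatchingSet M)
    {e f : Sym2 V} (he : e ∈ M) (hf : f ∈ M) {v : V} (hve : v ∈ e) (hvf : v ∈ f) : e = f := by
  by_contra h
  exact hM.2 e he f hf h v hve hvf

lemma sym2_cancel {a b c : V} (h : s(a, c) = s(b, c)) : a = b := by
  rw [Sym2.eq_iff] at h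
  rcases h with ⟨h1, -⟩ | ⟨h1, h2⟩ <;> [exact h1; exact h1.trans h2]

lemma sym2_other {e : Sym2 V} {v : V} (hv : v ∈ e) : ∃ u, e = s(v, u) := by
  induction e with
  | _ a b =>
    rcases Sym2.mem_iff.1 hv with rfl | rfl
    · exact ⟨b, rfl⟩
    · exact ⟨a, Sym2.eq_swap⟩

/-- An alternating path for the pair `(M, M')`, starting at a vertex uncovered
by `M'`, with edges at even positions in `M \ M'` and odd positions in `M' \ M`. -/
def AltP (M M' : Finset (Sym2 V)) (k : ℕ) (w : ℕ → V) : Prop :=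
  (∀ i j, i ≤ k → j ≤ k → w i = w j → i = j) ∧
  (∀ i, i < k → i % 2 = 0 → s(w i, w (i+1)) ∈ M ∧ s(w i, w (i+1)) ∉ M') ∧
  (∀ i, i < k → i % 2 = 1 → s(w i, w (i+1)) ∈ M' ∧ s(w i, w (i+1)) ∉ M) ∧
  (∀ e ∈ M', w 0 ∉ e)

variable {M M' : Finset (Sym2 V)}

lemma altp_extend (hMm : IsMatchingSet M) (hM'm : IsMatchingSet M')
    {k : ℕ} {w : ℕ → V} (h : AltP M M' k w) {f : Sym2 V}
    (hfX : (k % 2 = 0 ∧ f ∈ M) ∨ (k % 2 = 1 ∧ f ∈ M')) (hwk : w k ∈ f) :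
    ∃ w' : ℕ → V, AltP M M' (k + 1) w' ∧ ∀ i ≤ k, w' i = w i := by
  obtain ⟨hinj, hev, hod, hw0⟩ := h
  obtain ⟨u, rfl⟩ := sym2_other hwk
  -- u is distinct from w k
  have hund : u ≠ w k := by
    rcases hfX with ⟨-, hfM⟩ | ⟨-, hfM⟩
    · intro hu; exact hMm.1 _ hfM (by simp [Sym2.isDiag_iff_proj_eq, hu])
    · intro hu; exact hM'm.1 _ hfM (by simp [Sym2.isDiag_iff_proj_eq, hu])
  -- f is in exactly one of M, M'
  have hfXY : (k % 2 = 0 ∧ s(w k, u) ∈ M ∧ s(w k, u) ∉ M') ∨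
      (k % 2 = 1 ∧ s(w k, u) ∈ M' ∧ s(w k, u) ∉ M) := by
    rcases hfX with ⟨hk2, hfM⟩ | ⟨hk2, hfM⟩
    · refine Or.inl ⟨hk2, hfM, ?_⟩
      intro hfM'
      rcases Nat.eq_zero_or_pos k with rfl | hk1
      · exact hw0 _ hfM' (by simp)
      · have hk1' : k - 1 < k := by omega
        have hod' := hod (k - 1) hk1' (by omega)
        have : s(w (k-1), w (k-1+1)) = s(w k, u) :=
          match_unique hM'm hod'.1 hfM' (v := w k) (by rw [show k - 1 + 1 = k by omega]; simp) (by simp)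
        exact hod'.2 (this ▸ hfM)
    · refine Or.inr ⟨hk2, hfM, ?_⟩
      intro hfM2
      have hk1' : k - 1 < k := by omega
      have hev' := hev (k - 1) hk1' (by omega)
      have : s(w (k-1), w (k-1+1)) = s(w k, u) :=
        match_unique hMm hev'.1 hfM2 (v := w k) (by rw [show k - 1 + 1 = k by omega]; simp) (by simp)
      exact hev'.2 (this ▸ hfM)
  -- freshness of u
  have hfresh : ∀ i ≤ k, u ≠ w i := by
    intro i hik hu
    rcases Nat.lt_or_ge i k with hik' | hik'
    swap
    · exact hund (by rw [hu]; congr 1; omega)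
    -- i < k, so k ≥ 1
    rcases hfXY with ⟨hk2, hfM, hfM'⟩ | ⟨hk2, hfM, hfM'⟩
    · -- f ∈ M \ M'; the M-edge at w i has even index
      rcases Nat.eq_zero_or_pos i with rfl | hi1
      · -- i = 0 : w 0's unique M-edge is e₀
        have he0 := hev 0 (by omega) (by omega)
        have : s(w 0, w 1) = s(w k, u) :=
          match_unique hMm he0.1 hfM (v := w 0) (by simp) (by rw [← hu]; simp)
        have hwk01 : w k = w 0 ∨ w k = w 1 := by
          have : w k ∈ s(w 0, w 1) := by rw [this]; simp
          simpa using this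
        rcases hwk01 with h1 | h1
        · have := hinj k 0 le_rfl (by omega) h1; omega
        · have := hinj k 1 le_rfl (by omega) h1; omega
      · -- 0 < i < k : the incident M-edge has even index j ∈ {i-1, i}
        by_cases hpar : i % 2 = 0
        · have hej := hev i hik' hpar
          have heq : s(w i, w (i+1)) = s(w k, u) :=
            match_unique hMm hej.1 hfM (v := w i) (by simp) (by rw [← hu]; simp)
          have hwkj : w k = w i ∨ w k = w (i+1) := by
            have : w k ∈ s(w i, w (i+1)) := by rw [heq]; simp
            simpa using this
          rcases hwkj with h1 | h1
          · have := hinj k i le_rfl (by omega) h1; omega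
          · have := hinj k (i+1) le_rfl (by omega) h1; omega
        · have hej := hev (i-1) (by omega) (by omega)
          have hwiej : w i ∈ s(w (i-1), w (i-1+1)) := by
            rw [show i - 1 + 1 = i by omega]; simp
          have heq : s(w (i-1), w (i-1+1)) = s(w k, u) :=
            match_unique hMm hej.1 hfM (v := w i) hwiej (by rw [← hu]; simp)
          have hwkj : w k = w (i-1) ∨ w k = w (i-1+1) := by
            have : w k ∈ s(w (i-1), w (i-1+1)) := by rw [heq]; simp
            simpa using this
          rcases hwkj with h1 | h1
          · have := hinj k (i-1) le_rfl (by omega) h1; omega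
          · have := hinj k (i-1+1) le_rfl (by omega) h1; omega
    · -- f ∈ M' \ M
      rcases Nat.eq_zero_or_pos i with rfl | hi1
      · exact hw0 _ hfM (by rw [← hu]; simp)
      · by_cases hpar : i % 2 = 1
        · have hej := hod i hik' hpar
          have heq : s(w i, w (i+1)) = s(w k, u) :=
            match_unique hM'm hej.1 hfM (v := w i) (by simp) (by rw [← hu]; simp)
          have hwkj : w k = w i ∨ w k = w (i+1) := by
            have : w k ∈ s(w i, w (i+1)) := by rw [heq]; simp
            simpa using this
          rcases hwkj with h1 | h1
          · have := hinj k i le_rfl (by omega) h1; omega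
          · have := hinj k (i+1) le_rfl (by omega) h1; omega
        · have hej := hod (i-1) (by omega) (by omega)
          have hwiej : w i ∈ s(w (i-1), w (i-1+1)) := by
            rw [show i - 1 + 1 = i by omega]; simp
          have heq : s(w (i-1), w (i-1+1)) = s(w k, u) :=
            match_unique hM'm hej.1 hfM (v := w i) hwiej (by rw [← hu]; simp)
          have hwkj : w k = w (i-1) ∨ w k = w (i-1+1) := by
            have : w k ∈ s(w (i-1), w (i-1+1)) := by rw [heq]; simp
            simpa using this
          rcases hwkj with h1 | h1
          · have := hinj k (i-1) le_rfl (by omega) h1; omega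
          · have := hinj k (i-1+1) le_rfl (by omega) h1; omega
  -- define the extended path
  refine ⟨fun i => if i ≤ k then w i else u, ⟨?_, ?_, ?_, ?_⟩, fun i hik => by simp [hik]⟩
  · intro i j hik hjk hww
    rcases Nat.lt_or_ge i (k+1) with hi | hi <;> rcases Nat.lt_or_ge j (k+1) with hj | hj
    · exact hinj i j (by omega) (by omega) (by simpa [show i ≤ k by omega, show j ≤ k by omega] using hww)
    · have hj' : j = k + 1 := by omega
      simp only [show i ≤ k by omega, if_pos, hj', show ¬ (k+1 ≤ k) by omega, if_neg] at hww
      exact absurd (by simpa [show i ≤ k by omega] using hww.symm) (hfresh i (by omega))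
    · have hi' : i = k + 1 := by omega
      simp only [hi', show ¬ (k+1 ≤ k) by omega, if_neg] at hww
      exact absurd (by simpa [show j ≤ k by omega] using hww) (hfresh j (by omega))
    · omega
  · intro i hik hi2
    rcases Nat.lt_or_ge i k with hik' | hik'
    · simpa [show i ≤ k by omega, show i + 1 ≤ k by omega] using hev i hik' hi2
    · have : i = k := by omega
      subst this
      rcases hfXY with ⟨hk2, hf1, hf2⟩ | ⟨hk2, hf1, hf2⟩
      · simpa [show i ≤ i by omega, show ¬ (i + 1 ≤ i) by omega] using ⟨hf1, hf2⟩
      · omega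
  · intro i hik hi2
    rcases Nat.lt_or_ge i k with hik' | hik'
    · simpa [show i ≤ k by omega, show i + 1 ≤ k by omega] using hod i hik' hi2
    · have : i = k := by omega
      subst this
      rcases hfXY with ⟨hk2, hf1, hf2⟩ | ⟨hk2, hf1, hf2⟩
      · omega
      · simpa [show i ≤ i by omega, show ¬ (i + 1 ≤ i) by omega] using ⟨hf1, hf2⟩
  · intro e he
    simpa [show (0:ℕ) ≤ k by omega] using hw0 e he

end helpers

section maximal
variable {V : Type*} [Fintype V] [DecidableEq V] {M M' : Finset (Sym2 V)}

lemma altp_card_le {k : ℕ} {w : ℕ → V} (h : AltP M M' k w) : k + 1 ≤ Fintype.card V := by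
  have := Finset.card_le_card_of_injOn w (fun x _ => Finset.mem_univ (w x))
    (fun i hi j hj hij => h.1 i j (by simpa using Nat.lt_succ_iff.1 (Finset.mem_range.1 hi))
      (by simpa using Nat.lt_succ_iff.1 (Finset.mem_range.1 hj)) hij)
  simpa using this

lemma altp_maximal (hMm : IsMatchingSet M) (hM'm : IsMatchingSet M') (v : V)
    (hvM : ∃ e ∈ M, v ∈ e) (hvM' : ∀ e ∈ M', v ∉ e) :
    ∃ k w, AltP M M' k w ∧ w 0 = v ∧ 1 ≤ k ∧
      (k % 2 = 0 → ∀ e ∈ M, w k ∉ e) ∧ (k % 2 = 1 → ∀ e ∈ M', w k ∉ e) := by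
  set K := (Finset.range (Fintype.card V)).filter (fun k => ∃ w, AltP M M' k w ∧ w 0 = v) with hK
  have h0K : 0 ∈ K := by
    have : Nonempty V := ⟨v⟩
    refine Finset.mem_filter.2 ⟨Finset.mem_range.2 Fintype.card_pos, ⟨fun _ => v, ⟨?_, ?_, ?_, ?_⟩, rfl⟩⟩
    · intro i j hi hj _; omega
    · intro i hi; omega
    · intro i hi; omega
    · exact hvM'
  set k := K.max' ⟨0, h0K⟩ with hkdef
  obtain ⟨-, w, hw, hw0v⟩ := Finset.mem_filter.1 (K.max'_mem ⟨0, h0K⟩)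
  have hnoext : (k % 2 = 0 → ∀ e ∈ M, w k ∉ e) ∧ (k % 2 = 1 → ∀ e ∈ M', w k ∉ e) := by
    constructor
    · intro hk2 e he hwke
      obtain ⟨w', hw', hagree⟩ := altp_extend hMm hM'm hw (Or.inl ⟨hk2, he⟩) hwke
      have : k + 1 ∈ K := Finset.mem_filter.2 ⟨Finset.mem_range.2 (by
          have := altp_card_le hw'; omega),
        ⟨w', hw', by rw [hagree 0 (by omega)]; exact hw0v⟩⟩
      have := Finset.le_max' K (k+1) this
      omega
    · intro hk2 e he hwke
      obtain ⟨w', hw', hagree⟩ := altp_extend hMm hM'm hw (Or.inr ⟨hk2, he⟩) hwke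
      have : k + 1 ∈ K := Finset.mem_filter.2 ⟨Finset.mem_range.2 (by
          have := altp_card_le hw'; omega),
        ⟨w', hw', by rw [hagree 0 (by omega)]; exact hw0v⟩⟩
      have := Finset.le_max' K (k+1) this
      omega
  have hk1 : 1 ≤ k := by
    by_contra hk0
    have hk0' : k = 0 := by omega
    obtain ⟨e, he, hve⟩ := hvM
    exact hnoext.1 (by omega) e he (by rw [hk0', hw0v]; exact hve)
  exact ⟨k, w, hw, hw0v, hk1, hnoext.1, hnoext.2⟩

end maximal

section comps
variable {V : Type*} [DecidableEq V]

variable {M M' P : Finset (Sym2 V)} {k : ℕ}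

/-- `w : ℕ → V` is a witness that `P` is an augmenting path of length `k`. -/
def AugNat (M M' P : Finset (Sym2 V)) (k : ℕ) (w : ℕ → V) : Prop :=
  AltP M M' k w ∧
  P = (Finset.range k).image (fun i => s(w i, w (i+1))) ∧
  (∀ e ∈ M', w k ∉ e)

lemma augnat_subset {w : ℕ → V} (h : AugNat M M' P k w) : P ⊆ M ∆ M' := by
  obtain ⟨⟨hinj, hev, hod, h0⟩, hPim, hlast⟩ := h
  intro e he
  rw [hPim] at he
  obtain ⟨i, hi, rfl⟩ := Finset.mem_image.1 he
  rw [Finset.mem_range] at hi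
  rcases Nat.even_or_odd i with hpar | hpar
  · have := hev i hi (Nat.even_iff.1 hpar)
    exact Finset.mem_symmDiff.2 (Or.inl ⟨this.1, this.2⟩)
  · have := hod i hi (Nat.odd_iff.1 hpar)
    exact Finset.mem_symmDiff.2 (Or.inr ⟨this.1, this.2⟩)

lemma aug_to_nat (hP : IsAugPathComp M M' P k) :
    ∃ w : ℕ → V, AugNat M M' P k w := by
  obtain ⟨hPD, hiso, w, hinj, hPim, hev, hod, h0, hlast⟩ := hP
  set wn : ℕ → V := fun i => w ⟨min i k, by omega⟩ with hwndef
  have key : ∀ (i : ℕ) (h : i < k + 1), wn i = w ⟨i, h⟩ := by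
    intro i h
    exact congrArg w (Fin.ext (by simpa using Nat.min_eq_left (by omega)))
  have keyc : ∀ (i : Fin k), wn i.1 = w i.castSucc := by
    intro i
    exact (key i.1 (by omega)).trans (congrArg w (Fin.ext (by simp)))
  have keys : ∀ (i : Fin k), wn (i.1 + 1) = w i.succ := by
    intro i
    exact (key (i.1+1) (by omega)).trans (congrArg w (Fin.ext (by simp)))
  refine ⟨wn, ⟨?_, ?_, ?_, ?_⟩, ?_, ?_⟩
  · intro i j hik hjk hww
    rw [key i (by omega), key j (by omega)] at hww
    have : (⟨i, by omega⟩ : Fin (k+1)) = ⟨j, by omega⟩ := hinj hww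
    have := Fin.mk.injEq .. ▸ this
    omega
  · intro i hi hi2
    rw [show s(wn i, wn (i+1)) = s(w (⟨i, hi⟩:Fin k).castSucc, w (⟨i, hi⟩:Fin k).succ) by
      rw [keyc ⟨i, hi⟩, keys ⟨i, hi⟩]]
    refine ⟨hev ⟨i, hi⟩ hi2, fun hM' => ?_⟩
    have heP : s(w (⟨i, hi⟩ : Fin k).castSucc, w (⟨i, hi⟩:Fin k).succ) ∈ P := by
      rw [hPim]; exact Finset.mem_image.2 ⟨⟨i, hi⟩, Finset.mem_univ _, rfl⟩
    rcases Finset.mem_symmDiff.1 (hPD heP) with ⟨-, h⟩ | ⟨-, h⟩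
    · exact h hM'
    · exact h (hev ⟨i, hi⟩ hi2)
  · intro i hi hi2
    rw [show s(wn i, wn (i+1)) = s(w (⟨i, hi⟩:Fin k).castSucc, w (⟨i, hi⟩:Fin k).succ) by
      rw [keyc ⟨i, hi⟩, keys ⟨i, hi⟩]]
    refine ⟨hod ⟨i, hi⟩ hi2, fun hM2 => ?_⟩
    have heP : s(w (⟨i, hi⟩ : Fin k).castSucc, w (⟨i, hi⟩:Fin k).succ) ∈ P := by
      rw [hPim]; exact Finset.mem_image.2 ⟨⟨i, hi⟩, Finset.mem_univ _, rfl⟩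
    rcases Finset.mem_symmDiff.1 (hPD heP) with ⟨-, h⟩ | ⟨-, h⟩
    · exact h (hod ⟨i, hi⟩ hi2)
    · exact h hM2
  · rw [show wn 0 = w 0 from (key 0 (by omega)).trans (congrArg w (Fin.ext (by simp)))]
    exact h0
  · rw [hPim]
    ext a
    simp only [Finset.mem_image, Finset.mem_univ, true_and, Finset.mem_range]
    constructor
    · rintro ⟨i, rfl⟩
      exact ⟨i.1, i.2, by rw [keyc i, keys i]⟩
    · rintro ⟨i, hi, rfl⟩
      exact ⟨⟨i, hi⟩, by rw [keyc ⟨i, hi⟩, keys ⟨i, hi⟩]⟩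
  · rw [show wn k = w (Fin.last k) from (key k (by omega)).trans (congrArg w (Fin.ext (by simp [Fin.last])))]
    exact hlast

lemma nat_to_aug {w : ℕ → V}
    (hiso : ∀ e ∈ M ∆ M', e ∉ P → ∀ x : V, x ∈ e → ∀ g ∈ P, x ∉ g)
    (h : AugNat M M' P k w) : IsAugPathComp M M' P k := by
  obtain ⟨⟨hinj, hev, hod, h0⟩, hPim, hlast⟩ := h
  have hsub := augnat_subset ⟨⟨hinj, hev, hod, h0⟩, hPim, hlast⟩
  refine ⟨hsub, hiso, fun i => w i, ?_, ?_, ?_, ?_, ?_, ?_⟩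
  · intro i j hww
    exact Fin.ext (hinj i j (by omega) (by omega) hww)
  · rw [hPim]
    ext a
    simp only [Finset.mem_image, Finset.mem_univ, true_and, Finset.mem_range]
    constructor
    · rintro ⟨i, hi, rfl⟩
      exact ⟨⟨i, hi⟩, rfl⟩
    · rintro ⟨i, rfl⟩
      exact ⟨i.1, i.2, rfl⟩
  · intro i hi2
    exact (hev i.1 i.2 hi2).1
  · intro i hi2
    exact (hod i.1 i.2 hi2).1
  · exact h0
  · exact hlast

end comps

section analysis
variable {V : Type*} [DecidableEq V] {M M' P : Finset (Sym2 V)} {k : ℕ}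

lemma altp_vertex_mem {w : ℕ → V} {x : V} {j : ℕ} (hj : j < k)
    (hx : x ∈ s(w j, w (j+1))) : ∃ i ≤ k, x = w i := by
  rcases Sym2.mem_iff.1 hx with rfl | rfl
  · exact ⟨j, by omega, rfl⟩
  · exact ⟨j+1, by omega, rfl⟩

/-- A maximal odd alternating path is isolated in the symmetric difference. -/
lemma altp_iso (hMm : IsMatchingSet M) (hM'm : IsMatchingSet M')
    {w : ℕ → V} (hw : AltP M M' k w) (hk1 : 1 ≤ k) (hk2 : k % 2 = 1)
    (hend : ∀ e ∈ M', w k ∉ e) :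
    ∀ e ∈ M ∆ M', e ∉ (Finset.range k).image (fun i => s(w i, w (i+1))) →
      ∀ x : V, x ∈ e → ∀ g ∈ (Finset.range k).image (fun i => s(w i, w (i+1))), x ∉ g := by
  obtain ⟨hinj, hev, hod, h0⟩ := hw
  intro e he henP x hxe g hgP hxg
  obtain ⟨j, hj, rfl⟩ := Finset.mem_image.1 hgP
  rw [Finset.mem_range] at hj
  obtain ⟨i, hik, rfl⟩ := altp_vertex_mem hj hxg
  have hmemP : ∀ l, l < k → s(w l, w (l+1)) ∈ (Finset.range k).image (fun i => s(w i, w (i+1))) :=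
    fun l hl => Finset.mem_image.2 ⟨l, Finset.mem_range.2 hl, rfl⟩
  rcases Finset.mem_symmDiff.1 he with ⟨heM, heM'⟩ | ⟨heM', heM⟩
  · -- e ∈ M \ M' : find the incident M-edge of w i, which lies in P
    rcases Nat.mod_two_eq_zero_or_one i with hpar | hpar
    · have hilt : i < k := by omega
      have hei := hev i hilt hpar
      have : e = s(w i, w (i+1)) := match_unique hMm heM hei.1 hxe (by simp)
      exact henP (this ▸ hmemP i hilt)
    · have hi1 : 1 ≤ i := by omega
      have hei := hev (i-1) (by omega) (by omega)
      have hwi : w i ∈ s(w (i-1), w (i-1+1)) := by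
        rw [show i - 1 + 1 = i by omega]; simp
      have : e = s(w (i-1), w (i-1+1)) := match_unique hMm heM hei.1 hxe hwi
      exact henP (this ▸ hmemP (i-1) (by omega))
  · -- e ∈ M' \ M
    rcases Nat.eq_zero_or_pos i with rfl | hi1
    · exact h0 e heM' hxe
    rcases Nat.eq_or_lt_of_le hik with rfl | hik'
    · exact hend e heM' hxe
    rcases Nat.mod_two_eq_zero_or_one i with hpar | hpar
    · have hei := hod (i-1) (by omega) (by omega)
      have hwi : w i ∈ s(w (i-1), w (i-1+1)) := by
        rw [show i - 1 + 1 = i by omega]; simp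
      have : e = s(w (i-1), w (i-1+1)) := match_unique hM'm heM' hei.1 hxe hwi
      exact henP (this ▸ hmemP (i-1) (by omega))
    · have hei := hod i hik' hpar
      have : e = s(w i, w (i+1)) := match_unique hM'm heM' hei.1 hxe (by simp)
      exact henP (this ▸ hmemP i hik')

/-- augmenting path components of positive length have odd length. -/
lemma aug_k_odd (hP : IsAugPathComp M M' P k) (hk1 : 1 ≤ k) : k % 2 = 1 := by
  obtain ⟨w, ⟨hinj, hev, hod, h0⟩, hPim, hlast⟩ := aug_to_nat hP
  by_contra hk2
  have hk2' : k % 2 = 0 := by omega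
  have h := hod (k-1) (by omega) (by omega)
  refine hlast _ h.1 ?_
  rw [show k - 1 + 1 = k by omega]
  simp

lemma augnat_edge_inj {w : ℕ → V} (h : AltP M M' k w) :
    ∀ i ∈ Finset.range k, ∀ j ∈ Finset.range k,
      s(w i, w (i+1)) = s(w j, w (j+1)) → i = j := by
  intro i hi j hj heq
  rw [Finset.mem_range] at hi hj
  rw [Sym2.eq_iff] at heq
  rcases heq with ⟨h1, -⟩ | ⟨h1, h2⟩
  · exact h.1 i j (by omega) (by omega) h1
  · have := h.1 i (j+1) (by omega) (by omega) h1
    have := h.1 (i+1) j (by omega) (by omega) h2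
    omega

lemma augnat_card {w : ℕ → V} (h : AugNat M M' P k w) : P.card = k := by
  rw [h.2.1, Finset.card_image_of_injOn (augnat_edge_inj h.1)]
  simp

lemma card_range_filter_even (k : ℕ) :
    ((Finset.range k).filter (fun i => i % 2 = 0)).card = (k+1)/2 := by
  induction k with
  | zero => simp
  | succ n ih =>
    rw [Finset.range_add_one, Finset.filter_insert]
    by_cases h : n % 2 = 0
    · rw [if_pos h, Finset.card_insert_of_notMem (by simp)]
      omega
    · rw [if_neg h]
      omega

lemma card_range_filter_odd (k : ℕ) :
    ((Finset.range k).filter (fun i => i % 2 = 1)).card = k/2 := by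
  induction k with
  | zero => simp
  | succ n ih =>
    rw [Finset.range_add_one, Finset.filter_insert]
    by_cases h : n % 2 = 1
    · rw [if_pos h, Finset.card_insert_of_notMem (by simp)]
      omega
    · rw [if_neg h]
      omega

lemma augnat_card_inter_M {w : ℕ → V} (h : AugNat M M' P k w) :
    (P ∩ M).card = (k+1)/2 := by
  obtain ⟨⟨hinj, hev, hod, h0⟩, hPim, hlast⟩ := h
  have : P ∩ M = ((Finset.range k).filter (fun i => i % 2 = 0)).image
      (fun i => s(w i, w (i+1))) := by
    ext e
    simp only [Finset.mem_inter, hPim, Finset.mem_image, Finset.mem_filter, Finset.mem_range]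
    constructor
    · rintro ⟨⟨i, hi, rfl⟩, heM⟩
      refine ⟨i, ⟨hi, ?_⟩, rfl⟩
      by_contra hodd
      exact (hod i hi (by omega)).2 heM
    · rintro ⟨i, ⟨hi, hieven⟩, rfl⟩
      exact ⟨⟨i, hi, rfl⟩, (hev i hi hieven).1⟩
  rw [this, Finset.card_image_of_injOn (fun i hi j hj heq =>
    augnat_edge_inj ⟨hinj, hev, hod, h0⟩ i (Finset.mem_of_mem_filter i hi)
      j (Finset.mem_of_mem_filter j hj) heq), card_range_filter_even]

lemma augnat_card_inter_M' {w : ℕ → V} (h : AugNat M M' P k w) :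
    (P ∩ M').card = k/2 := by
  obtain ⟨⟨hinj, hev, hod, h0⟩, hPim, hlast⟩ := h
  have : P ∩ M' = ((Finset.range k).filter (fun i => i % 2 = 1)).image
      (fun i => s(w i, w (i+1))) := by
    ext e
    simp only [Finset.mem_inter, hPim, Finset.mem_image, Finset.mem_filter, Finset.mem_range]
    constructor
    · rintro ⟨⟨i, hi, rfl⟩, heM⟩
      refine ⟨i, ⟨hi, ?_⟩, rfl⟩
      by_contra hodd
      exact (hev i hi (by omega)).2 heM
    · rintro ⟨i, ⟨hi, hiodd⟩, rfl⟩
      exact ⟨⟨i, hi, rfl⟩, (hod i hi hiodd).1⟩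
  rw [this, Finset.card_image_of_injOn (fun i hi j hj heq =>
    augnat_edge_inj ⟨hinj, hev, hod, h0⟩ i (Finset.mem_of_mem_filter i hi)
      j (Finset.mem_of_mem_filter j hj) heq), card_range_filter_odd]

end analysis

section disj
variable {V : Type*} [DecidableEq V] {M M' P Q : Finset (Sym2 V)} {k l : ℕ}

lemma adjacent_differ {p : ℕ → Prop} : ∀ {k : ℕ}, (∃ i, i < k ∧ p i) → (∃ i, i < k ∧ ¬ p i) →
    ∃ i, i + 1 < k ∧ ¬ (p i ↔ p (i+1)) := by
  intro k
  induction k with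
  | zero => rintro ⟨i, hi, -⟩; omega
  | succ n ih =>
    rintro ⟨a, ha, hpa⟩ ⟨b, hb, hpb⟩
    by_cases hpn : p n
    · rcases Nat.lt_or_ge b n with hbn | hbn
      · by_cases hex : ∃ i, i < n ∧ p i
        · obtain ⟨i, hi1, hi2⟩ := ih hex ⟨b, hbn, hpb⟩
          exact ⟨i, by omega, hi2⟩
        · refine ⟨n-1, by omega, ?_⟩
          have h1 : ¬ p (n-1) := fun h => hex ⟨n-1, by omega, h⟩
          rw [show n - 1 + 1 = n by omega]
          tauto
      · have : b = n := by omega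
        exact absurd hpn (this ▸ hpb)
    · rcases Nat.lt_or_ge a n with han | han
      · by_cases hex : ∃ i, i < n ∧ ¬ p i
        · obtain ⟨i, hi1, hi2⟩ := ih ⟨a, han, hpa⟩ hex
          exact ⟨i, by omega, hi2⟩
        · refine ⟨n-1, by omega, ?_⟩
          have h1 : p (n-1) := by
            by_contra h
            exact hex ⟨n-1, by omega, h⟩
          rw [show n-1+1 = n by omega]
          tauto
      · have : a = n := by omega
        exact absurd (this ▸ hpa) hpn

lemma all_or_none {w : ℕ → V} (hw : AugNat M M' P k w)
    (hQiso : ∀ e ∈ M ∆ M', e ∉ Q → ∀ x : V, x ∈ e → ∀ g ∈ Q, x ∉ g) :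
    (∀ i < k, s(w i, w (i+1)) ∈ Q) ∨ (∀ i < k, s(w i, w (i+1)) ∉ Q) := by
  by_cases hex1 : ∃ i, i < k ∧ s(w i, w (i+1)) ∈ Q
  · by_cases hex2 : ∃ i, i < k ∧ s(w i, w (i+1)) ∉ Q
    · exfalso
      obtain ⟨i, hi, hdiff⟩ := adjacent_differ hex1 hex2
      have hD : ∀ j, j < k → s(w j, w (j+1)) ∈ M ∆ M' := by
        intro j hj
        exact augnat_subset hw (by rw [hw.2.1]; exact Finset.mem_image.2 ⟨j, Finset.mem_range.2 hj, rfl⟩)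
      by_cases h1 : s(w i, w (i+1)) ∈ Q
      · have h2 : s(w (i+1), w (i+2)) ∉ Q := by tauto
        exact hQiso _ (hD (i+1) (by omega)) h2 (w (i+1)) (by simp) _ h1 (by simp)
      · have h2 : s(w (i+1), w (i+2)) ∈ Q := by tauto
        exact hQiso _ (hD i (by omega)) h1 (w (i+1)) (by simp) _ h2 (by
          rw [show i + 2 = (i+1)+1 by omega]; simp)
    · push_neg at hex2
      exact Or.inl hex2
  · push_neg at hex1
    exact Or.inr hex1

lemma aug_disjoint (hP : IsAugPathComp M M' P k) (hk1 : 1 ≤ k)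
    (hQ : IsAugPathComp M M' Q l) (hl1 : 1 ≤ l) : P = Q ∨ Disjoint P Q := by
  obtain ⟨w, hw⟩ := aug_to_nat hP
  obtain ⟨w', hw'⟩ := aug_to_nat hQ
  rcases all_or_none hw hQ.2.1 with hall | hnone
  · -- P ⊆ Q; now symmetric analysis
    left
    have hPQ : P ⊆ Q := by
      intro e he
      rw [hw.2.1] at he
      obtain ⟨i, hi, rfl⟩ := Finset.mem_image.1 he
      exact hall i (Finset.mem_range.1 hi)
    rcases all_or_none hw' hP.2.1 with hall' | hnone'
    · refine subset_antisymm hPQ ?_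
      intro e he
      rw [hw'.2.1] at he
      obtain ⟨i, hi, rfl⟩ := Finset.mem_image.1 he
      exact hall' i (Finset.mem_range.1 hi)
    · exfalso
      have he0 : s(w 0, w 1) ∈ Q := hall 0 (by omega)
      rw [hw'.2.1] at he0
      obtain ⟨j, hj, hj2⟩ := Finset.mem_image.1 he0
      refine hnone' j (Finset.mem_range.1 hj) ?_
      rw [hj2, hw.2.1]
      exact Finset.mem_image.2 ⟨0, Finset.mem_range.2 (by omega), rfl⟩
  · right
    rw [Finset.disjoint_left]
    intro e heP heQ
    rw [hw.2.1] at heP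
    obtain ⟨i, hi, rfl⟩ := Finset.mem_image.1 heP
    exact hnone i (Finset.mem_range.1 hi) heQ

lemma aug_endpoints {w : ℕ → V} (hw : AugNat M M' P k w) {x : V}
    (hx : ∀ e ∈ M', x ∉ e) (hxP : ∃ g ∈ P, x ∈ g) : x = w 0 ∨ x = w k := by
  obtain ⟨g, hgP, hxg⟩ := hxP
  rw [hw.2.1] at hgP
  obtain ⟨j, hj, rfl⟩ := Finset.mem_image.1 hgP
  rw [Finset.mem_range] at hj
  obtain ⟨i, hik, rfl⟩ := altp_vertex_mem hj hxg
  rcases Nat.eq_zero_or_pos i with rfl | hi1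
  · exact Or.inl rfl
  rcases Nat.eq_or_lt_of_le hik with rfl | hik'
  · exact Or.inr rfl
  exfalso
  obtain ⟨⟨hinj, hev, hod, h0⟩, hPim, hlast⟩ := hw
  rcases Nat.mod_two_eq_zero_or_one i with hpar | hpar
  · have hei := hod (i-1) (by omega) (by omega)
    refine hx _ hei.1 ?_
    rw [show i - 1 + 1 = i by omega]
    simp
  · have hei := hod i hik' hpar
    exact hx _ hei.1 (by simp)

/-- Backward determinism: a vertex `z` not covered by `M` is the end of at most
one maximal even alternating path. -/
def Reach (M M' : Finset (Sym2 V)) (v z : V) : Prop :=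
  ∃ k w, AltP M M' k w ∧ k % 2 = 0 ∧ 1 ≤ k ∧ w 0 = v ∧ w k = z ∧ ∀ e ∈ M, z ∉ e

lemma reach_uniq_aux (hMm : IsMatchingSet M) (hM'm : IsMatchingSet M') {v v' z : V}
    {k k' : ℕ} {w w' : ℕ → V}
    (hw : AltP M M' k w) (hk2 : k % 2 = 0) (hk1 : 1 ≤ k) (h0 : w 0 = v) (hzk : w k = z)
    (hw' : AltP M M' k' w') (hk2' : k' % 2 = 0) (hk1' : 1 ≤ k') (h0' : w' 0 = v')
    (hzk' : w' k' = z) (hkk' : k ≤ k') : v = v' := by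
  have key : ∀ i, i ≤ k → i ≤ k' → w (k - i) = w' (k' - i) := by
    intro i
    induction i with
    | zero => intro _ _; simpa using hzk.trans hzk'.symm
    | succ n ih =>
      intro h1 h2
      have hx := ih (by omega) (by omega)
      rcases Nat.mod_two_eq_zero_or_one n with hn | hn
      · -- arrival edges have odd index, lie in M'
        have he1 := hw.2.2.1 (k - n - 1) (by omega) (by omega)
        have he2 := hw'.2.2.1 (k' - n - 1) (by omega) (by omega)
        have hm1 : w (k - n) ∈ s(w (k-n-1), w (k-n-1+1)) := by
          rw [show k - n - 1 + 1 = k - n by omega]; simp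
        have hm2 : w (k - n) ∈ s(w' (k'-n-1), w' (k'-n-1+1)) := by
          rw [show k' - n - 1 + 1 = k' - n by omega, hx]; simp
        have heq := match_unique hM'm he1.1 he2.1 hm1 hm2
        rw [show k - n - 1 + 1 = k - n by omega, show k' - n - 1 + 1 = k' - n by omega,
          ← hx] at heq
        have := sym2_cancel heq
        rw [show k - (n+1) = k - n - 1 by omega, show k' - (n+1) = k' - n - 1 by omega]
        exact this
      · have he1 := hw.2.1 (k - n - 1) (by omega) (by omega)
        have he2 := hw'.2.1 (k' - n - 1) (by omega) (by omega)
        have hm1 : w (k - n) ∈ s(w (k-n-1), w (k-n-1+1)) := by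
          rw [show k - n - 1 + 1 = k - n by omega]; simp
        have hm2 : w (k - n) ∈ s(w' (k'-n-1), w' (k'-n-1+1)) := by
          rw [show k' - n - 1 + 1 = k' - n by omega, hx]; simp
        have heq := match_unique hMm he1.1 he2.1 hm1 hm2
        rw [show k - n - 1 + 1 = k - n by omega, show k' - n - 1 + 1 = k' - n by omega,
          ← hx] at heq
        have := sym2_cancel heq
        rw [show k - (n+1) = k - n - 1 by omega, show k' - (n+1) = k' - n - 1 by omega]
        exact this
  have hk := key k le_rfl (by omega)
  rcases Nat.eq_or_lt_of_le hkk' with rfl | hlt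
  · rw [← h0, ← h0']
    simpa using hk
  · -- k < k' : w' (k' - k) = v is uncovered by M', but has an arriving M'-edge
    exfalso
    have hv : w' (k' - k) = v := by
      rw [← hk, Nat.sub_self, h0]
    have harr := hw'.2.2.1 (k' - k - 1) (by omega) (by omega)
    refine hw.2.2.2 _ harr.1 ?_
    rw [h0, ← hv, show k' - k - 1 + 1 = k' - k by omega]
    simp
end disj


section counting
variable {V : Type*} [Fintype V] [DecidableEq V] {M M' : Finset (Sym2 V)}

lemma card_verts_edge {e : Sym2 V} (he : ¬ e.IsDiag) :
    (Finset.univ.filter (· ∈ e)).card = 2 := by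
  induction e with
  | _ a b =>
    have hab : a ≠ b := by simpa [Sym2.isDiag_iff_proj_eq] using he
    have : Finset.univ.filter (· ∈ s(a,b)) = {a, b} := by
      ext v; simp [Sym2.mem_iff]
    rw [this, Finset.card_insert_of_notMem (by simp [hab]), Finset.card_singleton]

lemma mVerts_card (hMm : IsMatchingSet M) : (mVerts M).card = 2 * M.card := by
  have h1 : mVerts M = M.biUnion (fun e => Finset.univ.filter (· ∈ e)) := by
    ext v
    simp [mVerts, Finset.mem_biUnion]
  rw [h1, Finset.card_biUnion]
  · rw [Finset.sum_congr rfl (fun e he => card_verts_edge (hMm.1 e he))]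
    simp [Finset.sum_const, mul_comm]
  · intro e he f hf hef
    unfold Function.onFun
    rw [Finset.disjoint_filter]
    intro v _ hve hvf
    exact hMm.2 e he f hf hef v hve (by simpa using hvf)

variable (M M') in
/-- The total collection of augmenting path components. -/
noncomputable def Atot : Finset (Finset (Sym2 V)) :=
  (M ∆ M').powerset.filter fun P => ∃ k, 1 ≤ k ∧ IsAugPathComp M M' P k

lemma reach_uniq (hMm : IsMatchingSet M) (hM'm : IsMatchingSet M') {v v' z : V}
    (h : Reach M M' v z) (h' : Reach M M' v' z) : v = v' := by
  obtain ⟨k, w, hw, hk2, hk1, h0, hzk, -⟩ := h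
  obtain ⟨k', w', hw', hk2', hk1', h0', hzk', -⟩ := h'
  rcases le_total k k' with hkk' | hkk'
  · exact reach_uniq_aux hMm hM'm hw hk2 hk1 h0 hzk hw' hk2' hk1' h0' hzk' hkk'
  · exact (reach_uniq_aux hMm hM'm hw' hk2' hk1' h0' hzk' hw hk2 hk1 h0 hzk hkk').symm

lemma dichotomy (hMm : IsMatchingSet M) (hM'm : IsMatchingSet M')
    {v : V} (hv : v ∈ mVerts M \ mVerts M') :
    (∃ z, Reach M M' v z) ∨ (∃ P ∈ Atot M M', ∃ g ∈ P, v ∈ g) := by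
  rw [Finset.mem_sdiff] at hv
  have hvM : ∃ e ∈ M, v ∈ e := by simpa [mVerts] using hv.1
  have hvM' : ∀ e ∈ M', v ∉ e := by
    intro e he hve
    exact hv.2 (by simp [mVerts]; exact ⟨e, he, hve⟩)
  obtain ⟨k, w, hw, hw0v, hk1, hnoe, hnoo⟩ := altp_maximal hMm hM'm v hvM hvM'
  rcases Nat.mod_two_eq_zero_or_one k with hk2 | hk2
  · exact Or.inl ⟨w k, k, w, hw, hk2, hk1, hw0v, rfl, hnoe hk2⟩
  · right
    set P := (Finset.range k).image (fun i => s(w i, w (i+1))) with hPdef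
    have haugnat : AugNat M M' P k w := ⟨hw, rfl, hnoo hk2⟩
    have haug : IsAugPathComp M M' P k :=
      nat_to_aug (altp_iso hMm hM'm hw hk1 hk2 (hnoo hk2)) haugnat
    refine ⟨P, Finset.mem_filter.2 ⟨Finset.mem_powerset.2 (augnat_subset haugnat), k, hk1, haug⟩,
      s(w 0, w 1), ?_, ?_⟩
    · exact Finset.mem_image.2 ⟨0, Finset.mem_range.2 (by omega), rfl⟩
    · rw [← hw0v]; simp

lemma U_card_le (hMm : IsMatchingSet M) (hM'm : IsMatchingSet M') :
    (mVerts M \ mVerts M').card ≤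
      (mVerts M' \ mVerts M).card + 2 * (Atot M M').card := by
  classical
  set U := mVerts M \ mVerts M' with hU
  set U1 := U.filter (fun v => ∃ z, Reach M M' v z) with hU1
  set U2 := U \ U1 with hU2
  have hsub1 : U1 ⊆ U := by rw [hU1]; exact Finset.filter_subset _ _
  have hcard : U.card = U1.card + U2.card := by
    have h1le := Finset.card_le_card hsub1
    rw [hU2, Finset.card_sdiff_of_subset hsub1]
    omega
  -- U1 injects into U'
  have h1 : U1.card ≤ (mVerts M' \ mVerts M).card := by
    set zf : V → V := fun v => if h : ∃ z, Reach M M' v z then h.choose else v with hzf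
    refine Finset.card_le_card_of_injOn zf ?_ ?_
    · intro v hv
      simp only [Finset.mem_coe, hU1, Finset.mem_filter] at hv
      obtain ⟨hvU, hex⟩ := hv
      have hreach : Reach M M' v (zf v) := by
        rw [hzf]; simp only [dif_pos hex]; exact hex.choose_spec
      obtain ⟨k, w, hw, hk2, hk1, h0, hzk, hnoM⟩ := hreach
      rw [Finset.mem_coe, Finset.mem_sdiff]
      constructor
      · have harr := hw.2.2.1 (k-1) (by omega) (by omega)
        have : zf v ∈ s(w (k-1), w (k-1+1)) := by
          rw [show k - 1 + 1 = k by omega, hzk]; simp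
        simp only [mVerts, Finset.mem_filter, Finset.mem_univ, true_and]
        exact ⟨_, harr.1, this⟩
      · simp only [mVerts, Finset.mem_filter, Finset.mem_univ, true_and]
        rintro ⟨e, he, hze⟩
        exact hnoM e he hze
    · intro v1 hv1 v2 hv2 heq
      have hv1 : v1 ∈ U1 := hv1
      have hv2 : v2 ∈ U1 := hv2
      rw [hU1, Finset.mem_filter] at hv1 hv2
      have hr1 : Reach M M' v1 (zf v1) := by
        rw [hzf]; simp only [dif_pos hv1.2]; exact hv1.2.choose_spec
      have hr2 : Reach M M' v2 (zf v2) := by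
        rw [hzf]; simp only [dif_pos hv2.2]; exact hv2.2.choose_spec
      rw [heq] at hr1
      exact reach_uniq hMm hM'm hr1 hr2
  -- U2 maps 2-to-1 into Atot
  have h2 : U2.card ≤ 2 * (Atot M M').card := by
    set pf : V → Finset (Sym2 V) :=
      fun v => if h : ∃ P ∈ Atot M M', ∃ g ∈ P, v ∈ g then h.choose else ∅ with hpf
    have hspec : ∀ v ∈ U2, pf v ∈ Atot M M' ∧ ∃ g ∈ pf v, v ∈ g := by
      intro v hv
      rw [hU2, Finset.mem_sdiff] at hv
      have hvU : v ∈ U := hv.1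
      have hnr : ¬ ∃ z, Reach M M' v z := by
        intro hex
        exact hv.2 (Finset.mem_filter.2 ⟨hvU, hex⟩)
      have hex : ∃ P ∈ Atot M M', ∃ g ∈ P, v ∈ g := by
        rcases dichotomy hMm hM'm hvU with h | h
        · exact absurd h hnr
        · exact h
      rw [hpf]
      simp only [dif_pos hex]
      exact hex.choose_spec
    have himage : U2.image pf ⊆ Atot M M' := by
      intro P hP
      obtain ⟨v, hv, rfl⟩ := Finset.mem_image.1 hP
      exact (hspec v hv).1
    have hfib : ∀ P ∈ U2.image pf, (U2.filter (fun v => pf v = P)).card ≤ 2 := by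
      intro P hP
      obtain ⟨v0, hv0, rfl⟩ := Finset.mem_image.1 hP
      obtain ⟨hPA, -⟩ := hspec v0 hv0
      rw [Atot, Finset.mem_filter] at hPA
      obtain ⟨-, k, hk1, haug⟩ := hPA
      obtain ⟨w, hw⟩ := aug_to_nat haug
      have hsub : U2.filter (fun v => pf v = pf v0) ⊆ {w 0, w k} := by
        intro x hx
        rw [Finset.mem_filter] at hx
        obtain ⟨hxU2, hxpf⟩ := hx
        have hxspec := hspec x hxU2
        rw [hxpf] at hxspec
        have hxU : x ∈ U := by
          rw [hU2, Finset.mem_sdiff] at hxU2; exact hxU2.1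
        have hxM' : ∀ e ∈ M', x ∉ e := by
          rw [hU, Finset.mem_sdiff] at hxU
          intro e he hxe
          refine hxU.2 ?_
          simp only [mVerts, Finset.mem_filter, Finset.mem_univ, true_and]
          exact ⟨e, he, hxe⟩
        rcases aug_endpoints hw hxM' hxspec.2 with h | h <;> simp [h]
      calc (U2.filter (fun v => pf v = pf v0)).card ≤ ({w 0, w k} : Finset V).card :=
            Finset.card_le_card hsub
        _ ≤ 2 := le_trans (Finset.card_insert_le _ _) (by simp)
    calc U2.card ≤ 2 * (U2.image pf).card := Finset.card_le_mul_card_image U2 2 hfib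
      _ ≤ 2 * (Atot M M').card := by
          have := Finset.card_le_card himage
          omega
  omega

end counting

section flip
variable {V : Type*} [Fintype V] [DecidableEq V] {M M' : Finset (Sym2 V)}

lemma atot_mem {P : Finset (Sym2 V)} (hP : P ∈ Atot M M') :
    ∃ k, 1 ≤ k ∧ IsAugPathComp M M' P k := (Finset.mem_filter.1 hP).2

lemma atot_pairwise_disjoint :
    ∀ P ∈ Atot M M', ∀ Q ∈ Atot M M', P ≠ Q → Disjoint P Q := by
  intro P hP Q hQ hPQ
  obtain ⟨k, hk1, haugP⟩ := atot_mem hP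
  obtain ⟨l, hl1, haugQ⟩ := atot_mem hQ
  rcases aug_disjoint haugP hk1 haugQ hl1 with h | h
  · exact absurd h hPQ
  · exact h

lemma aug_inter_card {P : Finset (Sym2 V)} {k : ℕ} (haug : IsAugPathComp M M' P k)
    (hk1 : 1 ≤ k) : (P ∩ M).card = (P ∩ M').card + 1 := by
  obtain ⟨w, hw⟩ := aug_to_nat haug
  have hodd := aug_k_odd haug hk1
  rw [augnat_card_inter_M hw, augnat_card_inter_M' hw]
  omega

lemma flip_bound {E : Finset (Sym2 V)} (hME : M ⊆ E) (hM'E : M' ⊆ E)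
    (hMm : IsMatchingSet M) (hM'm : IsMatchingSet M')
    (hmax : ∀ N : Finset (Sym2 V), N ⊆ E → IsMatchingSet N → N.card ≤ M.card) :
    M'.card + (Atot M M').card ≤ M.card := by
  classical
  set A := Atot M M' with hA
  set S := A.biUnion id with hS
  have hmemS : ∀ {e : Sym2 V}, e ∈ S ↔ ∃ P ∈ A, e ∈ P := by
    intro e; rw [hS, Finset.mem_biUnion]; rfl
  set N := (M' \ S) ∪ (S ∩ M) with hN
  have hNE : N ⊆ E := by
    intro e he
    rcases Finset.mem_union.1 he with h | h
    · exact hM'E (Finset.mem_sdiff.1 h).1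
    · exact hME (Finset.mem_inter.1 h).2
  have key : ∀ e f : Sym2 V, ∀ v : V, e ∈ M' \ S → f ∈ S ∩ M → v ∈ e → v ∈ f → False := by
    intro e f v he hf hve hvf
    rw [Finset.mem_sdiff] at he
    rw [Finset.mem_inter] at hf
    obtain ⟨P, hPA, hfP⟩ := hmemS.1 hf.1
    by_cases heM : e ∈ M
    · rcases eq_or_ne e f with rfl | hne
      · exact he.2 hf.1
      · exact hMm.2 e heM f hf.2 hne v hve hvf
    · obtain ⟨k, hk1, haug⟩ := atot_mem hPA
      have heD : e ∈ M ∆ M' := Finset.mem_symmDiff.2 (Or.inr ⟨he.1, heM⟩)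
      have henP : e ∉ P := fun h => he.2 (hmemS.2 ⟨P, hPA, h⟩)
      exact haug.2.1 e heD henP v hve f hfP hvf
  have hNmatch : IsMatchingSet N := by
    constructor
    · intro e he
      rcases Finset.mem_union.1 he with h | h
      · exact hM'm.1 e (Finset.mem_sdiff.1 h).1
      · exact hMm.1 e (Finset.mem_inter.1 h).2
    · intro e he f hf hef v hve hvf
      rcases Finset.mem_union.1 he with he' | he' <;> rcases Finset.mem_union.1 hf with hf' | hf'
      · exact hM'm.2 e (Finset.mem_sdiff.1 he').1 f (Finset.mem_sdiff.1 hf').1 hef v hve hvf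
      · exact key e f v he' hf' hve hvf
      · exact key f e v hf' he' hvf hve
      · exact hMm.2 e (Finset.mem_inter.1 he').2 f (Finset.mem_inter.1 hf').2 hef v hve hvf
  have hdisjN : Disjoint (M' \ S) (S ∩ M) := by
    rw [Finset.disjoint_left]
    intro a ha hb
    exact (Finset.mem_sdiff.1 ha).2 (Finset.mem_inter.1 hb).1
  have hNcard : N.card = (M' \ S).card + (S ∩ M).card := Finset.card_union_of_disjoint hdisjN
  have h1 : (M' \ S).card + (M' ∩ S).card = M'.card := Finset.card_sdiff_add_card_inter _ _
  have hSM : S ∩ M = A.biUnion (fun P => P ∩ M) := by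
    ext e
    simp only [Finset.mem_inter, Finset.mem_biUnion]
    constructor
    · rintro ⟨heS, heM⟩
      obtain ⟨P, hP, heP⟩ := hmemS.1 heS
      exact ⟨P, hP, heP, heM⟩
    · rintro ⟨P, hP, heP⟩
      exact ⟨hmemS.2 ⟨P, hP, heP.1⟩, heP.2⟩
  have hSM' : S ∩ M' = A.biUnion (fun P => P ∩ M') := by
    ext e
    simp only [Finset.mem_inter, Finset.mem_biUnion]
    constructor
    · rintro ⟨heS, heM⟩
      obtain ⟨P, hP, heP⟩ := hmemS.1 heS
      exact ⟨P, hP, heP, heM⟩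
    · rintro ⟨P, hP, heP⟩
      exact ⟨hmemS.2 ⟨P, hP, heP.1⟩, heP.2⟩
  have hcardSM : (S ∩ M).card = ∑ P ∈ A, (P ∩ M).card := by
    rw [hSM]
    exact Finset.card_biUnion (fun P hP Q hQ hne =>
      (atot_pairwise_disjoint P hP Q hQ hne).mono Finset.inter_subset_left Finset.inter_subset_left)
  have hcardSM' : (S ∩ M').card = ∑ P ∈ A, (P ∩ M').card := by
    rw [hSM']
    exact Finset.card_biUnion (fun P hP Q hQ hne =>
      (atot_pairwise_disjoint P hP Q hQ hne).mono Finset.inter_subset_left Finset.inter_subset_left)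
  have hsum : ∑ P ∈ A, (P ∩ M).card = (∑ P ∈ A, (P ∩ M').card) + A.card := by
    rw [Finset.sum_congr rfl (fun P hP => by
      obtain ⟨k, hk1, haug⟩ := atot_mem hP
      exact aug_inter_card haug hk1), Finset.sum_add_distrib]
    simp
  have hMS' : (M' ∩ S).card = (S ∩ M').card := by rw [Finset.inter_comm]
  have hfin := hmax N hNE hNmatch
  omega

end flip

theorem augmenting_path_counts {V : Type*} [Fintype V] [DecidableEq V]
    (E M M' : Finset (Sym2 V)) (hE : EdgeSimple E)
    (hME : M ⊆ E) (hMm : IsMatchingSet M)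
    (hmax : ∀ N : Finset (Sym2 V), N ⊆ E → IsMatchingSet N → N.card ≤ M.card)
    (hM'E : M' ⊆ E) (hM'm : IsMatchingSet M') :
    (((M ∆ M').powerset.filter fun P => IsAugPathComp M M' P 3).card +
        2 * ((M ∆ M').powerset.filter fun P => ∃ k, 5 ≤ k ∧ IsAugPathComp M M' P k).card ≤
      M'.card) ∧
    ((M ∆ M').powerset.filter fun P => IsAugPathComp M M' P 1).card +
        ((M ∆ M').powerset.filter fun P => IsAugPathComp M M' P 3).card +
        ((M ∆ M').powerset.filter fun P => ∃ k, 5 ≤ k ∧ IsAugPathComp M M' P k).card =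
      M.card - M'.card := by
  classical
  set A1 := (M ∆ M').powerset.filter (fun P => IsAugPathComp M M' P 1) with hA1
  set A3 := (M ∆ M').powerset.filter (fun P => IsAugPathComp M M' P 3) with hA3
  set A5 := (M ∆ M').powerset.filter (fun P => ∃ k, 5 ≤ k ∧ IsAugPathComp M M' P k) with hA5
  have hmem1 : ∀ P ∈ A1, IsAugPathComp M M' P 1 ∧ P.card = 1 := by
    intro P hP
    have h := (Finset.mem_filter.1 hP).2
    obtain ⟨w, hw⟩ := aug_to_nat h
    exact ⟨h, augnat_card hw⟩
  have hmem3 : ∀ P ∈ A3, IsAugPathComp M M' P 3 ∧ P.card = 3 := by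
    intro P hP
    have h := (Finset.mem_filter.1 hP).2
    obtain ⟨w, hw⟩ := aug_to_nat h
    exact ⟨h, augnat_card hw⟩
  have hmem5 : ∀ P ∈ A5, ∃ k, 5 ≤ k ∧ IsAugPathComp M M' P k ∧ P.card = k := by
    intro P hP
    obtain ⟨k, hk, h⟩ := (Finset.mem_filter.1 hP).2
    obtain ⟨w, hw⟩ := aug_to_nat h
    exact ⟨k, hk, h, augnat_card hw⟩
  have d13 : Disjoint A1 A3 := by
    rw [Finset.disjoint_left]
    intro P h1 h3
    have := (hmem1 P h1).2
    have := (hmem3 P h3).2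
    omega
  have d15 : Disjoint A1 A5 := by
    rw [Finset.disjoint_left]
    intro P h1 h5
    obtain ⟨k, hk, -, hck⟩ := hmem5 P h5
    have := (hmem1 P h1).2
    omega
  have d35 : Disjoint A3 A5 := by
    rw [Finset.disjoint_left]
    intro P h3 h5
    obtain ⟨k, hk, -, hck⟩ := hmem5 P h5
    have := (hmem3 P h3).2
    omega
  have hU : Atot M M' = A1 ∪ A3 ∪ A5 := by
    ext P
    simp only [Atot, Finset.mem_union, hA1, hA3, hA5, Finset.mem_filter]
    constructor
    · rintro ⟨hpow, k, hk1, haug⟩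
      have hodd := aug_k_odd haug hk1
      rcases eq_or_ne k 1 with rfl | hk1'
      · exact Or.inl (Or.inl ⟨hpow, haug⟩)
      rcases eq_or_ne k 3 with rfl | hk3'
      · exact Or.inl (Or.inr ⟨hpow, haug⟩)
      · exact Or.inr ⟨hpow, k, by omega, haug⟩
    · rintro ((⟨hpow, haug⟩ | ⟨hpow, haug⟩) | ⟨hpow, k, hk, haug⟩)
      · exact ⟨hpow, 1, le_rfl, haug⟩
      · exact ⟨hpow, 3, by omega, haug⟩
      · exact ⟨hpow, k, by omega, haug⟩
  have hAtotcard : (Atot M M').card = A1.card + A3.card + A5.card := by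
    rw [hU, Finset.card_union_of_disjoint (Finset.disjoint_union_left.2 ⟨d15, d35⟩),
      Finset.card_union_of_disjoint d13]
  -- Part 2 equality
  have le1 : M'.card + (Atot M M').card ≤ M.card := flip_bound hME hM'E hMm hM'm hmax
  have le2 : M.card ≤ M'.card + (Atot M M').card := by
    have hUle := U_card_le hMm hM'm
    have hm := Finset.card_sdiff_add_card_inter (mVerts M) (mVerts M')
    have hm' := Finset.card_sdiff_add_card_inter (mVerts M') (mVerts M)
    have hcomm : (mVerts M ∩ mVerts M').card = (mVerts M' ∩ mVerts M).card := by
      rw [Finset.inter_comm]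
    have hMv := mVerts_card hMm
    have hM'v := mVerts_card hM'm
    omega
  -- Part 1 inequality
  have haugB : ∀ P ∈ A3 ∪ A5, ∃ k, 1 ≤ k ∧ IsAugPathComp M M' P k := by
    intro P hP
    rcases Finset.mem_union.1 hP with h | h
    · exact ⟨3, by omega, (hmem3 P h).1⟩
    · obtain ⟨k, hk, h', -⟩ := hmem5 P h
      exact ⟨k, by omega, h'⟩
  have hpdisj : ∀ P ∈ A3 ∪ A5, ∀ Q ∈ A3 ∪ A5, P ≠ Q → Disjoint P Q := by
    intro P hP Q hQ hne
    obtain ⟨k, hk1, haugP⟩ := haugB P hP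
    obtain ⟨l, hl1, haugQ⟩ := haugB Q hQ
    rcases aug_disjoint haugP hk1 haugQ hl1 with h | h
    · exact absurd h hne
    · exact h
  have hbicard : ((A3 ∪ A5).biUnion (fun P => P ∩ M')).card
      = ∑ P ∈ A3 ∪ A5, (P ∩ M').card :=
    Finset.card_biUnion (fun P hP Q hQ hne =>
      (hpdisj P hP Q hQ hne).mono Finset.inter_subset_left Finset.inter_subset_left)
  have hsubM' : (A3 ∪ A5).biUnion (fun P => P ∩ M') ⊆ M' :=
    Finset.biUnion_subset.2 (fun P _ => Finset.inter_subset_right)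
  have hle : ∑ P ∈ A3 ∪ A5, (P ∩ M').card ≤ M'.card := by
    rw [← hbicard]
    exact Finset.card_le_card hsubM'
  have hsplit : ∑ P ∈ A3 ∪ A5, (P ∩ M').card
      = (∑ P ∈ A3, (P ∩ M').card) + ∑ P ∈ A5, (P ∩ M').card :=
    Finset.sum_union d35
  have h3sum : ∑ P ∈ A3, (P ∩ M').card = A3.card := by
    rw [Finset.sum_congr rfl (fun P hP => by
      obtain ⟨w, hw⟩ := aug_to_nat (hmem3 P hP).1
      exact augnat_card_inter_M' hw)]
    simp
  have h5sum : 2 * A5.card ≤ ∑ P ∈ A5, (P ∩ M').card := by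
    have := Finset.card_nsmul_le_sum A5 (fun P => (P ∩ M').card) 2 (fun P hP => by
      obtain ⟨k, hk, haug, -⟩ := hmem5 P hP
      obtain ⟨w, hw⟩ := aug_to_nat haug
      show 2 ≤ (P ∩ M').card
      rw [augnat_card_inter_M' hw]
      omega)
    simpa [mul_comm] using this
  exact ⟨by omega, by omega⟩
end aux
end
end

section
/- Let p ∈ (0,1), δ = p²/4, ε ≥ 0, and let opt > 0 be a real number. If α1, α3, α5 are nonnegative real numbers satisfying α3 + 2·α5 ≤ (1/2 − δ − ε)·opt and α1 + α3 + α5 ≥ (1/2 + δ + ε)·opt, then α1·p + α3·p² ≥ (p²/2)·opt. -/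
open scoped Classical symmDiff
open Real

noncomputable section

theorem lp_lower_bound (p : ℝ) (hp : 0 < p) (hp1 : p < 1)
    (ε : ℝ) (hε : 0 ≤ ε) (opt : ℝ) (hopt : 0 < opt)
    (α1 α3 α5 : ℝ) (h1 : 0 ≤ α1) (h3 : 0 ≤ α3) (h5 : 0 ≤ α5)
    (hc1 : α3 + 2 * α5 ≤ (1 / 2 - p ^ 2 / 4 - ε) * opt)
    (hc2 : (1 / 2 + p ^ 2 / 4 + ε) * opt ≤ α1 + α3 + α5) :
    p ^ 2 / 2 * opt ≤ α1 * p + α3 * p ^ 2 := by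
  rcases le_or_gt p (1/2) with h|h
  · nlinarith [mul_le_mul_of_nonneg_left hc2 hp.le,
      mul_le_mul_of_nonneg_left hc1 (by nlinarith : (0:ℝ) ≤ p - p^2),
      mul_nonneg h5 (by nlinarith : (0:ℝ) ≤ p - 2*p^2),
      mul_nonneg (mul_nonneg (pow_nonneg hp.le 3) hopt.le) (by linarith : (0:ℝ) ≤ 2 - p),
      mul_nonneg (mul_nonneg hε hopt.le) (by nlinarith : (0:ℝ) ≤ 2*p - p^2)]
  · nlinarith [mul_le_mul_of_nonneg_left hc2 hp.le,
      mul_le_mul_of_nonneg_left hc1 (by positivity : (0:ℝ) ≤ p/2),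
      mul_nonneg h3 (by nlinarith : (0:ℝ) ≤ p^2 - p/2),
      mul_nonneg (mul_nonneg hp.le hopt.le) (by nlinarith [sq_nonneg (3*p-2)] : (0:ℝ) ≤ 3*p^2 - 4*p + 2),
      mul_nonneg (mul_nonneg hε hopt.le) hp.le]
end
end
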